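/- arXiv:2406.04044 — 10 statements merged into one kernel-verified Lean document; each statement's English description precedes it below -/
import Mathlib

section
/- Let p be a function analytic on the open unit disk 𝔻 = {z ∈ ℂ : |z| < 1} with p(0) = 1. If |z·p'(z) + p(z) + p(z)² − 2| < 5/2 for all z ∈ 𝔻, then Re p(z) > 0 for all z ∈ 𝔻. -/
open Complex Metric Filter Set Topology

/-- IVT helper: if `p` is continuous on the unit ball, `p 0 = 1`, and `Re (p z) ≤ 0`
for some `z` in the ball, then `Re p` vanishes somewhere on the segment from `0` to `z`. -/
lemma aux_ivt_OT (p : ℂ → ℂ) (hc : ∀ ζ ∈ ball (0:ℂ) 1, ContinuousAt p ζ)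
    (hp0 : p 0 = 1) {z : ℂ} (hz : z ∈ ball (0:ℂ) 1) (hre : (p z).re ≤ 0) :
    ∃ z', ‖z'‖ ≤ ‖z‖ ∧ (p z').re = 0 := by
  have hzlt : ‖z‖ < 1 := mem_ball_zero_iff.1 hz
  have hmem : ∀ t ∈ Icc (0:ℝ) 1, (t • z) ∈ ball (0:ℂ) 1 := by
    intro t ht
    rw [mem_ball_zero_iff]
    have : ‖t • z‖ = |t| * ‖z‖ := norm_smul t z
    rw [this]
    have h1 : |t| ≤ 1 := abs_le.2 ⟨by linarith [ht.1], ht.2⟩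
    calc |t| * ‖z‖ ≤ 1 * ‖z‖ := by
          apply mul_le_mul_of_nonneg_right h1 (norm_nonneg z)
      _ = ‖z‖ := one_mul _
      _ < 1 := hzlt
  have hcont : ContinuousOn (fun t : ℝ => (p (t • z)).re) (Icc 0 1) := by
    intro t ht
    have h1 : ContinuousAt (fun s : ℝ => s • z) t := by fun_prop
    have h2 : ContinuousAt (fun s : ℝ => p (s • z)) t :=
      ContinuousAt.comp (f := fun s : ℝ => s • z) (hc _ (hmem t ht)) h1
    exact (Complex.continuous_re.continuousAt.comp h2).continuousWithinAt
  have h0 : (0:ℝ) ∈ Icc ((fun t : ℝ => (p (t • z)).re) 1) ((fun t : ℝ => (p (t • z)).re) 0) := by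
    constructor
    · simpa using hre
    · simp [hp0]
  obtain ⟨t, ht, hteq⟩ := intermediate_value_Icc' (by norm_num : (0:ℝ) ≤ 1) hcont h0
  refine ⟨t • z, ?_, hteq⟩
  have : ‖t • z‖ = |t| * ‖z‖ := norm_smul t z
  have h1 : |t| ≤ 1 := abs_le.2 ⟨by linarith [ht.1], ht.2⟩
  calc ‖t • z‖ = |t| * ‖z‖ := this
    _ ≤ 1 * ‖z‖ := mul_le_mul_of_nonneg_right h1 (norm_nonneg z)
    _ = ‖z‖ := one_mul _

set_option maxHeartbeats 1600000 in
/-- **Theorem 1 (Obradović–Tuneski).** If `p` is analytic on the unit disk with `p 0 = 1`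
and `|z p'(z) + p(z) + p(z)² − 2| < 5/2` on the disk, then `Re p(z) > 0` on the disk. -/
theorem stmt_0 (p : ℂ → ℂ)
    (hp : AnalyticOnNhd ℂ p (ball (0 : ℂ) 1))
    (hp0 : p 0 = 1)
    (hineq : ∀ z ∈ ball (0 : ℂ) 1,
      ‖z * deriv p z + p z + (p z) ^ 2 - 2‖ < 5 / 2) :
    ∀ z ∈ ball (0 : ℂ) 1, 0 < (p z).re := by
  by_contra hcon
  push_neg at hcon
  obtain ⟨z0, hz0mem, hz0⟩ := hcon
  have hcAt : ∀ ζ ∈ ball (0:ℂ) 1, ContinuousAt p ζ := fun ζ hζ => (hp ζ hζ).continuousAt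
  have hz0lt : ‖z0‖ < 1 := mem_ball_zero_iff.1 hz0mem
  -- the set of zeros of `Re p` within radius `|z0|`
  set A : Set ℂ := closedBall (0:ℂ) (‖z0‖) ∩ (fun z => (p z).re) ⁻¹' {0} with hA
  have hAmem : ∀ z, z ∈ A ↔ ‖z‖ ≤ ‖z0‖ ∧ (p z).re = 0 := by
    intro z
    simp [hA, mem_closedBall_zero_iff]
  have hAne : A.Nonempty := by
    obtain ⟨z', hz', hre⟩ := aux_ivt_OT p hcAt hp0 hz0mem hz0
    exact ⟨z', (hAmem z').2 ⟨hz', hre⟩⟩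
  have hAcomp : IsCompact A := by
    have hcont : ContinuousOn (fun z => (p z).re) (closedBall (0:ℂ) (‖z0‖)) := by
      intro z hz
      have : z ∈ ball (0:ℂ) 1 := by
        rw [mem_ball_zero_iff]
        exact lt_of_le_of_lt (mem_closedBall_zero_iff.1 hz) hz0lt
      exact (Complex.continuous_re.continuousAt.comp (hcAt z this)).continuousWithinAt
    have hclosed : IsClosed A :=
      hcont.preimage_isClosed_of_isClosed isClosed_closedBall isClosed_singleton
    exact (isCompact_closedBall _ _).of_isClosed_subset hclosed inter_subset_left
  obtain ⟨z1, hz1A, hz1min⟩ := hAcomp.exists_isMinOn hAne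
    (continuous_norm.continuousOn : ContinuousOn (fun z : ℂ => ‖z‖) A)
  have hz1A' := (hAmem z1).1 hz1A
  set r := ‖z1‖ with hr
  have hr0 : 0 < r := by
    rcases lt_or_eq_of_le (norm_nonneg z1) with h | h
    · exact h
    · exfalso
      have hz10 : z1 = 0 := by
        have := h.symm
        rwa [norm_eq_zero] at this
      have := hz1A'.2
      rw [hz10, hp0] at this
      norm_num at this
  have hr1 : r < 1 := lt_of_le_of_lt hz1A'.1 hz0lt
  have hz1mem : z1 ∈ ball (0:ℂ) 1 := mem_ball_zero_iff.2 hr1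
  -- positivity of Re p on the ball of radius r
  have hpos : ∀ z : ℂ, ‖z‖ < r → 0 < (p z).re := by
    intro z hz
    by_contra hle
    push_neg at hle
    obtain ⟨z', hz'le, hz're⟩ := aux_ivt_OT p hcAt hp0
      (mem_ball_zero_iff.2 (hz.trans hr1)) hle
    have hz'A : z' ∈ A := (hAmem z').2 ⟨hz'le.trans (le_of_lt (hz.trans_le hz1A'.1)), hz're⟩
    have := hz1min hz'A
    have h1 : ‖z1‖ ≤ ‖z'‖ := this
    have h2 : ‖z'‖ ≤ ‖z‖ := hz'le
    rw [hr] at hz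
    linarith [hz'le, hz]
  have hden : ∀ z : ℂ, ‖z‖ < r → 1 + p z ≠ 0 := by
    intro z hz h
    have h1 := hpos z hz
    have h2 : (1 + p z).re = 0 := by rw [h]; simp
    rw [Complex.add_re, Complex.one_re] at h2
    linarith
  set w : ℂ → ℂ := fun z => (1 - p z) / (1 + p z) with hwdef
  have hw0 : w 0 = 0 := by simp [hwdef, hp0]
  have hwdiff : DifferentiableOn ℂ w (ball (0:ℂ) r) := by
    intro z hz
    have hzr : ‖z‖ < r := mem_ball_zero_iff.1 hz
    have hz1' : z ∈ ball (0:ℂ) 1 := mem_ball_zero_iff.2 (hzr.trans hr1)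
    have hd := (hp z hz1').differentiableAt
    exact (((differentiable_const (1:ℂ)).differentiableAt.sub hd).div
      ((differentiable_const (1:ℂ)).differentiableAt.add hd) (hden z hzr)).differentiableWithinAt
  have habslt : ∀ z : ℂ, 0 < (p z).re → ‖1 - p z‖ < ‖1 + p z‖ := by
    intro z hz
    rw [Complex.norm_def, Complex.norm_def]
    apply Real.sqrt_lt_sqrt (Complex.normSq_nonneg _)
    simp only [Complex.normSq_apply, Complex.sub_re, Complex.sub_im, Complex.add_re,
      Complex.add_im, Complex.one_re, Complex.one_im]
    nlinarith
  have hmaps : MapsTo w (ball (0:ℂ) r) (ball (w 0) 1) := by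
    intro z hz
    rw [hw0, mem_ball_zero_iff]
    have hzr := mem_ball_zero_iff.1 hz
    have hpz := hpos z hzr
    have h1 := habslt z hpz
    have h2 : ‖1 + p z‖ ≠ 0 := by
      simpa using hden z hzr
    rw [hwdef]
    simp only [norm_div]
    rw [div_lt_one (lt_of_le_of_ne (norm_nonneg _) (Ne.symm h2))]
    exact h1
  have hschwarz : ∀ z : ℂ, ‖z‖ < r → ‖w z‖ ≤ ‖z‖ / r := by
    intro z hz
    have := Complex.dist_le_div_mul_dist_of_mapsTo_ball hwdiff (hmaps.mono_right ball_subset_closedBall) (mem_ball_zero_iff.2 hz)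
    rw [hw0] at this
    simp only [Complex.dist_eq, sub_zero] at this
    calc ‖w z‖ ≤ 1 / r * ‖z‖ := this
      _ = ‖z‖ / r := by ring
  -- boundary bound by continuity
  have hbnd : ∀ ζ : ℂ, ‖ζ‖ ≤ r → ContinuousAt w ζ → ‖w ζ‖ ≤ 1 := by
    intro ζ hζ hwc
    have h1 : Tendsto (fun s : ℝ => s • ζ) (𝓝[<] (1:ℝ)) (𝓝 ζ) := by
      have : Tendsto (fun s : ℝ => s • ζ) (𝓝 (1:ℝ)) (𝓝 ((1:ℝ) • ζ)) :=
        ((continuous_id.smul (continuous_const : Continuous fun _ : ℝ => ζ))).tendsto 1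
      rw [one_smul] at this
      exact this.mono_left nhdsWithin_le_nhds
    have habs_c : ContinuousAt (fun z : ℂ => ‖w z‖) ζ :=
      ContinuousAt.comp (f := w) continuous_norm.continuousAt hwc
    have htend : Tendsto (fun s : ℝ => ‖w (s • ζ)‖) (𝓝[<] (1:ℝ))
        (𝓝 (‖w ζ‖)) :=
      Tendsto.comp (g := fun z : ℂ => ‖w z‖) habs_c.tendsto h1
    apply le_of_tendsto htend
    filter_upwards [Ioo_mem_nhdsLT_of_mem (⟨by norm_num, le_refl 1⟩ : (1:ℝ) ∈ Ioc (0:ℝ) 1)]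
      with s hs
    have hs0 : 0 < s := hs.1
    have hs1 : s < 1 := hs.2
    have habs : ‖s • ζ‖ = s * ‖ζ‖ := by
      rw [norm_smul, Real.norm_eq_abs, abs_of_pos hs0]
    have hlt : ‖s • ζ‖ < r := by
      rw [habs]
      calc s * ‖ζ‖ ≤ s * r := by
            apply mul_le_mul_of_nonneg_left hζ hs0.le
        _ < 1 * r := by apply mul_lt_mul_of_pos_right hs1 hr0
        _ = r := one_mul r
    calc ‖w (s • ζ)‖ ≤ ‖s • ζ‖ / r := hschwarz _ hlt
      _ ≤ s * r / r := by
          apply div_le_div_of_nonneg_right ?_ hr0.le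
          · rw [habs]; exact mul_le_mul_of_nonneg_left hζ hs0.le
      _ = s := by field_simp
      _ ≤ 1 := hs1.le
  -- now work at z1
  set t : ℝ := (p z1).im with htdef
  have hre0 : (p z1).re = 0 := hz1A'.2
  have ha : p z1 = (t:ℝ) * I := by
    rw [Complex.ext_iff]
    constructor
    · simp [hre0]
    · simp [htdef]
  have hdenz1 : 1 + p z1 ≠ 0 := by
    intro h
    have := congrArg Complex.re h
    rw [Complex.add_re, Complex.one_re, hre0] at this
    norm_num at this
  have hwz1sq : Complex.normSq (w z1) = 1 := by
    rw [hwdef]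
    simp only
    rw [Complex.normSq_div, ha]
    have h1 : Complex.normSq (1 - (t:ℂ) * I) = 1 + t^2 := by
      simp [Complex.normSq_apply]; ring
    have h2 : Complex.normSq (1 + (t:ℂ) * I) = 1 + t^2 := by
      simp [Complex.normSq_apply]; ring
    rw [h1, h2]
    have : (1:ℝ) + t^2 ≠ 0 := by positivity
    field_simp
  -- derivative data
  have hpa : AnalyticAt ℂ p z1 := hp z1 hz1mem
  have hpd : HasDerivAt p (deriv p z1) z1 := hpa.differentiableAt.hasDerivAt
  set p' := deriv p z1 with hp'def
  set W : ℂ := -2 * p' / (1 + p z1)^2 with hWdef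
  have hW : HasDerivAt w W z1 := by
    have h1 : HasDerivAt (fun z => 1 - p z) (-p') z1 := by
      have := (hasDerivAt_const z1 (1:ℂ)).sub hpd; rw [zero_sub] at this; exact this
    have h2 : HasDerivAt (fun z => 1 + p z) p' z1 := by
      have := (hasDerivAt_const z1 (1:ℂ)).add hpd; rw [zero_add] at this; exact this
    have := h1.div h2 hdenz1
    refine this.congr_deriv ?_
    rw [hWdef]
    field_simp
    ring
  -- eventual continuity of w near z1
  have hevmem : ∀ᶠ ζ in 𝓝 z1, ζ ∈ ball (0:ℂ) 1 := isOpen_ball.eventually_mem hz1mem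
  have hevden : ∀ᶠ ζ in 𝓝 z1, 1 + p ζ ≠ 0 := by
    have hopen : IsOpen {x : ℂ | 1 + x ≠ 0} := by
      have : {x : ℂ | 1 + x ≠ 0} = (fun x : ℂ => 1 + x) ⁻¹' ({0}ᶜ) := rfl
      rw [this]
      exact (isClosed_singleton.isOpen_compl).preimage (continuous_const.add continuous_id)
    exact (hcAt z1 hz1mem).eventually_mem (hopen.mem_nhds hdenz1)
  have hevc : ∀ᶠ ζ in 𝓝 z1, ContinuousAt w ζ := by
    filter_upwards [hevmem, hevden] with ζ h1 h2
    exact (continuousAt_const.sub (hcAt ζ h1)).div (continuousAt_const.add (hcAt ζ h1)) h2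
  -- tangential curve
  set γ : ℝ → ℂ := fun θ => z1 * Complex.exp ((θ:ℂ) * I) with hγdef
  have hγ0 : γ 0 = z1 := by simp [hγdef]
  have habsγ : ∀ θ : ℝ, ‖γ θ‖ = r := by
    intro θ
    rw [hγdef]
    simp [Complex.norm_exp, hr]
  have hγtend : Tendsto γ (𝓝 0) (𝓝 z1) := by
    have : Continuous γ := by
      rw [hγdef]
      exact continuous_const.mul ((Complex.continuous_ofReal.mul continuous_const).cexp)
    have h := this.tendsto 0
    rwa [hγ0] at h
  have hofReal : ∀ x : ℝ, HasDerivAt (fun s : ℝ => (s:ℂ)) 1 x := by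
    intro x
    exact Complex.ofRealCLM.hasDerivAt (x := x)
  have hγd : HasDerivAt γ (z1 * I) 0 := by
    have h1 : HasDerivAt (fun θ : ℝ => (θ:ℂ) * I) I 0 := by
      simpa using (hofReal 0).mul_const I
    have h2 : HasDerivAt (fun θ : ℝ => Complex.exp ((θ:ℂ) * I)) (Complex.exp ((0:ℂ) * I) * I) 0 :=
      h1.cexp
    have h3 := h2.const_mul z1
    rw [hγdef]
    refine h3.congr_deriv ?_
    simp
  set D : ℂ := (z1 * I) * W with hDdef
  have hgd : HasDerivAt (fun θ : ℝ => w (γ θ)) D 0 := by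
    have hW' : HasDerivAt w W (γ 0) := by rw [hγ0]; exact hW
    have h := hW'.scomp (0:ℝ) hγd
    have heq : (z1 * I) • W = D := by rw [hDdef, smul_eq_mul]
    rw [heq] at h
    exact h
  have hgre : HasDerivAt (fun θ : ℝ => (w (γ θ)).re) D.re 0 := by
    have h := Complex.reCLM.hasFDerivAt.comp_hasDerivAt (x := (0:ℝ)) hgd
    exact h
  have hgim : HasDerivAt (fun θ : ℝ => (w (γ θ)).im) D.im 0 := by
    have h := Complex.imCLM.hasFDerivAt.comp_hasDerivAt (x := (0:ℝ)) hgd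
    exact h
  have hFd : HasDerivAt (fun θ : ℝ => Complex.normSq (w (γ θ)))
      (2 * (w z1).re * D.re + 2 * (w z1).im * D.im) 0 := by
    have h1 := (hgre.mul hgre).add (hgim.mul hgim)
    have heq : (fun θ : ℝ => Complex.normSq (w (γ θ)))
        = fun θ : ℝ => (w (γ θ)).re * (w (γ θ)).re + (w (γ θ)).im * (w (γ θ)).im := by
      funext θ; rw [Complex.normSq_apply]
    rw [heq]
    refine h1.congr_deriv ?_
    rw [hγ0]; ring
  have hlocmax : IsLocalMax (fun θ : ℝ => Complex.normSq (w (γ θ))) 0 := by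
    have hev : ∀ᶠ θ in 𝓝 (0:ℝ), Complex.normSq (w (γ θ))
        ≤ Complex.normSq (w (γ 0)) := by
      filter_upwards [hγtend.eventually hevc] with θ hθ
      have hb := hbnd (γ θ) (le_of_eq (habsγ θ)) hθ
      have h1 : Complex.normSq (w (γ θ)) ≤ 1 := by
        rw [Complex.normSq_eq_norm_sq]
        nlinarith [norm_nonneg (w (γ θ))]
      rw [hγ0, hwz1sq]
      exact h1
    exact hev
  have htan : 2 * (w z1).re * D.re + 2 * (w z1).im * D.im = 0 :=
    hFd.deriv.symm.trans hlocmax.deriv_eq_zero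
  -- radial curve
  set δ : ℝ → ℂ := fun s => (s:ℂ) * z1 with hδdef
  have hδd : HasDerivAt δ z1 1 := by
    have h := (hofReal 1).mul_const z1
    simpa [hδdef] using h
  have hδ1 : δ 1 = z1 := by simp [hδdef]
  set E : ℂ := z1 * W with hEdef
  have hgd2 : HasDerivAt (fun s : ℝ => w (δ s)) E 1 := by
    have hW' : HasDerivAt w W (δ 1) := by rw [hδ1]; exact hW
    have h := hW'.scomp (1:ℝ) hδd
    have heq : z1 • W = E := by rw [hEdef, smul_eq_mul]
    rw [heq] at h
    exact h
  have hgre2 : HasDerivAt (fun s : ℝ => (w (δ s)).re) E.re 1 :=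
    Complex.reCLM.hasFDerivAt.comp_hasDerivAt (x := (1:ℝ)) hgd2
  have hgim2 : HasDerivAt (fun s : ℝ => (w (δ s)).im) E.im 1 :=
    Complex.imCLM.hasFDerivAt.comp_hasDerivAt (x := (1:ℝ)) hgd2
  set dH : ℝ := 2 * (w z1).re * E.re + 2 * (w z1).im * E.im - 2 with hdHdef
  have hHd : HasDerivAt (fun s : ℝ => Complex.normSq (w (δ s)) - s^2) dH 1 := by
    have h1 := ((hgre2.mul hgre2).add (hgim2.mul hgim2)).sub (hasDerivAt_pow 2 (1:ℝ))
    have heq : (fun s : ℝ => Complex.normSq (w (δ s)) - s^2)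
        = fun s : ℝ => ((w (δ s)).re * (w (δ s)).re + (w (δ s)).im * (w (δ s)).im) - s^2 := by
      funext s; rw [Complex.normSq_apply]
    rw [heq]
    refine h1.congr_deriv ?_
    rw [hδ1, hdHdef]; push_cast; ring
  have hHneg : ∀ s : ℝ, s ∈ Ioo (0:ℝ) 1 → Complex.normSq (w (δ s)) - s^2 ≤ 0 := by
    intro s hs
    have habs : ‖δ s‖ = s * r := by
      rw [hδdef]
      simp only [norm_mul, Complex.norm_real, Real.norm_eq_abs, abs_of_pos hs.1, hr]
    have hlt : ‖δ s‖ < r := by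
      rw [habs]; nlinarith [hs.1, hs.2, hr0]
    have h1 := hschwarz (δ s) hlt
    rw [habs] at h1
    have h2 : ‖w (δ s)‖ ≤ s := by
      calc ‖w (δ s)‖ ≤ s * r / r := h1
        _ = s := by field_simp
    rw [Complex.normSq_eq_norm_sq]
    nlinarith [norm_nonneg (w (δ s))]
  have hdH0 : 0 ≤ dH := by
    have hw1 : HasDerivWithinAt (fun s : ℝ => Complex.normSq (w (δ s)) - s^2) dH (Iio 1) 1 :=
      hHd.hasDerivWithinAt
    rw [hasDerivWithinAt_iff_tendsto_slope] at hw1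
    have hIio : (Iio (1:ℝ)) \ {1} = Iio 1 := by
      apply diff_singleton_eq_self
      simp
    rw [hIio] at hw1
    apply ge_of_tendsto hw1
    filter_upwards [Ioo_mem_nhdsLT_of_mem (⟨by norm_num, le_refl 1⟩ : (1:ℝ) ∈ Ioc (0:ℝ) 1)]
      with s hs
    rw [slope_def_field]
    have h1 : Complex.normSq (w (δ 1)) - 1^2 = 0 := by
      rw [hδ1, hwz1sq]; norm_num
    rw [h1, sub_zero]
    have hnum := hHneg s hs
    have hdenom : s - 1 < 0 := by linarith [hs.2]
    exact div_nonneg_of_nonpos hnum hdenom.le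
  -- the Jack's lemma quantity u
  set u : ℂ := E * (starRingEnd ℂ) (w z1) with hudef
  have huim : u.im = 0 := by
    have hDE : D = E * I := by rw [hDdef, hEdef]; ring
    have h1 : D.re = -E.im := by rw [hDE]; simp
    have h2 : D.im = E.re := by rw [hDE]; simp
    have h3 : u.im = E.im * (w z1).re - E.re * (w z1).im := by
      rw [hudef, Complex.mul_im]
      simp only [Complex.conj_re, Complex.conj_im]
      ring
    rw [h3]
    rw [h1, h2] at htan
    linarith
  have hure : 1 ≤ u.re := by
    have h3 : u.re = E.re * (w z1).re + E.im * (w z1).im := by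
      rw [hudef, Complex.mul_re]
      simp only [Complex.conj_re, Complex.conj_im]
      ring
    rw [h3]
    rw [hdHdef] at hdH0
    linarith
  -- algebraic identification
  have h1ma : (1:ℂ) - p z1 ≠ 0 := by
    intro h
    have h' := congrArg Complex.re h
    rw [Complex.sub_re, Complex.one_re, hre0] at h'
    norm_num at h'
  have h1ma' : (1:ℂ) + -(p z1) ≠ 0 := by rwa [← sub_eq_add_neg]
  have h1ma2 : (1:ℂ) - (p z1)^2 ≠ 0 := by
    have heq : (1:ℂ) - (p z1)^2 = (1 - p z1) * (1 + p z1) := by ring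
    rw [heq]; exact mul_ne_zero h1ma hdenz1
  have hconja : (starRingEnd ℂ) (p z1) = -(p z1) := by
    apply Complex.ext <;> simp [hre0]
  have hueq : u = -2 * (z1 * p') / (1 - (p z1)^2) := by
    rw [hudef, hEdef, hWdef]
    have hwz1 : w z1 = (1 - p z1)/(1 + p z1) := rfl
    rw [hwz1, map_div₀, map_sub, map_one, map_add, map_one, hconja]
    field_simp
    ring
  have hzp : z1 * p' = -u * (1 - (p z1)^2)/2 := by
    rw [hueq]
    field_simp
  set m : ℝ := u.re with hmdef
  have humc : u = (m:ℂ) := by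
    apply Complex.ext <;> simp [hmdef, huim]
  rw [ha] at hzp
  have hval : z1 * deriv p z1 + p z1 + (p z1)^2 - 2
      = Complex.ofReal (-(m * (1 + t^2))/2 - t^2 - 2) + (t:ℂ) * I := by
    rw [← hp'def, hzp, humc, ha]
    push_cast
    linear_combination ((m:ℂ)/2 + 1) * (t:ℂ)^2 * Complex.I_sq
  have hvre : (z1 * deriv p z1 + p z1 + (p z1)^2 - 2).re = -(m * (1 + t^2))/2 - t^2 - 2 := by
    rw [hval]
    simp [← Complex.ofReal_pow]
  have habs5 : (5:ℝ)/2 ≤ ‖z1 * deriv p z1 + p z1 + (p z1)^2 - 2‖ := by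
    have h1 := Complex.abs_re_le_norm (z1 * deriv p z1 + p z1 + (p z1)^2 - 2)
    rw [hvre] at h1
    have h2 : (5:ℝ)/2 ≤ |(-(m * (1 + t^2))/2 - t^2 - 2)| := by
      rw [abs_of_nonpos (by nlinarith [sq_nonneg t])]
      nlinarith [sq_nonneg t]
    linarith
  have hfin := hineq z1 hz1mem
  linarith
end

section
/- Let f be analytic on the open unit disk 𝔻 with f(0) = 0, f'(0) = 1, and f'(z) ≠ 0 for all z ∈ 𝔻. If |z² f'''(z)/f'(z) + 4 z f''(z)/f'(z)| < 5/2 for all z ∈ 𝔻, then Re(1 + z f''(z)/f'(z)) > 0 for all z ∈ 𝔻, i.e., f is convex. -/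
open Complex Metric Set

set_option maxHeartbeats 1000000 in
theorem key_lemma (p : ℂ → ℂ) (hp : AnalyticOnNhd ℂ p (ball (0 : ℂ) 1))
    (hp0 : p 0 = 1)
    (h : ∀ z ∈ ball (0 : ℂ) 1,
      ‖z * deriv p z + p z ^ 2 + p z - 2‖ < 5 / 2) :
    ∀ z ∈ ball (0 : ℂ) 1, 0 < (p z).re := by
  by_contra hcon
  push_neg at hcon
  obtain ⟨z₁, hz₁, hz₁le⟩ := hcon
  have hz₁lt : ‖z₁‖ < 1 := by
    simpa using mem_ball_zero_iff.mp hz₁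
  set ρ := ‖z₁‖ with hρ
  have hpc : ContinuousOn p (ball (0 : ℂ) 1) := fun z hz => (hp z hz).continuousAt.continuousWithinAt
  have hmem : ∀ z : ℂ, ‖z‖ < 1 → z ∈ ball (0:ℂ) 1 := by
    intro z hz; simpa [mem_ball_zero_iff] using hz
  -- IVT on segments
  have hIVT : ∀ z : ℂ, ‖z‖ < 1 → (p z).re ≤ 0 →
      ∃ t : ℝ, t ∈ Icc (0:ℝ) 1 ∧ (p ((t:ℂ) * z)).re = 0 := by
    intro z hz hle
    have hcont : ContinuousOn (fun t : ℝ => (p ((t:ℂ) * z)).re) (Icc 0 1) := by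
      apply Complex.continuous_re.comp_continuousOn
      apply hpc.comp (Continuous.continuousOn (by continuity))
      intro t ht
      apply hmem
      have : ‖(t:ℂ) * z‖ = |t| * ‖z‖ := by
        simp [norm_mul, Complex.norm_real, Real.norm_eq_abs]
      rw [this]
      rcases ht with ⟨h0, h1⟩
      calc |t| * ‖z‖ ≤ 1 * ‖z‖ := by
            apply mul_le_mul_of_nonneg_right _ (norm_nonneg z)
            rw [_root_.abs_of_nonneg h0]; exact h1
        _ < 1 := by simpa using hz
    have h0' : (p (((1:ℝ):ℂ) * z)).re ≤ 0 := by simpa using hle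
    have h1' : (p (((0:ℝ):ℂ) * z)).re = 1 := by simp [hp0]
    have := intermediate_value_Icc' (by norm_num : (0:ℝ) ≤ 1) hcont
      (a := (0:ℝ)) (b := 1)
    have h0mem : (0:ℝ) ∈ Icc ((p (((1:ℝ):ℂ) * z)).re) ((p (((0:ℝ):ℂ) * z)).re) := by
      constructor
      · exact h0'
      · rw [h1']; norm_num
    obtain ⟨t, ht, hteq⟩ := this h0mem
    exact ⟨t, ht, hteq⟩
  -- the set of zeros of Re p in the closed ball of radius ρ
  set K : Set ℂ := closedBall (0:ℂ) ρ ∩ (fun z => (p z).re) ⁻¹' {0} with hK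
  have hclosedK : IsClosed K := by
    apply ContinuousOn.preimage_isClosed_of_isClosed
    · exact (Complex.continuous_re.comp_continuousOn hpc).mono
        (closedBall_subset_ball hz₁lt)
    · exact isClosed_closedBall
    · exact isClosed_singleton
  have hKcompact : IsCompact K :=
    (isCompact_closedBall (0:ℂ) ρ).of_isClosed_subset hclosedK inter_subset_left
  have hKne : K.Nonempty := by
    obtain ⟨t, ht, hteq⟩ := hIVT z₁ hz₁lt hz₁le
    refine ⟨(t:ℂ) * z₁, ?_, hteq⟩
    simp only [mem_closedBall, dist_zero_right, map_mul,
      norm_mul, Complex.norm_real, Real.norm_eq_abs]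
    calc |t| * ‖z₁‖ ≤ 1 * ‖z₁‖ := by
          apply mul_le_mul_of_nonneg_right _ (norm_nonneg z₁)
          rw [_root_.abs_of_nonneg ht.1]; exact ht.2
      _ = ρ := by simp [hρ]
  obtain ⟨z₀, hz₀K, hz₀min'⟩ := hKcompact.exists_isMinOn hKne
    (continuous_norm.continuousOn)
  have hz₀min : ∀ z ∈ K, ‖z₀‖ ≤ ‖z‖ := fun z hz => hz₀min' hz
  set r := ‖z₀‖ with hr
  have hre0 : (p z₀).re = 0 := hz₀K.2
  have hrρ : r ≤ ρ := by
    have := hz₀K.1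
    simpa [mem_closedBall, dist_zero_right] using this
  have hrlt : r < 1 := lt_of_le_of_lt hrρ hz₁lt
  have hrpos : 0 < r := by
    rcases eq_or_lt_of_le (norm_nonneg z₀) with h0 | h0
    · exfalso
      have hz0 : z₀ = 0 := norm_eq_zero.mp h0.symm
      rw [hz0, hp0] at hre0
      norm_num at hre0
    · exact h0
  -- Re p ≥ 0 on closed ball r, > 0 on open ball r
  have hnonneg : ∀ z : ℂ, ‖z‖ ≤ r → 0 ≤ (p z).re := by
    intro z hz
    by_contra hneg
    push_neg at hneg
    obtain ⟨t, ht, hteq⟩ := hIVT z (lt_of_le_of_lt hz hrlt) hneg.le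
    have habs : ‖(t:ℂ) * z‖ = t * ‖z‖ := by
      simp [norm_mul, Complex.norm_real, Real.norm_eq_abs, _root_.abs_of_nonneg ht.1]
    have hmemK : ((t:ℂ) * z) ∈ K := by
      refine ⟨?_, hteq⟩
      simp only [mem_closedBall, dist_zero_right, habs]
      calc t * ‖z‖ ≤ 1 * ‖z‖ :=
            mul_le_mul_of_nonneg_right ht.2 (norm_nonneg z)
        _ ≤ ρ := by rw [one_mul]; exact le_trans hz hrρ
    have := hz₀min _ hmemK
    rw [habs] at this
    -- r ≤ t * |z| ≤ |z| ≤ r forces t * |z| = |z| = r, t = 1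
    have h1 : t * ‖z‖ ≤ ‖z‖ := by
      nlinarith [norm_nonneg z, ht.2]
    have heq : t * ‖z‖ = ‖z‖ := le_antisymm h1 (by nlinarith)
    have hz_eq : ‖z‖ = r := le_antisymm hz (by nlinarith)
    have ht1 : t = 1 := by
      have hne : ‖z‖ ≠ 0 := by rw [hz_eq]; exact ne_of_gt hrpos
      have := mul_right_cancel₀ hne (heq.trans (one_mul (‖z‖)).symm)
      exact this
    rw [ht1] at hteq
    simp at hteq
    rw [hteq] at hneg
    norm_num at hneg
  have hpos : ∀ z : ℂ, ‖z‖ < r → 0 < (p z).re := by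
    intro z hz
    rcases lt_or_eq_of_le (hnonneg z hz.le) with h0 | h0
    · exact h0
    · exfalso
      have hmemK : z ∈ K := by
        refine ⟨?_, h0.symm⟩
        simp only [mem_closedBall, dist_zero_right]
        exact le_trans hz.le hrρ
      have := hz₀min _ hmemK
      exact absurd this (not_le.mpr hz)
  have hz₀b : z₀ ∈ ball (0:ℂ) 1 := hmem z₀ hrlt
  -- the auxiliary function w
  have h1p : ∀ z : ℂ, ‖z‖ ≤ r → 1 + p z ≠ 0 := by
    intro z hz hzero
    have h1 : (1 + p z).re = 0 := by rw [hzero]; simp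
    have h2 : 0 ≤ (p z).re := hnonneg z hz
    simp [Complex.add_re] at h1
    linarith
  set w : ℂ → ℂ := fun z => (1 - p z) / (1 + p z) with hw
  have hwa : ∀ z : ℂ, ‖z‖ ≤ r → AnalyticAt ℂ w z := by
    intro z hz
    have hpz : AnalyticAt ℂ p z := hp z (hmem z (lt_of_le_of_lt hz hrlt))
    exact (analyticAt_const.sub hpz).div (analyticAt_const.add hpz) (h1p z hz)
  have hwle : ∀ z : ℂ, ‖z‖ ≤ r → ‖w z‖ ≤ 1 := by
    intro z hz
    have hre := hnonneg z hz
    have hsq : (‖1 - p z‖)^2 ≤ (‖1 + p z‖)^2 := by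
      rw [Complex.sq_norm, Complex.sq_norm, Complex.normSq_apply, Complex.normSq_apply]
      simp only [Complex.add_re, Complex.add_im, Complex.sub_re, Complex.sub_im,
        Complex.one_re, Complex.one_im]
      nlinarith
    have habs : ‖1 - p z‖ ≤ ‖1 + p z‖ := by
      nlinarith [norm_nonneg (1 - p z), norm_nonneg (1 + p z)]
    rw [hw]
    simp only [norm_div]
    have hpos : 0 < ‖1 + p z‖ :=
      norm_pos_iff.mpr (h1p z hz)
    rw [div_le_one hpos]
    exact habs
  have hw0 : w 0 = 0 := by simp [hw, hp0]
  -- Schwarz lemma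
  have hschwarz : ∀ t : ℝ, 0 ≤ t → t < 1 → ‖w ((t:ℂ) * z₀)‖ ≤ t := by
    intro t ht0 ht1
    have habs_tz : ‖(t:ℂ) * z₀‖ = t * r := by
      simp [norm_mul, Complex.norm_real, Real.norm_eq_abs, _root_.abs_of_nonneg ht0, hr]
    have hball : ∀ ε : ℝ, 0 < ε → ‖w ((t:ℂ) * z₀)‖ ≤ (1 + ε) / r * (t * r) := by
      intro ε hε
      have hdiff : DifferentiableOn ℂ w (ball (0:ℂ) r) := by
        intro z hz
        have : ‖z‖ < r := by
          simpa [mem_ball_zero_iff] using hz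
        exact ((hwa z this.le).differentiableAt).differentiableWithinAt
      have hmaps : Set.MapsTo w (ball (0:ℂ) r) (ball (w 0) (1 + ε)) := by
        intro z hz
        have h1 : ‖z‖ < r := by
          simpa [mem_ball_zero_iff] using hz
        have := hwle z h1.le
        rw [hw0]
        rw [mem_ball_zero_iff]
        linarith
      have hmem_tz : (t:ℂ) * z₀ ∈ ball (0:ℂ) r := by
        rw [mem_ball_zero_iff, habs_tz]
        nlinarith
      have := Complex.dist_le_div_mul_dist_of_mapsTo_ball hdiff (hmaps.mono_right ball_subset_closedBall) hmem_tz
      rw [hw0] at this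
      rw [dist_zero_right, dist_zero_right,
        habs_tz] at this
      exact this
    -- take ε → 0
    by_contra hgt
    push_neg at hgt
    rcases eq_or_lt_of_le ht0 with rfl | htpos
    · simp [hw0] at hgt
    · set a := ‖w ((t:ℂ) * z₀)‖
      have hε := hball ((a - t)/(2*t)) (div_pos (by linarith) (by linarith))
      have : (1 + (a - t)/(2*t)) / r * (t * r) = t + (a - t)/2 := by
        field_simp
      rw [this] at hε
      linarith
  -- derivative estimate at the boundary point
  have hw' : HasDerivAt w (deriv w z₀) z₀ := (hwa z₀ le_rfl).differentiableAt.hasDerivAt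
  set D : ℂ := deriv w z₀ * z₀ with hD
  have hW : HasDerivAt (fun c : ℂ => w (c * z₀)) D 1 := by
    have h1 : HasDerivAt w (deriv w z₀) ((1:ℂ) * z₀) := by rwa [one_mul]
    have h2 : HasDerivAt (fun c : ℂ => c * z₀) z₀ 1 := by
      simpa using (hasDerivAt_id (1:ℂ)).mul_const z₀
    have := HasDerivAt.comp 1 h1 h2
    exact this
  have hv : HasDerivAt (fun t : ℝ => w (((t:ℝ):ℂ) * z₀)) D 1 := by
    have : HasDerivAt (fun c : ℂ => w (c * z₀)) D (((1:ℝ):ℂ)) := by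
      simpa using hW
    exact this.comp_ofReal
  set v : ℝ → ℂ := fun t => w (((t:ℝ):ℂ) * z₀) with hvdef
  have hre : HasDerivAt (fun t => (v t).re) D.re 1 :=
    Complex.reCLM.hasFDerivAt.comp_hasDerivAt 1 hv
  have him : HasDerivAt (fun t => (v t).im) D.im 1 :=
    Complex.imCLM.hasFDerivAt.comp_hasDerivAt 1 hv
  set u : ℝ → ℝ := fun t => (v t).re^2 + (v t).im^2 with hu
  have hv1 : v 1 = w z₀ := by simp [hvdef]
  have hnormSqeq : Complex.normSq (1 - p z₀) = Complex.normSq (1 + p z₀) := by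
    rw [Complex.normSq_apply, Complex.normSq_apply]
    simp only [Complex.add_re, Complex.add_im, Complex.sub_re, Complex.sub_im,
      Complex.one_re, Complex.one_im]
    rw [hre0]; ring
  have hwz₀sq : (w z₀).re^2 + (w z₀).im^2 = 1 := by
    have h1 : Complex.normSq (w z₀) = 1 := by
      rw [hw]
      simp only [Complex.normSq_div]
      rw [hnormSqeq]
      exact div_self (fun hc => (h1p z₀ le_rfl) (Complex.normSq_eq_zero.mp hc))
    rw [Complex.normSq_apply] at h1
    linarith [h1]
  have hu1 : u 1 = 1 := by rw [hu]; simp only [hv1]; exact hwz₀sq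
  have hub : ∀ t : ℝ, 0 ≤ t → t < 1 → u t ≤ t^2 := by
    intro t ht0 ht1
    have := hschwarz t ht0 ht1
    have h2 : Complex.normSq (v t) ≤ t^2 := by
      rw [← Complex.sq_norm]
      nlinarith [norm_nonneg (w (((t:ℝ):ℂ) * z₀))]
    rw [Complex.normSq_apply] at h2
    simp only [hu]
    nlinarith [h2]
  set DD : ℝ := 2*(v 1).re*D.re + 2*(v 1).im*D.im with hDD
  have hu' : HasDerivAt u DD 1 := by
    have h1 := (hre.mul hre).add (him.mul him)
    have h2 : (fun t => (v t).re*(v t).re + (v t).im*(v t).im) = u := by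
      funext t; rw [hu]; ring
    rw [show (((fun t => (v t).re) * fun t => (v t).re) + (fun t => (v t).im) * fun t => (v t).im) = fun t => (v t).re*(v t).re + (v t).im*(v t).im from rfl, h2] at h1
    have h3 : DD = D.re * (v 1).re + (v 1).re * D.re + (D.im * (v 1).im + (v 1).im * D.im) := by
      rw [hDD]; ring
    rw [h3]
    exact h1
  -- slope argument : 2 ≤ DD
  have h2DD : 2 ≤ DD := by
    set φ : ℝ → ℝ := fun t => t^2 - u t with hφdef
    have hφ : HasDerivAt φ (2 - DD) 1 := by
      have hpow : HasDerivAt (fun t : ℝ => t^2) 2 1 := by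
        simpa using hasDerivAt_pow 2 (1:ℝ)
      exact hpow.sub hu'
    have htend : Filter.Tendsto (slope φ 1) (nhdsWithin 1 (Iio 1)) (nhds (2 - DD)) := by
      have := hasDerivAt_iff_tendsto_slope.mp hφ
      exact this.mono_left (nhdsWithin_mono 1 (fun x hx => ne_of_lt hx))
    have hev : ∀ᶠ t in nhdsWithin (1:ℝ) (Iio 1), slope φ 1 t ≤ 0 := by
      filter_upwards [Ioo_mem_nhdsLT_of_mem (⟨by norm_num, le_refl 1⟩ : (1:ℝ) ∈ Ioc (0:ℝ) 1)]
        with t ht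
      have hφt : 0 ≤ φ t := by
        have := hub t ht.1.le ht.2
        simp only [hφdef]; linarith
      have hφ1 : φ 1 = 0 := by simp only [hφdef]; rw [hu1]; norm_num
      rw [slope_def_field]
      rw [hφ1]
      apply div_nonpos_of_nonneg_of_nonpos
      · simpa using hφt
      · linarith [ht.2]
    have := le_of_tendsto htend hev
    linarith
  -- final computation
  have hconj : 1 ≤ ((starRingEnd ℂ) (w z₀) * D).re := by
    have : ((starRingEnd ℂ) (w z₀) * D).re = (w z₀).re * D.re + (w z₀).im * D.im := by
      simp [Complex.mul_re]
    rw [this]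
    rw [hDD, hv1] at h2DD
    linarith
  set x : ℝ := (p z₀).im with hx
  have hpz₀ : p z₀ = (x:ℂ) * Complex.I := by
    apply Complex.ext
    · simp [hre0]
    · simp [hx]
  set p' : ℂ := deriv p z₀ with hp'def
  have hp' : HasDerivAt p p' z₀ := (hp z₀ hz₀b).differentiableAt.hasDerivAt
  have hderivw : deriv w z₀ = -2 * p' / (1 + p z₀)^2 := by
    have hdiv : HasDerivAt w
        (((0 - p') * (1 + p z₀) - (1 - p z₀) * (0 + p')) / (1 + p z₀)^2) z₀ := by
      exact ((hasDerivAt_const z₀ (1:ℂ)).sub hp').div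
        ((hasDerivAt_const z₀ (1:ℂ)).add hp') (h1p z₀ le_rfl)
    rw [hdiv.deriv]
    congr 1
    ring
  have hden1 : (1:ℂ) + (x:ℂ) * Complex.I ≠ 0 := by rw [← hpz₀]; exact h1p z₀ le_rfl
  have hden2 : (1:ℂ) - (x:ℂ) * Complex.I ≠ 0 := by
    intro hc
    have := congrArg Complex.re hc
    simp at this
  have hden3 : (((1:ℝ) + x^2 : ℝ):ℂ) ≠ 0 := by
    rw [Complex.ofReal_ne_zero]
    positivity
  have hident : (starRingEnd ℂ) (w z₀) * D = (-2 * (z₀ * p')) / (((1:ℝ) + x^2 : ℝ):ℂ) := by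
    have hwz : w z₀ = (1 - (x:ℂ)*Complex.I)/(1 + (x:ℂ)*Complex.I) := by
      rw [hw]; simp only [hpz₀]
    rw [hD, hderivw, hwz, hpz₀]
    rw [map_div₀, map_sub, map_add, map_one, map_mul, Complex.conj_ofReal, Complex.conj_I]
    have h2' : ((1:ℂ) + (x:ℂ)*(-Complex.I)) ≠ 0 := by
      rw [mul_neg, ← sub_eq_add_neg]; exact hden2
    rw [eq_div_iff hden3]
    have hu2 : (((1:ℂ) + (x:ℂ)*Complex.I)^2)⁻¹ * ((1:ℂ) + (x:ℂ)*Complex.I)^2 = 1 :=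
      inv_mul_cancel₀ (pow_ne_zero 2 hden1)
    have hv2 : ((1:ℂ) + (x:ℂ)*(-Complex.I))⁻¹ * ((1:ℂ) + (x:ℂ)*(-Complex.I)) = 1 :=
      inv_mul_cancel₀ h2'
    push_cast
    linear_combination (-2*p'*z₀) * (((1+(x:ℂ)*(-Complex.I))*((1+(x:ℂ)*(-Complex.I)))⁻¹) * hu2 + hv2
      + ((x:ℂ)^2*(1+(x:ℂ)*Complex.I)*(((1+(x:ℂ)*Complex.I)^2)⁻¹)*((1+(x:ℂ)*(-Complex.I)))⁻¹) * Complex.I_sq)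
  have hre_zp' : (z₀ * p').re ≤ -(1 + x^2)/2 := by
    rw [hident] at hconj
    rw [Complex.div_ofReal_re] at hconj
    have hnum : ((-2 : ℂ) * (z₀ * p')).re = -2 * (z₀ * p').re := by
      simp [Complex.mul_re]
    rw [hnum] at hconj
    have hxpos : (0:ℝ) < 1 + x^2 := by positivity
    rw [le_div_iff₀ hxpos] at hconj
    linarith
  -- contradiction with the hypothesis at z₀
  have hE := h z₀ hz₀b
  have hEre : (z₀ * deriv p z₀ + p z₀ ^ 2 + p z₀ - 2).re = (z₀ * p').re - x^2 - 2 := by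
    rw [hpz₀, ← hp'def]
    simp only [Complex.add_re, Complex.sub_re, Complex.mul_re, Complex.mul_im,
      Complex.I_re, Complex.I_im, Complex.ofReal_re, Complex.ofReal_im, pow_two,
      Complex.re_ofNat]
    ring
  have habs_ge : 5/2 ≤ ‖z₀ * deriv p z₀ + p z₀ ^ 2 + p z₀ - 2‖ := by
    have h1 : (z₀ * deriv p z₀ + p z₀ ^ 2 + p z₀ - 2).re ≤ -5/2 := by
      rw [hEre]; nlinarith
    calc (5:ℝ)/2 ≤ -((z₀ * deriv p z₀ + p z₀ ^ 2 + p z₀ - 2).re) := by linarith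
      _ ≤ |(z₀ * deriv p z₀ + p z₀ ^ 2 + p z₀ - 2).re| := neg_le_abs _
      _ ≤ ‖z₀ * deriv p z₀ + p z₀ ^ 2 + p z₀ - 2‖ := Complex.abs_re_le_norm _
  linarith
/-- **Corollary 1 (ii).** If `f ∈ 𝒜`, `f' ≠ 0` on the disk, and
`|z² f'''/f' + 4 z f''/f'| < 5/2` on the disk, then `f` is convex. -/
theorem stmt_2 (f : ℂ → ℂ)
    (hf : AnalyticOnNhd ℂ f (ball (0 : ℂ) 1))
    (hf0 : f 0 = 0) (hf'0 : deriv f 0 = 1)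
    (hf'ne : ∀ z ∈ ball (0 : ℂ) 1, deriv f z ≠ 0)
    (hineq : ∀ z ∈ ball (0 : ℂ) 1,
      ‖z ^ 2 * deriv (deriv (deriv f)) z / deriv f z
        + 4 * (z * deriv (deriv f) z / deriv f z)‖ < 5 / 2) :
    ∀ z ∈ ball (0 : ℂ) 1, 0 < (1 + z * deriv (deriv f) z / deriv f z).re := by
  set p : ℂ → ℂ := fun z => 1 + z * deriv (deriv f) z / deriv f z with hpdef
  have hf' : AnalyticOnNhd ℂ (deriv f) (ball (0:ℂ) 1) := hf.deriv
  have hf'' : AnalyticOnNhd ℂ (deriv (deriv f)) (ball (0:ℂ) 1) := hf'.deriv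
  have hf''' : AnalyticOnNhd ℂ (deriv (deriv (deriv f))) (ball (0:ℂ) 1) := hf''.deriv
  have hopen : IsOpen (ball (0:ℂ) 1) := isOpen_ball
  have hp : AnalyticOnNhd ℂ p (ball (0:ℂ) 1) := by
    intro z hz
    exact analyticAt_const.add
      (((analyticAt_id).mul (hf'' z hz)).div (hf' z hz) (hf'ne z hz))
  have hp0 : p 0 = 1 := by simp [hpdef]
  have hkey : ∀ z ∈ ball (0:ℂ) 1,
      ‖z * deriv p z + p z ^ 2 + p z - 2‖ < 5/2 := by
    intro z hz
    have ha : deriv f z ≠ 0 := hf'ne z hz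
    have h1 : HasDerivAt (deriv f) (deriv (deriv f) z) z :=
      ((hf' z hz).differentiableAt).hasDerivAt
    have h2 : HasDerivAt (deriv (deriv f)) (deriv (deriv (deriv f)) z) z :=
      ((hf'' z hz).differentiableAt).hasDerivAt
    have hmul : HasDerivAt (fun w => w * deriv (deriv f) w)
        (1 * deriv (deriv f) z + z * deriv (deriv (deriv f)) z) z :=
      (hasDerivAt_id z).mul h2
    have hdiv : HasDerivAt (fun w => w * deriv (deriv f) w / deriv f w)
        (((1 * deriv (deriv f) z + z * deriv (deriv (deriv f)) z) * deriv f z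
          - (z * deriv (deriv f) z) * deriv (deriv f) z) / (deriv f z)^2) z :=
      hmul.div h1 ha
    have hP : HasDerivAt p
        (((1 * deriv (deriv f) z + z * deriv (deriv (deriv f)) z) * deriv f z
          - (z * deriv (deriv f) z) * deriv (deriv f) z) / (deriv f z)^2) z :=
      (hasDerivAt_const z (1:ℂ)).add hdiv |>.congr_deriv (by ring)
    have hDp := hP.deriv
    have hident : z * deriv p z + p z ^ 2 + p z - 2
        = z ^ 2 * deriv (deriv (deriv f)) z / deriv f z
          + 4 * (z * deriv (deriv f) z / deriv f z) := by
      rw [hDp, hpdef]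
      field_simp
      ring
    rw [hident]
    exact hineq z hz
  intro z hz
  exact key_lemma p hp hp0 hkey z hz
end

section
/- Let f be analytic on the open unit disk 𝔻 with f(0) = 0 and f'(0) = 1. If |z f''(z) + f'(z) + (f'(z))² − 2| < 5/2 for all z ∈ 𝔻, then Re f'(z) > 0 for all z ∈ 𝔻. -/
open Complex Metric

lemma mm_lemma (p : ℂ → ℂ) (hp : AnalyticOnNhd ℂ p (ball (0 : ℂ) 1))
    (hp0 : p 0 = 1) (z₀ : ℂ) (hz₀ : z₀ ∈ ball (0 : ℂ) 1)
    (hpos : ∀ z : ℂ, ‖z‖ < ‖z₀‖ → 0 < (p z).re)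
    (hre0 : (p z₀).re = 0) :
    (z₀ * deriv p z₀).re ≤ -(1 + (p z₀).im ^ 2) / 2 := by
  set t : ℝ := (p z₀).im with ht
  have hz₀1 : ‖z₀‖ < 1 := by simpa [mem_ball, dist_zero_right] using hz₀
  have hpz₀ : p z₀ = (t : ℂ) * I := by
    apply Complex.ext <;> simp [hre0, ht]
  set a : ℂ := (t : ℂ) * I with ha
  set q : ℂ → ℂ := fun z => p (z₀ * z) with hq
  set w : ℂ → ℂ := fun z => (1 - q z) / (1 + q z) with hw
  -- membership facts
  have hmem : ∀ z : ℂ, ‖z‖ ≤ 1 → z₀ * z ∈ ball (0 : ℂ) 1 := by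
    intro z hz
    simp only [mem_ball, dist_zero_right, norm_mul]
    calc ‖z₀‖ * ‖z‖ ≤ ‖z₀‖ * 1 := by
          exact mul_le_mul_of_nonneg_left hz (norm_nonneg _)
      _ < 1 := by simpa using hz₀1
  have hqpos : ∀ z : ℂ, ‖z‖ < 1 → 0 < (q z).re := by
    intro z hz
    apply hpos
    simp only [norm_mul]
    calc ‖z₀‖ * ‖z‖ < ‖z₀‖ * 1 := by
          apply mul_lt_mul_of_pos_left hz
          have : (0:ℝ) < (p 0).re := by simp [hp0]
          rcases eq_or_ne z₀ 0 with h | h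
          · exfalso; rw [h, hp0] at hre0; simp at hre0
          · simpa using norm_pos_iff.mpr h
      _ = ‖z₀‖ := mul_one _
  have hden : ∀ z : ℂ, ‖z‖ < 1 → 1 + q z ≠ 0 := by
    intro z hz h
    have : (1 + q z).re = 0 := by rw [h]; simp
    simp only [Complex.add_re, Complex.one_re] at this
    have := hqpos z hz
    linarith
  -- q is differentiable where needed
  have hqdiff : ∀ z : ℂ, ‖z‖ ≤ 1 → DifferentiableAt ℂ q z := by
    intro z hz
    exact ((hp _ (hmem z hz)).differentiableAt).comp z
      ((differentiableAt_const z₀).mul differentiableAt_id)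
  have hwdiff : DifferentiableOn ℂ w (ball (0 : ℂ) 1) := by
    intro z hz
    have hz' : ‖z‖ < 1 := by simpa [mem_ball, dist_zero_right] using hz
    exact (((differentiableAt_const 1).sub (hqdiff z hz'.le)).div
      ((differentiableAt_const 1).add (hqdiff z hz'.le)) (hden z hz')).differentiableWithinAt
  have hw0 : w 0 = 0 := by
    simp [hw, hq, hp0]
  have hmaps : Set.MapsTo w (ball (0 : ℂ) 1) (ball (0 : ℂ) 1) := by
    intro z hz
    have hz' : ‖z‖ < 1 := by simpa [mem_ball, dist_zero_right] using hz
    have h1 : Complex.normSq (1 - q z) < Complex.normSq (1 + q z) := by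
      have := hqpos z hz'
      simp only [Complex.normSq_apply, Complex.sub_re, Complex.sub_im, Complex.add_re,
        Complex.add_im, Complex.one_re, Complex.one_im]
      nlinarith
    have habs : ‖1 - q z‖ < ‖1 + q z‖ := by
      rw [Complex.norm_def, Complex.norm_def]
      exact Real.sqrt_lt_sqrt (Complex.normSq_nonneg _) h1
    simp only [mem_ball, dist_zero_right, hw, norm_div]
    rw [div_lt_one ((norm_nonneg _).trans_lt habs)]
    exact habs
  -- Schwarz
  have hschwarz : ∀ s : ℝ, s ∈ Set.Ioo (0:ℝ) 1 → ‖w (s : ℂ)‖ ≤ s := by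
    intro s hs
    have := Complex.norm_le_norm_of_mapsTo_ball hwdiff (hmaps.mono_right ball_subset_closedBall) hw0
      (z := (s:ℂ)) (by simpa [abs_of_pos hs.1] using hs.2)
    simpa [abs_of_pos hs.1] using this
  -- derivative setup
  set d : ℂ := deriv p z₀ with hd
  have hpd : HasDerivAt p d z₀ := (hp z₀ hz₀).differentiableAt.hasDerivAt
  have hmul : HasDerivAt (fun z : ℂ => z₀ * z) z₀ 1 := by
    simpa using (hasDerivAt_id (1:ℂ)).const_mul z₀
  have hq1 : HasDerivAt q (d * z₀) 1 := by
    have hpd' : HasDerivAt p d (z₀ * 1) := by rwa [mul_one]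
    exact hpd'.comp 1 hmul
  have hq1val : q 1 = a := by simp only [hq, mul_one]; exact hpz₀
  have hnum : HasDerivAt (fun z => 1 - q z) (-(d * z₀)) 1 := hq1.const_sub 1
  have hden1 : HasDerivAt (fun z => 1 + q z) (d * z₀) 1 := hq1.const_add 1
  have hane : 1 + a ≠ 0 := by
    intro h
    have h2 : (1 + a).re = 0 := by rw [h]; simp
    simp [ha] at h2
  have hane' : 1 - a ≠ 0 := by
    intro h
    have h2 : (1 - a).re = 0 := by rw [h]; simp
    simp [ha] at h2
  set w' : ℂ := (-(d * z₀) * (1 + a) - (1 - a) * (d * z₀)) / (1 + a) ^ 2 with hw'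
  have hw1 : HasDerivAt w w' 1 := by
    have h := hnum.div hden1 (by rw [hq1val]; exact hane)
    rw [hq1val] at h
    exact h
  have hw1' : HasDerivAt w w' ((1:ℝ) : ℂ) := by rwa [Complex.ofReal_one]
  have hW : HasDerivAt (fun s : ℝ => w (s : ℂ)) w' 1 := hw1'.comp_ofReal
  have hre : HasDerivAt (fun s : ℝ => (w (s:ℂ)).re) w'.re 1 := by
    have h := Complex.reCLM.hasFDerivAt.comp_hasDerivAt 1 hW
    simp at h
    exact h
  have him : HasDerivAt (fun s : ℝ => (w (s:ℂ)).im) w'.im 1 := by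
    have h := Complex.imCLM.hasFDerivAt.comp_hasDerivAt 1 hW
    simp at h
    exact h
  set u : ℝ → ℝ := fun s => Complex.normSq (w (s:ℂ)) with hu_def
  set D : ℝ := 2 * ((w 1).re * w'.re + (w 1).im * w'.im) with hD
  have hu : HasDerivAt u D 1 := by
    have h := (hre.mul hre).add (him.mul him)
    have heq : u = fun s : ℝ => (w (s:ℂ)).re * (w (s:ℂ)).re + (w (s:ℂ)).im * (w (s:ℂ)).im := by
      funext s; simp [hu_def, Complex.normSq_apply]
    rw [heq]
    exact h.congr_deriv (by rw [hD, Complex.ofReal_one]; ring)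
  have ht2 : (0:ℝ) < 1 + t^2 := by positivity
  have hu1 : u 1 = 1 := by
    have hwv : w ((1:ℝ):ℂ) = (1 - a) / (1 + a) := by
      rw [Complex.ofReal_one]
      show (1 - q 1) / (1 + q 1) = _
      rw [hq1val]
    have hn1 : Complex.normSq (1 - a) = 1 + t^2 := by
      simp [ha, Complex.normSq_apply]; ring
    have hn2 : Complex.normSq (1 + a) = 1 + t^2 := by
      simp [ha, Complex.normSq_apply]; ring
    show Complex.normSq (w ((1:ℝ):ℂ)) = 1
    rw [hwv, map_div₀, hn1, hn2, div_self (ne_of_gt ht2)]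
  have hkey : (2:ℝ) ≤ D := by
    have hslope : Filter.Tendsto (slope u 1) (nhdsWithin 1 (Set.Iio 1)) (nhds D) :=
      (hasDerivAt_iff_tendsto_slope.mp hu).mono_left
        (nhdsWithin_mono _ fun x hx => ne_of_lt hx)
    have hlin : Filter.Tendsto (fun s : ℝ => 1 + s) (nhdsWithin 1 (Set.Iio 1)) (nhds 2) := by
      have h2 : Filter.Tendsto (fun s : ℝ => 1 + s) (nhds 1) (nhds (1 + 1)) :=
        tendsto_const_nhds.add Filter.tendsto_id
      norm_num at h2
      exact h2.mono_left nhdsWithin_le_nhds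
    refine le_of_tendsto_of_tendsto hlin hslope ?_
    filter_upwards [Ioo_mem_nhdsLT_of_mem (by norm_num : (1:ℝ) ∈ Set.Ioc 0 1)] with s hs
    have hus : u s ≤ s^2 := by
      have h1 := hschwarz s hs
      show Complex.normSq (w (s:ℂ)) ≤ s^2
      rw [← Complex.sq_norm]
      nlinarith [norm_nonneg (w (s:ℂ))]
    have hs1 : s - 1 < 0 := by linarith [hs.2]
    show (1:ℝ) + s ≤ slope u 1 s
    rw [slope_def_field, hu1, le_div_iff_of_neg hs1]
    nlinarith
  -- identify D with -4 (d z₀).re / (1 + t²)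
  have h1ne : (1:ℂ) + (t:ℂ)*I ≠ 0 := by rw [← ha]; exact hane
  have h2ne : (1:ℂ) - (t:ℂ)*I ≠ 0 := by rw [← ha]; exact hane'
  have h3ne : (1:ℂ) + (t:ℂ)^2 ≠ 0 := by
    have hc : ((1 + t^2 : ℝ) : ℂ) = 1 + (t:ℂ)^2 := by push_cast; ring
    rw [← hc]
    exact Complex.ofReal_ne_zero.mpr (ne_of_gt ht2)
  have key1 : (1 - a) * (1 + a) = 1 + (t:ℂ)^2 := by
    rw [ha]
    linear_combination (-(t:ℂ)^2) * Complex.I_sq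
  have hconj : (starRingEnd ℂ) (w 1) * w' = -2 * (d * z₀) / (1 + (t:ℂ)^2) := by
    have hw1v : w 1 = (1 - a)/(1 + a) := by
      show (1 - q 1) / (1 + q 1) = _
      rw [hq1val]
    have hconjw1 : (starRingEnd ℂ) (w 1) = (1 + a) / (1 - a) := by
      rw [hw1v, ha, map_div₀, map_sub, map_add, map_one, map_mul, Complex.conj_I,
        Complex.conj_ofReal]
      ring_nf
    have hw'2 : w' = -2 * (d * z₀) / (1 + a)^2 := by rw [hw']; ring
    rw [hconjw1, hw'2, ← key1]
    field_simp
  have hDval : D = 2 * ((-2 * (d*z₀) / (1 + (t:ℂ)^2)).re) := by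
    rw [hD]
    have h5 : ((starRingEnd ℂ) (w 1) * w').re = (w 1).re * w'.re + (w 1).im * w'.im := by
      simp [Complex.mul_re]
    rw [← h5, hconj]
  have hre_div : (-2 * (d*z₀) / (1 + (t:ℂ)^2)).re = (-2 * (d*z₀).re) / (1 + t^2) := by
    have hc : ((1:ℂ) + (t:ℂ)^2) = ((1 + t^2 : ℝ) : ℂ) := by push_cast; ring
    rw [hc, Complex.div_ofReal_re]
    norm_num
  have hfin : (d * z₀).re ≤ -(1 + t^2)/2 := by
    rw [hDval, hre_div] at hkey
    have hy : (1:ℝ) ≤ -2 * (d*z₀).re / (1 + t^2) := by linarith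
    have h8 := mul_le_mul_of_nonneg_right hy (le_of_lt ht2)
    rw [one_mul, div_mul_cancel₀ _ (ne_of_gt ht2)] at h8
    linarith
  have : z₀ * deriv p z₀ = d * z₀ := by rw [← hd]; ring
  rw [this]
  exact hfin

/-- **Corollary 1 (iii).** If `f ∈ 𝒜` and `|z f'' + f' + (f')² − 2| < 5/2` on the disk,
then `Re f'(z) > 0` on the disk. -/
theorem stmt_3 (f : ℂ → ℂ)
    (hf : AnalyticOnNhd ℂ f (ball (0 : ℂ) 1))
    (hf0 : f 0 = 0) (hf'0 : deriv f 0 = 1)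
    (hineq : ∀ z ∈ ball (0 : ℂ) 1,
      ‖z * deriv (deriv f) z + deriv f z + (deriv f z) ^ 2 - 2‖ < 5 / 2) :
    ∀ z ∈ ball (0 : ℂ) 1, 0 < (deriv f z).re := by
  intro z hz
  by_contra hcon
  push_neg at hcon
  have hp : AnalyticOnNhd ℂ (deriv f) (ball (0:ℂ) 1) := hf.deriv
  have hz1 : ‖z‖ < 1 := by simpa [mem_ball, dist_zero_right] using hz
  -- IVT step
  have hIVT : ∀ z₁ : ℂ, ‖z₁‖ < 1 → (deriv f z₁).re ≤ 0 →
      ∃ z', ‖z'‖ ≤ ‖z₁‖ ∧ (deriv f z').re = 0 := by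
    intro z₁ h1 hle
    have hc : ContinuousOn (fun s : ℝ => (deriv f ((s:ℂ) * z₁)).re) (Set.Icc 0 1) := by
      intro s hs
      have hm : (s:ℂ) * z₁ ∈ ball (0:ℂ) 1 := by
        simp only [mem_ball, dist_zero_right, norm_mul, Complex.norm_real, Real.norm_eq_abs]
        calc |s| * ‖z₁‖ ≤ 1 * ‖z₁‖ := by
              apply mul_le_mul_of_nonneg_right _ (norm_nonneg _)
              rw [abs_le]; exact ⟨by linarith [hs.1], hs.2⟩
          _ < 1 := by simpa using h1
      have c1 : ContinuousAt (fun s : ℝ => (s:ℂ) * z₁) s :=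
        (Complex.continuous_ofReal.continuousAt).mul continuousAt_const
      have c2 : ContinuousAt (deriv f) ((s:ℂ) * z₁) :=
        (hp _ hm).differentiableAt.continuousAt
      have c3 : ContinuousAt (fun s : ℝ => deriv f ((s:ℂ) * z₁)) s :=
        ContinuousAt.comp (f := fun s : ℝ => (s:ℂ) * z₁) c2 c1
      have c4 : ContinuousAt (fun s : ℝ => (deriv f ((s:ℂ) * z₁)).re) s :=
        ContinuousAt.comp (f := fun s : ℝ => deriv f ((s:ℂ) * z₁))
          Complex.continuous_re.continuousAt c3
      exact c4.continuousWithinAt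
    have himg := intermediate_value_Icc' (zero_le_one) hc
    have h0mem : (0:ℝ) ∈ Set.Icc ((fun s : ℝ => (deriv f ((s:ℂ) * z₁)).re) 1)
        ((fun s : ℝ => (deriv f ((s:ℂ) * z₁)).re) 0) := by
      constructor
      · simpa using hle
      · simp [hf'0]
    obtain ⟨s, hs, hs0⟩ := himg h0mem
    refine ⟨(s:ℂ) * z₁, ?_, hs0⟩
    simp only [norm_mul, Complex.norm_real, Real.norm_eq_abs]
    calc |s| * ‖z₁‖ ≤ 1 * ‖z₁‖ := by
          apply mul_le_mul_of_nonneg_right _ (norm_nonneg _)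
          rw [abs_le]; exact ⟨by linarith [hs.1], hs.2⟩
      _ = ‖z₁‖ := one_mul _
  obtain ⟨z', hz'le, hz're⟩ := hIVT z hz1 hcon
  -- minimal modulus zero of Re (deriv f)
  set K : Set ℂ := closedBall (0:ℂ) (‖z‖) ∩ (fun y => (deriv f y).re) ⁻¹' {0}
    with hKdef
  have hKne : K.Nonempty := by
    refine ⟨z', ⟨?_, ?_⟩⟩
    · simpa [mem_closedBall, dist_zero_right] using hz'le
    · simpa using hz're
  have hgc : ContinuousOn (fun y => (deriv f y).re) (closedBall (0:ℂ) (‖z‖)) := by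
    intro y hy
    have hyb : y ∈ ball (0:ℂ) 1 := by
      simp only [mem_closedBall, dist_zero_right] at hy
      simp only [mem_ball, dist_zero_right]; linarith
    exact (Complex.continuous_re.continuousAt.comp
      (hp y hyb).differentiableAt.continuousAt).continuousWithinAt
  have hKcl : IsClosed K :=
    hgc.preimage_isClosed_of_isClosed Metric.isClosed_closedBall isClosed_singleton
  have hKcpt : IsCompact K :=
    IsCompact.of_isClosed_subset (isCompact_closedBall _ _) hKcl Set.inter_subset_left
  obtain ⟨z₀, hz₀K, hz₀min⟩ :=
    hKcpt.exists_isMinOn hKne (continuous_norm.continuousOn)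
  have hz₀le : ‖z₀‖ ≤ ‖z‖ := by
    simpa [mem_closedBall, dist_zero_right] using hz₀K.1
  have hz₀re : (deriv f z₀).re = 0 := by simpa using hz₀K.2
  have hz₀ball : z₀ ∈ ball (0:ℂ) 1 := by
    simp only [mem_ball, dist_zero_right]; linarith
  -- positivity inside the minimal circle
  have hpos : ∀ y : ℂ, ‖y‖ < ‖z₀‖ → 0 < (deriv f y).re := by
    intro y hy
    by_contra hyc
    push_neg at hyc
    have hy1 : ‖y‖ < 1 := by linarith
    obtain ⟨z'', h1, h2⟩ := hIVT y hy1 hyc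
    have hz''K : z'' ∈ K := by
      refine ⟨?_, ?_⟩
      · simp only [mem_closedBall, dist_zero_right]; linarith
      · simpa using h2
    have := hz₀min hz''K
    simp only at this
    have : ‖z₀‖ ≤ ‖z''‖ := this
    linarith
  -- apply the boundary lemma
  have hmm := mm_lemma (deriv f) hp hf'0 z₀ hz₀ball hpos hz₀re
  set t : ℝ := (deriv f z₀).im with htdef
  have hpz₀ : deriv f z₀ = (t:ℂ) * I := by
    apply Complex.ext <;> simp [hz₀re, htdef]
  have hE := hineq z₀ hz₀ball
  set E : ℂ := z₀ * deriv (deriv f) z₀ + deriv f z₀ + (deriv f z₀) ^ 2 - 2 with hEdef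
  have hsq : (deriv f z₀) ^ 2 = -((t:ℂ)^2) := by
    rw [hpz₀]
    linear_combination (t:ℂ)^2 * Complex.I_sq
  have hEre : E.re = (z₀ * deriv (deriv f) z₀).re - t^2 - 2 := by
    rw [hEdef, hsq]
    simp only [Complex.add_re, Complex.sub_re]
    rw [hpz₀]
    simp
    norm_cast
  have h1 : E.re ≤ -(1 + t^2)/2 - t^2 - 2 := by
    rw [hEre]; linarith
  have h2 := Complex.abs_re_le_norm E
  have h3 := neg_abs_le E.re
  nlinarith [sq_nonneg t]
end

section
/- Let f be analytic on the open unit disk 𝔻 with f(0) = 0 and f'(0) = 1. If |f'(z) + (f(z)/z)² − 2| < 5/2 for all z ∈ 𝔻 \ {0}, then Re(f(z)/z) > 0 for all z ∈ 𝔻 \ {0}. -/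
open Complex Metric

open Set

/-- **Corollary 1 (iv).** If `f ∈ 𝒜` and `|f' + (f/z)² − 2| < 5/2` on the punctured disk,
then `Re (f(z)/z) > 0` on the punctured disk. -/
theorem stmt_4 (f : ℂ → ℂ)
    (hf : AnalyticOnNhd ℂ f (ball (0 : ℂ) 1))
    (hf0 : f 0 = 0) (hf'0 : deriv f 0 = 1)
    (hineq : ∀ z ∈ ball (0 : ℂ) 1, z ≠ 0 →
      ‖deriv f z + (f z / z) ^ 2 - 2‖ < 5 / 2) :
    ∀ z ∈ ball (0 : ℂ) 1, z ≠ 0 → 0 < (f z / z).re := by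
  set w : ℂ → ℂ := dslope f 0 with hwdef
  have hw0 : w 0 = 1 := by rw [hwdef, dslope_same, hf'0]
  have hwz : ∀ z : ℂ, z ≠ 0 → w z = f z / z := by
    intro z hz
    rw [hwdef, dslope_of_ne _ hz, slope_def_field, hf0]
    simp
  have hwa : AnalyticOnNhd ℂ w (ball (0:ℂ) 1) := by
    intro z hz
    rcases eq_or_ne z 0 with rfl | hz0
    · obtain ⟨p, hp⟩ := hf 0 hz
      exact ⟨_, hp.has_fpower_series_dslope_fslope⟩
    · apply ((hf z hz).div analyticAt_id hz0).congr
      filter_upwards [isOpen_ne.mem_nhds hz0] with y hy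
      exact (hwz y hy).symm
  have hfw : ∀ z : ℂ, f z = z * w z := by
    intro z
    rcases eq_or_ne z 0 with rfl | hz0
    · simp [hf0]
    · rw [hwz z hz0]; field_simp
  -- reduce to positivity of Re w
  suffices H : ∀ z ∈ ball (0:ℂ) 1, 0 < (w z).re by
    intro z hz hz0
    rw [← hwz z hz0]
    exact H z hz
  by_contra hcon
  push_neg at hcon
  obtain ⟨z₀, hz₀b, hz₀⟩ := hcon
  -- IVT helper
  have key : ∀ z ∈ ball (0:ℂ) 1, (w z).re ≤ 0 →
      ∃ t : ℝ, t ∈ Icc (0:ℝ) 1 ∧ (w ((t:ℂ) * z)).re = 0 := by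
    intro z hz hle
    have hmem : ∀ t : ℝ, t ∈ Icc (0:ℝ) 1 → (t:ℂ) * z ∈ ball (0:ℂ) 1 := by
      intro t ht
      rw [mem_ball_zero_iff] at hz ⊢
      calc ‖(t:ℂ) * z‖ = |t| * ‖z‖ := by simp [norm_mul]
        _ ≤ 1 * ‖z‖ := by
            apply mul_le_mul_of_nonneg_right _ (norm_nonneg z)
            rw [abs_le]; exact ⟨by linarith [ht.1], ht.2⟩
        _ < 1 := by simpa using hz
    have hcont : ContinuousOn (fun t : ℝ => (w ((t:ℂ) * z)).re) (Icc 0 1) := by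
      apply Complex.continuous_re.comp_continuousOn
      apply hwa.continuousOn.comp (Continuous.continuousOn (by continuity))
      intro t ht
      exact hmem t ht
    have := intermediate_value_Icc' (zero_le_one) hcont
    have h0 : (0:ℝ) ∈ Icc ((fun t : ℝ => (w ((t:ℂ) * z)).re) 1)
        ((fun t : ℝ => (w ((t:ℂ) * z)).re) 0) := by
      constructor
      · simpa using hle
      · simp [hw0]
    obtain ⟨t, ht, htv⟩ := this h0
    exact ⟨t, ht, htv⟩
  -- the zero set of Re w within the closed ball of radius ‖z₀‖
  set S : Set ℂ := closedBall (0:ℂ) ‖z₀‖ ∩ {z | (w z).re = 0} with hSdef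
  have hsub : closedBall (0:ℂ) ‖z₀‖ ⊆ ball (0:ℂ) 1 := by
    apply closedBall_subset_ball
    rwa [mem_ball_zero_iff] at hz₀b
  have hSclosed : IsClosed S := by
    apply ContinuousOn.preimage_isClosed_of_isClosed
      ((Complex.continuous_re.comp_continuousOn (hwa.continuousOn)).mono hsub)
      Metric.isClosed_closedBall isClosed_singleton
  have hSne : S.Nonempty := by
    obtain ⟨t, ht, htv⟩ := key z₀ hz₀b hz₀
    refine ⟨(t:ℂ) * z₀, ?_, htv⟩
    rw [mem_closedBall_zero_iff]
    calc ‖(t:ℂ) * z₀‖ = |t| * ‖z₀‖ := by simp [norm_mul]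
      _ ≤ 1 * ‖z₀‖ := mul_le_mul_of_nonneg_right (abs_le.mpr ⟨by linarith [ht.1], ht.2⟩)
          (norm_nonneg _)
      _ = ‖z₀‖ := one_mul _
  have hScpt : IsCompact S :=
    (isCompact_closedBall _ _).of_isClosed_subset hSclosed inter_subset_left
  obtain ⟨z₁, hz₁S, hz₁min⟩ := hScpt.exists_isMinOn hSne continuous_norm.continuousOn
  set r : ℝ := ‖z₁‖ with hrdef
  have hz₁re : (w z₁).re = 0 := hz₁S.2
  have hz₁ne : z₁ ≠ 0 := by
    intro h
    rw [h, hw0] at hz₁re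
    norm_num at hz₁re
  have hrpos : 0 < r := norm_pos_iff.mpr hz₁ne
  have hrlt : r < 1 := by
    have := hz₁S.1
    rw [mem_closedBall_zero_iff] at this
    rw [mem_ball_zero_iff] at hz₀b
    exact lt_of_le_of_lt this hz₀b
  have hz₁b : z₁ ∈ ball (0:ℂ) 1 := mem_ball_zero_iff.mpr hrlt
  -- positivity on the ball of radius r
  have hball : ∀ z : ℂ, ‖z‖ < r → 0 < (w z).re := by
    intro z hzr
    by_contra hle
    push_neg at hle
    have hzb : z ∈ ball (0:ℂ) 1 := mem_ball_zero_iff.mpr (hzr.trans hrlt)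
    obtain ⟨t, ht, htv⟩ := key z hzb hle
    have htn : ‖(t:ℂ) * z‖ ≤ ‖z‖ := by
      calc ‖(t:ℂ) * z‖ = |t| * ‖z‖ := by simp [norm_mul]
        _ ≤ 1 * ‖z‖ := mul_le_mul_of_nonneg_right (abs_le.mpr ⟨by linarith [ht.1], ht.2⟩)
            (norm_nonneg _)
        _ = ‖z‖ := one_mul _
    have hmemS : (t:ℂ) * z ∈ S := by
      refine ⟨?_, htv⟩
      rw [mem_closedBall_zero_iff]
      have := hz₁S.1
      rw [mem_closedBall_zero_iff] at this
      linarith [hzr.le.trans this]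
    have := hz₁min hmemS
    simp only [hrdef] at this
    have : r ≤ ‖(t:ℂ) * z‖ := this
    linarith
  set h : ℂ → ℂ := fun z => (1 - w z) / (1 + w z) with hhdef
  have hballsub : ball (0:ℂ) r ⊆ ball (0:ℂ) 1 := ball_subset_ball hrlt.le
  have hden : ∀ z : ℂ, 0 < (w z).re → (1:ℂ) + w z ≠ 0 := by
    intro z hz hcon
    have := congrArg Complex.re hcon
    simp [Complex.add_re] at this
    linarith
  have h00 : h 0 = 0 := by simp [hhdef, hw0]
  have hmaps : MapsTo h (ball (0:ℂ) r) (ball (0:ℂ) 1) := by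
    intro z hz
    rw [mem_ball_zero_iff] at hz ⊢
    have hre := hball z hz
    have hne := hden z hre
    have habslt : ‖1 - w z‖ < ‖1 + w z‖ := by
      have hsq : ‖1 - w z‖ ^ 2 < ‖1 + w z‖ ^ 2 := by
        rw [Complex.sq_norm, Complex.sq_norm, Complex.normSq_apply, Complex.normSq_apply]
        simp only [Complex.sub_re, Complex.sub_im, Complex.add_re, Complex.add_im,
          Complex.one_re, Complex.one_im]
        nlinarith
      exact lt_of_pow_lt_pow_left₀ 2 (norm_nonneg _) hsq
    have habspos : 0 < ‖1 + w z‖ := norm_pos_iff.mpr hne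
    show ‖_‖ < 1
    rw [hhdef]
    simp only [norm_div]
    rw [div_lt_one habspos]
    exact habslt
  have hdiff : DifferentiableOn ℂ h (ball (0:ℂ) r) := by
    intro z hz
    have hz1 : z ∈ ball (0:ℂ) 1 := hballsub hz
    have hwd : DifferentiableAt ℂ w z := (hwa z hz1).differentiableAt
    have hne := hden z (hball z (mem_ball_zero_iff.mp hz))
    exact ((differentiable_const (1:ℂ)).differentiableAt.sub hwd).div
      ((differentiable_const (1:ℂ)).differentiableAt.add hwd) hne |>.differentiableWithinAt
  have schwarz : ∀ z ∈ ball (0:ℂ) r, ‖h z‖ ≤ ‖z‖ / r := by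
    intro z hz
    have := Complex.dist_le_div_mul_dist_of_mapsTo_ball hdiff (by rw [h00]; exact hmaps.mono_right ball_subset_closedBall) hz
    rw [h00] at this
    simpa [dist_zero_right, div_eq_inv_mul, Complex.dist_eq] using this
  -- derivative setup
  set c : ℂ := w z₁ with hcdef
  set b : ℝ := c.im with hbdef
  have hc : c = (b:ℂ) * I := by
    apply Complex.ext <;> simp [hz₁re, hbdef]
  have h1p : (1:ℂ) + c ≠ 0 := by
    intro hcon
    have := congrArg Complex.re hcon
    simp [Complex.add_re, hz₁re] at this
  have h1m : (1:ℂ) - c ≠ 0 := by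
    intro hcon
    have := congrArg Complex.re hcon
    simp [Complex.sub_re, hz₁re] at this
  set w' : ℂ := deriv w z₁ with hw'def
  have hwd : HasDerivAt w w' z₁ := (hwa z₁ hz₁b).differentiableAt.hasDerivAt
  set D : ℂ := ((-w') * (1 + c) - (1 - c) * w') / ((1 + c) ^ 2) with hDdef
  have hhd : HasDerivAt h D z₁ := by
    have hnum : HasDerivAt (fun z => (1:ℂ) - w z) (-w') z₁ := hwd.const_sub 1
    have hdenom : HasDerivAt (fun z => (1:ℂ) + w z) w' z₁ := hwd.const_add 1
    exact hnum.div hdenom h1p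
  set P : ℂ := D * z₁ with hPdef
  have hg : HasDerivAt (fun ζ : ℂ => h (ζ * z₁)) P (1:ℂ) := by
    have hi : HasDerivAt (fun ζ : ℂ => ζ * z₁) z₁ (1:ℂ) := by
      simpa using (hasDerivAt_id (1:ℂ)).mul_const z₁
    have hhd' : HasDerivAt h D ((1:ℂ) * z₁) := by rwa [one_mul]
    exact hhd'.comp 1 hi
  set u : ℝ → ℂ := fun t => h ((t:ℝ) * z₁) with hudef
  have hu : HasDerivAt u P 1 := by
    have : HasDerivAt (fun ζ : ℂ => h (ζ * z₁)) P ((1:ℝ):ℂ) := by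
      rwa [Complex.ofReal_one]
    exact this.comp_ofReal
  have hu1 : u 1 = h z₁ := by simp [hudef]
  have hre : HasDerivAt (fun t => (u t).re) P.re 1 :=
    Complex.reCLM.hasFDerivAt.comp_hasDerivAt 1 hu
  have him : HasDerivAt (fun t => (u t).im) P.im 1 :=
    Complex.imCLM.hasFDerivAt.comp_hasDerivAt 1 hu
  set A : ℂ := h z₁ with hAdef
  have hψ : HasDerivAt (fun t : ℝ => (u t).re ^ 2 + (u t).im ^ 2)
      (2 * A.re * P.re + 2 * A.im * P.im) 1 := by
    have := (hre.pow 2).add (him.pow 2)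
    refine this.congr_deriv ?_
    simp [hu1, hAdef]
  have hψ1 : (u 1).re ^ 2 + (u 1).im ^ 2 = 1 := by
    rw [hu1, hAdef]
    have hnz : Complex.normSq (1 + c) ≠ 0 := (Complex.normSq_pos.mpr h1p).ne'
    have heq : h z₁ = (1 - c) / (1 + c) := by rw [hhdef]
    rw [heq]
    have hns : ((1 - c)/(1 + c)).re ^ 2 + ((1 - c)/(1 + c)).im ^ 2
        = Complex.normSq ((1 - c)/(1 + c)) := by
      rw [Complex.normSq_apply]; ring
    rw [hns, Complex.normSq_div, div_eq_one_iff_eq hnz,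
      Complex.normSq_apply, Complex.normSq_apply]
    simp [hz₁re]
  have hub : ∀ t ∈ Ioo (0:ℝ) 1, (u t).re ^ 2 + (u t).im ^ 2 ≤ t ^ 2 := by
    intro t ht
    have htz : ‖((t:ℝ):ℂ) * z₁‖ = t * r := by
      rw [norm_mul, hrdef, Complex.norm_real, Real.norm_eq_abs, abs_of_pos ht.1]
    have hmem : ((t:ℝ):ℂ) * z₁ ∈ ball (0:ℂ) r := by
      rw [mem_ball_zero_iff, htz]
      nlinarith [ht.2, hrpos]
    have := schwarz _ hmem
    rw [htz] at this
    have habs : ‖u t‖ ≤ t := by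
      rw [hudef]
      calc ‖h (((t:ℝ):ℂ) * z₁)‖ ≤ t * r / r := this
        _ = t := by field_simp
    have : (u t).re ^ 2 + (u t).im ^ 2 = ‖u t‖ ^ 2 := by
      rw [Complex.sq_norm, Complex.normSq_apply]; ring
    rw [this]
    exact pow_le_pow_left₀ (norm_nonneg _) habs 2
  -- derivative lower bound
  have hd2 : 2 ≤ 2 * A.re * P.re + 2 * A.im * P.im := by
    set ψ : ℝ → ℝ := fun t : ℝ => (u t).re ^ 2 + (u t).im ^ 2 with hψdef
    have htend : Filter.Tendsto (slope ψ 1) (nhdsWithin 1 {(1:ℝ)}ᶜ)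
        (nhds (2 * A.re * P.re + 2 * A.im * P.im)) :=
      hasDerivAt_iff_tendsto_slope.mp hψ
    have htend' : Filter.Tendsto (slope ψ 1) (nhdsWithin 1 (Iio (1:ℝ)))
        (nhds (2 * A.re * P.re + 2 * A.im * P.im)) :=
      htend.mono_left (nhdsWithin_mono 1 (fun x hx => ne_of_lt hx))
    have hlin : Filter.Tendsto (fun t : ℝ => 1 + t) (nhdsWithin 1 (Iio (1:ℝ)))
        (nhds 2) := by
      have : Filter.Tendsto (fun t : ℝ => 1 + t) (nhds 1) (nhds 2) := by
        have h2 : Continuous (fun t : ℝ => 1 + t) := continuous_const.add continuous_id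
        have := h2.tendsto (1:ℝ)
        norm_num at this
        exact this
      exact this.mono_left nhdsWithin_le_nhds
    have hev : ∀ᶠ t in nhdsWithin 1 (Iio (1:ℝ)), 1 + t ≤ slope ψ 1 t := by
      filter_upwards [Ioo_mem_nhdsLT_of_mem
        (by norm_num : (1:ℝ) ∈ Ioc (0:ℝ) 1)] with t ht
      have hψt : ψ t ≤ t ^ 2 := hub t ht
      have hψ1' : ψ 1 = 1 := hψ1
      rw [slope_def_field]
      have htlt : t - 1 < 0 := by linarith [ht.2]
      rw [le_div_iff_of_neg htlt, hψ1']
      nlinarith [ht.1, ht.2]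
    exact le_of_tendsto_of_tendsto hlin htend' hev
  have hArr : A.re * P.re + A.im * P.im = (starRingEnd ℂ A * P).re := by
    simp [Complex.mul_re]
  -- algebraic identity
  have hb2pos : (0:ℝ) < 1 + b ^ 2 := by positivity
  have hbc : ((1:ℂ) + (b:ℂ) ^ 2) ≠ 0 := by
    have : ((1 + b ^ 2 : ℝ) : ℂ) ≠ 0 := Complex.ofReal_ne_zero.mpr (ne_of_gt hb2pos)
    push_cast at this
    exact this
  have hconjc : (starRingEnd ℂ) c = -c := by
    rw [hc]; simp
  have hc2 : (1 - c) * (1 + c) = ((1 + b ^ 2 : ℝ) : ℂ) := by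
    rw [hc]; push_cast; linear_combination (-(b:ℂ) ^ 2) * Complex.I_sq
  have hkey : starRingEnd ℂ A * P = (((-2 : ℝ) / (1 + b ^ 2) : ℝ) : ℂ) * (z₁ * w') := by
    have hA : A = (1 - c) / (1 + c) := by rw [hAdef, hhdef]
    have hcA : starRingEnd ℂ A = (1 + c) / (1 - c) := by
      rw [hA, map_div₀, map_sub, map_one, map_add, map_one, hconjc, sub_neg_eq_add,
        ← sub_eq_add_neg]
    have hD2 : D = -2 * w' / (1 + c) ^ 2 := by
      rw [hDdef]; congr 1; ring
    calc starRingEnd ℂ A * P = (1 + c) / (1 - c) * (-2 * w' / (1 + c) ^ 2 * z₁) := by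
          rw [hcA, hPdef, hD2]
      _ = (-2 * w' * z₁) / ((1 - c) * (1 + c)) := by
          field_simp
      _ = (-2 * w' * z₁) / ((1 + b ^ 2 : ℝ) : ℂ) := by rw [hc2]
      _ = (((-2 : ℝ) / (1 + b ^ 2) : ℝ) : ℂ) * (z₁ * w') := by
          push_cast
          ring
  have hq : (z₁ * w').re ≤ -(1 + b ^ 2) / 2 := by
    have h1 : (1:ℝ) ≤ (starRingEnd ℂ A * P).re := by
      rw [← hArr]; nlinarith [hd2]
    rw [hkey, Complex.re_ofReal_mul, div_mul_eq_mul_div, le_div_iff₀ hb2pos] at h1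
    linarith
  -- final contradiction
  have hderiv : deriv f z₁ = c + z₁ * w' := by
    have : HasDerivAt f (1 * w z₁ + z₁ * w') z₁ := by
      have heq : f = fun z => z * w z := funext hfw
      rw [heq]
      exact (hasDerivAt_id z₁).mul hwd
    rw [this.deriv, ← hcdef]; ring
  have hfz : f z₁ / z₁ = c := by
    rw [hfw z₁, ← hcdef]
    field_simp
  have hE := hineq z₁ hz₁b hz₁ne
  have hEre : (deriv f z₁ + (f z₁ / z₁) ^ 2 - 2).re = (z₁ * w').re - b ^ 2 - 2 := by
    rw [hderiv, hfz, hc]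
    simp only [Complex.add_re, Complex.sub_re]
    have h1 : (((b:ℂ) * I) ^ 2).re = -b ^ 2 := by
      simp [mul_pow, Complex.I_sq, ← Complex.ofReal_pow]
    have h2 : (((b:ℂ) * I)).re = 0 := by simp
    rw [h1, h2]
    simp [Complex.sub_re]
    ring
  have habs := Complex.abs_re_le_norm (deriv f z₁ + (f z₁ / z₁) ^ 2 - 2)
  rw [hEre] at habs
  have hle : (z₁ * w').re - b ^ 2 - 2 ≤ -(5/2) := by nlinarith [hq]
  have hneg : -((z₁ * w').re - b ^ 2 - 2) ≤ |(z₁ * w').re - b ^ 2 - 2| := neg_le_abs _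
  linarith
end

section
/- Let p be a function analytic on the open unit disk 𝔻 = {z ∈ ℂ : |z| < 1} with p(0) = 1. If |z·p'(z) + p(z) − p(z)²| < 1/2 for all z ∈ 𝔻, then Re p(z) > 0 for all z ∈ 𝔻. -/
open Complex Metric

lemma aux_deriv_nonpos {g : ℝ → ℝ} {g' : ℝ} (hg : HasDerivAt g g' 0) (h0 : g 0 = 0)
    (h : ∀ᶠ s in nhdsWithin 0 (Set.Ioi 0), g s ≤ 0) : g' ≤ 0 := by
  have ht : Filter.Tendsto (slope g 0) (nhdsWithin 0 {(0:ℝ)}ᶜ) (nhds g') :=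
    hasDerivAt_iff_tendsto_slope.1 hg
  have ht' : Filter.Tendsto (slope g 0) (nhdsWithin 0 (Set.Ioi (0:ℝ))) (nhds g') :=
    ht.mono_left (nhdsWithin_mono _ (fun s hs => ne_of_gt hs))
  refine le_of_tendsto ht' ?_
  filter_upwards [h, self_mem_nhdsWithin] with s hs hs'
  rw [slope_def_field]
  have : (0:ℝ) < s := hs'
  rw [h0]
  apply div_nonpos_of_nonpos_of_nonneg <;> simp [hs] <;> linarith

lemma aux_halfplane {z0 E : ℂ} (hz0 : z0 ≠ 0)
    (h : ∀ d : ℂ, ((starRingEnd ℂ) z0 * d).re < 0 → (E * d).re ≤ 0) :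
    (E * z0).im = 0 ∧ 0 ≤ (E * z0).re := by
  have hpos : 0 < Complex.normSq z0 := Complex.normSq_pos.2 hz0
  have key : ∀ d : ℂ, ((starRingEnd ℂ) z0 * d).re ≤ 0 → (E * d).re ≤ 0 := by
    intro d hd
    have step : ∀ ε : ℝ, 0 < ε → (E * d).re ≤ ε * (E * z0).re := by
      intro ε hε
      have h1 : ((starRingEnd ℂ) z0 * (d - ε * z0)).re < 0 := by
        have e1 : (starRingEnd ℂ) z0 * (d - ε * z0)
            = (starRingEnd ℂ) z0 * d - ε * ((starRingEnd ℂ) z0 * z0) := by ring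
        have e2 : (starRingEnd ℂ) z0 * z0 = (Complex.normSq z0 : ℂ) := by
          rw [mul_comm, Complex.mul_conj]
        rw [e1, e2]
        simp only [Complex.sub_re, Complex.re_ofReal_mul, Complex.ofReal_re]
        nlinarith
      have h2 := h _ h1
      have e3 : E * (d - ε * z0) = E * d - ε * (E * z0) := by ring
      rw [e3] at h2
      simp only [Complex.sub_re, Complex.re_ofReal_mul] at h2
      linarith
    by_contra hcon
    push_neg at hcon
    rcases le_or_gt (E * z0).re 0 with hh | hh
    · have := step 1 one_pos; linarith
    · have h4 := step ((E * d).re / (2 * (E * z0).re)) (by positivity)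
      have h5 : (E * d).re / (2 * (E * z0).re) * (E * z0).re = (E * d).re / 2 := by
        rw [div_mul_eq_mul_div, mul_comm (2:ℝ) ((E*z0).re), ← div_div, mul_div_assoc,
          div_self (ne_of_gt hh), mul_one]
      rw [h5] at h4
      linarith
  constructor
  · have ha := key (Complex.I * z0) ?_
    · have hb := key (-(Complex.I * z0)) ?_
      · have e : E * (Complex.I * z0) = Complex.I * (E * z0) := by ring
        have e' : E * (-(Complex.I * z0)) = -(Complex.I * (E * z0)) := by ring
        rw [e] at ha; rw [e'] at hb
        simp only [Complex.mul_re, Complex.I_re, Complex.I_im, Complex.neg_re] at ha hb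
        simp only [zero_mul, one_mul, zero_sub] at ha hb
        linarith
      · have e : (starRingEnd ℂ) z0 * (-(Complex.I * z0)) = -(Complex.I * ((starRingEnd ℂ) z0 * z0)) := by ring
        rw [e, show (starRingEnd ℂ) z0 * z0 = (Complex.normSq z0 : ℂ) by rw [mul_comm, Complex.mul_conj]]
        simp
    · have e : (starRingEnd ℂ) z0 * (Complex.I * z0) = Complex.I * ((starRingEnd ℂ) z0 * z0) := by ring
      rw [e, show (starRingEnd ℂ) z0 * z0 = (Complex.normSq z0 : ℂ) by rw [mul_comm, Complex.mul_conj]]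
      simp
  · have ha := key (-z0) ?_
    · have e : E * (-z0) = -(E * z0) := by ring
      rw [e] at ha
      simp only [Complex.neg_re] at ha
      linarith
    · have e : (starRingEnd ℂ) z0 * (-z0) = -((Complex.normSq z0 : ℂ)) := by
        rw [show (starRingEnd ℂ) z0 * (-z0) = -((starRingEnd ℂ) z0 * z0) by ring,
          mul_comm, Complex.mul_conj]
      rw [e]
      simp
      linarith

lemma aux_jack {w : ℂ → ℂ} {z0 w' : ℂ} {r0 : ℝ}
    (hr0 : ‖z0‖ = r0) (h0 : 0 < r0)
    (hb : ∀ z : ℂ, ‖z‖ < r0 → ‖w z‖ ≤ ‖z‖ / r0)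
    (hw' : HasDerivAt w w' z0) (hc : ‖w z0‖ = 1) :
    ∃ m : ℝ, 1 ≤ m ∧ z0 * w' * (starRingEnd ℂ) (w z0) = (m : ℂ) := by
  have hz0 : z0 ≠ 0 := by
    intro h; rw [h] at hr0; simp at hr0; linarith [hr0, h0]
  set c := w z0 with hcdef
  have hnsz0 : Complex.normSq z0 = r0 ^ 2 := by rw [← Complex.sq_norm, hr0]
  have hcc : ((starRingEnd ℂ) c * c).re = 1 := by
    rw [mul_comm, Complex.mul_conj]
    simp [← Complex.sq_norm, hc]
  set E : ℂ := ((r0 ^ 2 : ℝ) : ℂ) * ((starRingEnd ℂ) c * w') - (starRingEnd ℂ) z0 with hEdef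
  have hkey : ∀ d : ℂ, ((starRingEnd ℂ) z0 * d).re < 0 → (E * d).re ≤ 0 := by
    intro d hd
    have hdne : d ≠ 0 := by rintro rfl; simp at hd
    have hnd : 0 < Complex.normSq d := Complex.normSq_pos.2 hdne
    set A : ℝ := ((starRingEnd ℂ) z0 * d).re with hAdef
    set g : ℝ → ℝ := fun s => ((starRingEnd ℂ) c * w (z0 + (s : ℂ) * d)).re ^ 2 -
      (Complex.normSq z0 + 2 * s * A + s ^ 2 * Complex.normSq d) / r0 ^ 2 with hgdef
    have hnormSq : ∀ s : ℝ, Complex.normSq (z0 + (s : ℂ) * d) =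
        Complex.normSq z0 + 2 * s * A + s ^ 2 * Complex.normSq d := by
      intro s
      simp only [hAdef, Complex.normSq_apply, Complex.add_re, Complex.add_im, Complex.mul_re,
        Complex.mul_im, Complex.ofReal_re, Complex.ofReal_im, Complex.conj_re, Complex.conj_im]
      ring
    have hg0 : g 0 = 0 := by
      simp only [hgdef, Complex.ofReal_zero, zero_mul, add_zero, mul_zero, ne_eq,
        OfNat.ofNat_ne_zero, not_false_eq_true, zero_pow]
      rw [hcc, hnsz0]
      field_simp
      ring
    -- eventually nonpositive
    have hs2 : 0 < -2 * A / Complex.normSq d := by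
      apply div_pos _ hnd; linarith
    have hev : ∀ᶠ s in nhdsWithin 0 (Set.Ioi (0:ℝ)), g s ≤ 0 := by
      filter_upwards [Ioo_mem_nhdsGT_of_mem (Set.mem_Ico.2 ⟨le_rfl, hs2⟩)] with s hs
      obtain ⟨hs0, hs1⟩ := hs
      have hlt : Complex.normSq (z0 + (s : ℂ) * d) < r0 ^ 2 := by
        rw [hnormSq, hnsz0]
        have hmul : s * Complex.normSq d < -2 * A := by
          rw [lt_div_iff₀ hnd] at hs1
          linarith
        nlinarith [mul_lt_mul_of_pos_left hmul hs0]
      have habslt : ‖z0 + (s : ℂ) * d‖ < r0 := by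
        have h1 := Complex.sq_norm (z0 + (s : ℂ) * d)
        nlinarith [norm_nonneg (z0 + (s : ℂ) * d)]
      have hb1 := hb _ habslt
      have habsζ : ‖(starRingEnd ℂ) c * w (z0 + (s : ℂ) * d)‖
          = ‖w (z0 + (s : ℂ) * d)‖ := by
        rw [norm_mul, Complex.norm_conj, hc, one_mul]
      have hre := Complex.abs_re_le_norm ((starRingEnd ℂ) c * w (z0 + (s : ℂ) * d))
      rw [habsζ] at hre
      have h2 : ((starRingEnd ℂ) c * w (z0 + (s : ℂ) * d)).re ^ 2
          ≤ (‖z0 + (s : ℂ) * d‖) ^ 2 / r0 ^ 2 := by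
        have h6 : |((starRingEnd ℂ) c * w (z0 + (s : ℂ) * d)).re|
            ≤ ‖z0 + (s : ℂ) * d‖ / r0 := hre.trans hb1
        calc ((starRingEnd ℂ) c * w (z0 + (s : ℂ) * d)).re ^ 2
            = |((starRingEnd ℂ) c * w (z0 + (s : ℂ) * d)).re| ^ 2 := (_root_.sq_abs _).symm
          _ ≤ (‖z0 + (s : ℂ) * d‖ / r0) ^ 2 :=
              pow_le_pow_left₀ (abs_nonneg _) h6 2
          _ = ‖z0 + (s : ℂ) * d‖ ^ 2 / r0 ^ 2 := by rw [div_pow]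
      rw [Complex.sq_norm, hnormSq] at h2
      simp only [hgdef]
      linarith
    -- derivative of g at 0
    have hu : HasDerivAt (fun s : ℝ => z0 + (s : ℂ) * d) d 0 := by
      have h1 : HasDerivAt (fun s : ℝ => ((s : ℂ))) 1 0 := Complex.ofRealCLM.hasDerivAt
      simpa using (h1.mul_const d).const_add z0
    have hwu : HasDerivAt (fun s : ℝ => w (z0 + (s : ℂ) * d)) (d * w') 0 := by
      have := HasDerivAt.scomp_of_eq (x := (0:ℝ)) hw' hu (by simp)
      simpa [smul_eq_mul, Function.comp_def] using this
    have h2 : HasDerivAt (fun s : ℝ => (starRingEnd ℂ) c * w (z0 + (s : ℂ) * d))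
        ((starRingEnd ℂ) c * (d * w')) 0 := hwu.const_mul _
    have h3 : HasDerivAt (fun s : ℝ => ((starRingEnd ℂ) c * w (z0 + (s : ℂ) * d)).re)
        (((starRingEnd ℂ) c * (d * w')).re) 0 :=
      Complex.reCLM.hasFDerivAt.comp_hasDerivAt 0 h2
    have h4 : HasDerivAt (fun s : ℝ => ((starRingEnd ℂ) c * w (z0 + (s : ℂ) * d)).re ^ 2)
        (2 * ((starRingEnd ℂ) c * (d * w')).re) 0 := by
      have := h3.pow 2
      simp only [Nat.cast_ofNat, pow_one] at this
      have e0 : ((starRingEnd ℂ) c * w (z0 + ((0:ℝ) : ℂ) * d)).re = 1 := by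
        rw [show z0 + ((0:ℝ) : ℂ) * d = z0 by simp, ← hcdef]
        exact hcc
      rw [e0] at this
      simpa [Pi.pow_def] using this
    have h5 : HasDerivAt (fun s : ℝ =>
        (Complex.normSq z0 + 2 * s * A + s ^ 2 * Complex.normSq d) / r0 ^ 2)
        ((2 * A) / r0 ^ 2) 0 := by
      have ha : HasDerivAt (fun s : ℝ => 2 * s * A) (2 * A) 0 := by
        simpa using ((hasDerivAt_id (0:ℝ)).const_mul 2).mul_const A
      have hbb : HasDerivAt (fun s : ℝ => s ^ 2 * Complex.normSq d) 0 0 := by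
        simpa using (hasDerivAt_pow 2 (0:ℝ)).mul_const (Complex.normSq d)
      have := ((ha.add hbb).const_add (Complex.normSq z0)).div_const (r0 ^ 2)
      simpa [← add_assoc] using this
    have hg' : HasDerivAt g (2 * ((starRingEnd ℂ) c * (d * w')).re - 2 * A / r0 ^ 2) 0 := by
      have := h4.sub h5
      simpa [hgdef, mul_div_assoc, Pi.sub_def] using this
    have hder := aux_deriv_nonpos hg' hg0 hev
    -- conclude (E * d).re ≤ 0
    have e1 : (E * d).re = r0 ^ 2 * ((starRingEnd ℂ) c * (d * w')).re - A := by
      rw [hEdef]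
      have : (((r0 ^ 2 : ℝ) : ℂ) * ((starRingEnd ℂ) c * w') - (starRingEnd ℂ) z0) * d
          = ((r0 ^ 2 : ℝ) : ℂ) * ((starRingEnd ℂ) c * (d * w')) - (starRingEnd ℂ) z0 * d := by
        ring
      rw [this, Complex.sub_re, Complex.re_ofReal_mul]
    have hr2 : (0:ℝ) < r0 ^ 2 := by positivity
    have h7 := mul_le_mul_of_nonneg_right hder (le_of_lt hr2)
    rw [zero_mul, sub_mul, div_mul_cancel₀ _ (ne_of_gt hr2)] at h7
    rw [e1]
    nlinarith
  -- apply half-plane lemma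
  obtain ⟨him, hre⟩ := aux_halfplane hz0 hkey
  have hEz0 : E * z0 = ((r0 ^ 2 : ℝ) : ℂ) * (z0 * w' * (starRingEnd ℂ) c - 1) := by
    rw [hEdef]
    have : (starRingEnd ℂ) z0 * z0 = ((Complex.normSq z0 : ℝ) : ℂ) := by
      rw [mul_comm, Complex.mul_conj]
    rw [sub_mul, this, hnsz0]
    ring
  rw [hEz0] at him hre
  set ζ := z0 * w' * (starRingEnd ℂ) c with hζ
  have hr2 : (0:ℝ) < r0 ^ 2 := by positivity
  simp only [Complex.im_ofReal_mul, Complex.re_ofReal_mul, Complex.sub_im, Complex.sub_re,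
    Complex.one_im, Complex.one_re, sub_zero] at him hre
  refine ⟨ζ.re, ?_, ?_⟩
  · nlinarith
  · have himζ : ζ.im = 0 := by
      rcases mul_eq_zero.1 him with h | h
      · exact absurd h (ne_of_gt hr2)
      · exact h
    exact Complex.ext (by simp) (by simp [himζ])

/-- **Theorem 2.** If `p` is analytic on the unit disk with `p 0 = 1` and
`|z p'(z) + p(z) − p(z)²| < 1/2` on the disk, then `Re p(z) > 0` on the disk. -/
theorem stmt_5 (p : ℂ → ℂ)
    (hp : AnalyticOnNhd ℂ p (ball (0 : ℂ) 1))
    (hp0 : p 0 = 1)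
    (hineq : ∀ z ∈ ball (0 : ℂ) 1,
      ‖z * deriv p z + p z - (p z) ^ 2‖ < 1 / 2) :
    ∀ z ∈ ball (0 : ℂ) 1, 0 < (p z).re := by
  by_contra hcon
  push_neg at hcon
  obtain ⟨z1, hz1, hz1le⟩ := hcon
  have hz1abs : ‖z1‖ < 1 := by
    rw [mem_ball_zero_iff] at hz1; exact hz1
  have hcont : ContinuousOn p (ball (0 : ℂ) 1) := hp.continuousOn
  have hsub2 : closedBall (0:ℂ) (‖z1‖) ⊆ ball (0:ℂ) 1 :=
    closedBall_subset_ball hz1abs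
  set K : Set ℂ :=
    closedBall (0:ℂ) (‖z1‖) ∩ (fun z => (p z).re) ⁻¹' (Set.Iic 0) with hKdef
  have hKsub : K ⊆ ball (0:ℂ) 1 := fun z hz => hsub2 hz.1
  have hKclosed : IsClosed K :=
    ContinuousOn.preimage_isClosed_of_isClosed
      (Complex.continuous_re.comp_continuousOn (hcont.mono hsub2))
      Metric.isClosed_closedBall isClosed_Iic
  have hKcompact : IsCompact K :=
    (isCompact_closedBall (0:ℂ) _).of_isClosed_subset hKclosed Set.inter_subset_left
  have hKne : K.Nonempty :=
    ⟨z1, Set.mem_inter (by rw [mem_closedBall_zero_iff]) (by simpa using hz1le)⟩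
  obtain ⟨z0, hz0K, hmin⟩ := hKcompact.exists_isMinOn hKne continuous_norm.continuousOn
  rw [isMinOn_iff] at hmin
  set r0 := ‖z0‖ with hr0def
  have hz0ball : z0 ∈ ball (0:ℂ) 1 := hKsub hz0K
  have hz0le : (p z0).re ≤ 0 := hz0K.2
  have hz0ne : z0 ≠ 0 := by
    rintro rfl
    rw [hp0] at hz0le
    norm_num at hz0le
  have hr0pos : 0 < r0 := by
    rw [hr0def]; exact norm_pos_iff.mpr hz0ne
  have hr0le : r0 ≤ ‖z1‖ := by
    have := hz0K.1
    rwa [mem_closedBall_zero_iff] at this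
  -- positivity strictly inside radius r0
  have hpos : ∀ z : ℂ, ‖z‖ < r0 → 0 < (p z).re := by
    intro z hz
    by_contra hzc
    push_neg at hzc
    have hzK : z ∈ K := Set.mem_inter
      (by rw [mem_closedBall_zero_iff]; exact le_of_lt (lt_of_lt_of_le hz hr0le))
      (by simpa using hzc)
    exact absurd (hmin z hzK) (not_le.2 hz)
  -- Re p z0 = 0
  have hre0 : (p z0).re = 0 := by
    rcases lt_or_eq_of_le hz0le with hlt | heq
    · exfalso
      have hca : ContinuousAt (fun z => (p z).re) z0 :=
        Complex.continuous_re.continuousAt.comp (hp z0 hz0ball).continuousAt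
      obtain ⟨δ, hδpos, hδ⟩ := Metric.mem_nhds_iff.1 (hca (Iio_mem_nhds hlt))
      set ε := min (δ / (2 * r0)) (1/2) with hεdef
      have hεpos : 0 < ε := lt_min (by positivity) one_half_pos
      have hεle : ε ≤ 1/2 := min_le_right _ _
      set z' := ((1 - ε : ℝ) : ℂ) * z0 with hz'def
      have h1 : ‖z'‖ < r0 := by
        rw [hz'def, norm_mul, Complex.norm_real, Real.norm_eq_abs, abs_of_pos (by linarith), ← hr0def]
        nlinarith
      have h2 : z' ∈ ball z0 δ := by
        rw [mem_ball, dist_eq]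
        have e : z' - z0 = -((ε : ℝ) : ℂ) * z0 := by rw [hz'def]; push_cast; ring
        rw [e, norm_mul, norm_neg, Complex.norm_real, Real.norm_eq_abs, abs_of_pos hεpos, ← hr0def]
        have : ε * r0 ≤ δ / (2 * r0) * r0 :=
          mul_le_mul_of_nonneg_right (min_le_left _ _) (le_of_lt hr0pos)
        have e2 : δ / (2 * r0) * r0 = δ / 2 := by field_simp
        rw [e2] at this
        linarith
      have h3 : (p z').re < 0 := hδ h2
      exact absurd (hpos z' h1) (not_lt.2 (le_of_lt h3))
    · exact heq
  set t := (p z0).im with htdef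
  have hpz0 : p z0 = (t : ℂ) * Complex.I := by
    apply Complex.ext
    · simp [hre0]
    · simpa using htdef.symm
  have hne : ∀ z : ℂ, 0 ≤ (p z).re → (1:ℂ) + p z ≠ 0 := by
    intro z hz h
    have := congrArg Complex.re h
    simp only [Complex.add_re, Complex.one_re, Complex.zero_re] at this
    linarith
  have h1pa : (1 : ℂ) + p z0 ≠ 0 := hne z0 (le_of_eq hre0.symm)
  have h1ma : (1 : ℂ) - p z0 ≠ 0 := by
    intro h
    have := congrArg Complex.re h
    simp only [Complex.sub_re, Complex.one_re, Complex.zero_re, hre0] at this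
    linarith
  set w : ℂ → ℂ := fun z => (1 - p z) / (1 + p z) with hwdef
  have hballsub : ball (0:ℂ) r0 ⊆ ball (0:ℂ) 1 :=
    ball_subset_ball (le_of_lt (lt_of_le_of_lt hr0le hz1abs))
  have hwdiff : DifferentiableOn ℂ w (ball (0:ℂ) r0) := by
    have hpd : DifferentiableOn ℂ p (ball (0:ℂ) r0) := (hp.mono hballsub).differentiableOn
    exact ((differentiableOn_const (1:ℂ)).sub hpd).div ((differentiableOn_const (1:ℂ)).add hpd)
      (fun z hz => hne z (le_of_lt (hpos z (by rwa [mem_ball_zero_iff] at hz))))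
  have hw0 : w 0 = 0 := by simp [hwdef, hp0]
  have hwabs : ∀ z : ℂ, ‖z‖ < r0 → ‖w z‖ < 1 := by
    intro z hz
    have hrez : 0 < (p z).re := hpos z hz
    have hq : Complex.normSq (1 + p z) - Complex.normSq (1 - p z) = 4 * (p z).re := by
      simp only [Complex.normSq_apply, Complex.add_re, Complex.add_im, Complex.sub_re,
        Complex.sub_im, Complex.one_re, Complex.one_im]
      ring
    have hpos2 : 0 < ‖1 + p z‖ := norm_pos_iff.mpr (hne z hrez.le)
    have hlt : ‖1 - p z‖ < ‖1 + p z‖ := by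
      nlinarith [Complex.sq_norm (1 + p z), Complex.sq_norm (1 - p z),
        norm_nonneg (1 - p z)]
    rw [hwdef]
    simp only [norm_div]
    rw [div_lt_one hpos2]
    exact hlt
  have hmaps : Set.MapsTo w (ball (0:ℂ) r0) (ball (w 0) 1) := by
    intro z hz
    rw [hw0, mem_ball_zero_iff]
    exact hwabs z (by rwa [mem_ball_zero_iff] at hz)
  have hb : ∀ z : ℂ, ‖z‖ < r0 → ‖w z‖ ≤ ‖z‖ / r0 := by
    intro z hz
    have h := dist_le_div_mul_dist_of_mapsTo_ball hwdiff (hmaps.mono_right ball_subset_closedBall)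
      (by rwa [mem_ball_zero_iff] : z ∈ ball (0:ℂ) r0)
    rw [hw0, dist_zero_right, dist_zero_right] at h
    calc ‖w z‖ = ‖w z‖ := rfl
      _ ≤ 1 / r0 * ‖z‖ := h
      _ = ‖z‖ / r0 := by ring
  have hpda : HasDerivAt p (deriv p z0) z0 := (hp z0 hz0ball).differentiableAt.hasDerivAt
  set q := deriv p z0 with hqdef
  have hconjpa : (starRingEnd ℂ) (1 + p z0) = 1 - p z0 := by
    rw [hpz0, map_add, map_one, map_mul, Complex.conj_I, Complex.conj_ofReal]
    ring
  have habsw1 : ‖w z0‖ = 1 := by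
    rw [hwdef]
    simp only [norm_div]
    rw [← hconjpa, Complex.norm_conj, div_self (norm_ne_zero_iff.mpr h1pa)]
  have hwder : HasDerivAt w ((-q * (1 + p z0) - (1 - p z0) * q) / (1 + p z0) ^ 2) z0 := by
    have h1 : HasDerivAt (fun z => (1:ℂ) - p z) (-q) z0 := by
      simpa [Pi.sub_def] using (hasDerivAt_const z0 (1:ℂ)).sub hpda
    have h2 : HasDerivAt (fun z => (1:ℂ) + p z) q z0 := by
      simpa [Pi.add_def] using (hasDerivAt_const z0 (1:ℂ)).add hpda
    exact h1.div h2 h1pa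
  obtain ⟨m, hm1, hmEq⟩ := aux_jack hr0def.symm hr0pos hb hwder habsw1
  -- algebra: extract z0 * q
  have hconjw : (starRingEnd ℂ) (w z0) = (1 + p z0) / (1 - p z0) := by
    rw [hwdef]
    simp only [map_div₀]
    rw [hconjpa, show (starRingEnd ℂ) (1 - p z0) = 1 + p z0 by
      rw [hpz0, map_sub, map_one, map_mul, Complex.conj_I, Complex.conj_ofReal]; ring]
  rw [hconjw] at hmEq
  have hprod : ((1:ℂ) + p z0) * (1 - p z0) = 1 + (t:ℂ)^2 := by
    rw [hpz0]
    linear_combination -(t:ℂ)^2 * Complex.I_sq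
  have h1pt : ((1:ℂ) + (t:ℂ)^2) ≠ 0 := by
    rw [show ((1:ℂ) + (t:ℂ)^2) = (((1 + t^2 : ℝ)) : ℂ) by push_cast; ring]
    rw [Complex.ofReal_ne_zero]
    positivity
  have hzq : z0 * q = -(m:ℂ) * (1 + (t:ℂ)^2) / 2 := by
    have h' : -2 * (z0 * q) = (m : ℂ) * (1 + (t:ℂ)^2) := by
      have e : z0 * ((-q * (1 + p z0) - (1 - p z0) * q) / (1 + p z0) ^ 2) *
          ((1 + p z0) / (1 - p z0)) = (-2 * (z0 * q)) / ((1 + p z0) * (1 - p z0)) := by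
        field_simp
        ring
      rw [e, hprod] at hmEq
      field_simp at hmEq
      linear_combination hmEq
    linear_combination -h' / 2
  -- final contradiction
  have hfin := hineq z0 hz0ball
  have hexpr : z0 * deriv p z0 + p z0 - (p z0) ^ 2
      = (((t^2 - m*(1+t^2)/2 : ℝ)) : ℂ) + ((t : ℝ) : ℂ) * Complex.I := by
    rw [← hqdef, hzq, hpz0]
    push_cast
    linear_combination -(t:ℂ)^2 * Complex.I_sq
  rw [hexpr] at hfin
  have habs2 : (‖(((t^2 - m*(1+t^2)/2 : ℝ)) : ℂ) + ((t : ℝ) : ℂ) * Complex.I‖) ^ 2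
      = (t^2 - m*(1+t^2)/2)^2 + t^2 := by
    rw [Complex.sq_norm]
    simp only [Complex.normSq_apply, Complex.add_re, Complex.add_im, Complex.mul_re,
      Complex.mul_im, Complex.ofReal_re, Complex.ofReal_im, Complex.I_re, Complex.I_im]
    ring
  have hge : 1/4 ≤ (t^2 - m*(1+t^2)/2)^2 + t^2 := by
    nlinarith [sq_nonneg (t^2-1), sq_nonneg (t^2+1), sq_nonneg (m-1), sq_nonneg t,
      mul_nonneg (sub_nonneg.2 hm1) (sq_nonneg t), sq_nonneg (m*(1+t^2) - 2*t^2 - (1-t^2)),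
      sq_nonneg (m*(1+t^2) - 2*t^2)]
  nlinarith [norm_nonneg ((((t^2 - m*(1+t^2)/2 : ℝ)) : ℂ) + ((t : ℝ) : ℂ) * Complex.I)]
end

section
/- Let f be analytic on the open unit disk 𝔻 with f(0) = 0, f'(0) = 1, and f'(z) ≠ 0 for all z ∈ 𝔻. If |z² f'''(z)/f'(z) − 2 (z f''(z)/f'(z))²| < 1/2 for all z ∈ 𝔻, then Re(1 + z f''(z)/f'(z)) > 0 for all z ∈ 𝔻, i.e., f is convex. -/
open Complex Metric Set Filter

private lemma hasDerivAt_normSq_comp {W : ℝ → ℂ} {Wd : ℂ} {θ : ℝ} (hW : HasDerivAt W Wd θ) :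
    HasDerivAt (fun u => Complex.normSq (W u))
      (2 * ((W θ).re * Wd.re + (W θ).im * Wd.im)) θ := by
  have hre : HasDerivAt (fun u => (W u).re) Wd.re θ :=
    Complex.reCLM.hasFDerivAt.comp_hasDerivAt θ hW
  have him : HasDerivAt (fun u => (W u).im) Wd.im θ :=
    Complex.imCLM.hasFDerivAt.comp_hasDerivAt θ hW
  have := (hre.mul hre).add (him.mul him)
  simp only [Complex.normSq_apply]
  exact this.congr_deriv (by ring)

private lemma quarter_le {d t : ℝ} (hd : 1 ≤ d) :
    (1:ℝ)/4 ≤ (-(d*(1+t^2))/2 + t^2)^2 + t^2 := by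
  nlinarith [sq_nonneg ((d-1)*(1+t^2)/2 + (1-t^2)/2), sq_nonneg t, sq_nonneg (t^2),
    mul_nonneg (mul_nonneg (sub_nonneg.2 hd) (sq_nonneg t)) (sq_nonneg t),
    mul_nonneg (sub_nonneg.2 hd) (sq_nonneg t), sq_nonneg (d-1), sq_nonneg (t*t-1)]

set_option maxHeartbeats 1000000 in
private lemma jack_main (h hd s : ℂ → ℂ)
    (hh : ∀ z ∈ ball (0:ℂ) 1, HasDerivAt h (hd z) z)
    (h0 : h 0 = 1)
    (key : ∀ z ∈ ball (0:ℂ) 1, z * hd z = h z ^ 2 - h z + s z)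
    (hs : ∀ z ∈ ball (0:ℂ) 1, ‖s z‖ < 1/2) :
    ∀ z ∈ ball (0:ℂ) 1, 0 < (h z).re := by
  intro z₁ hz₁
  by_contra hle
  push_neg at hle
  have hz₁1 : ‖z₁‖ < 1 := mem_ball_zero_iff.1 hz₁
  have hsub : closedBall (0:ℂ) (‖z₁‖) ⊆ ball 0 1 := closedBall_subset_ball hz₁1
  have hconth : ∀ z ∈ ball (0:ℂ) 1, ContinuousAt h z := fun z hz =>
    (hh z hz).differentiableAt.continuousAt
  set A : Set ℂ := closedBall 0 (‖z₁‖) ∩ (fun z => (h z).re) ⁻¹' Iic 0 with hA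
  have hclosed : IsClosed A := by
    refine ContinuousOn.preimage_isClosed_of_isClosed ?_ Metric.isClosed_closedBall isClosed_Iic
    exact fun z hz => (Complex.continuous_re.continuousAt.comp (hconth z (hsub hz))).continuousWithinAt
  have hAcomp : IsCompact A :=
    (isCompact_closedBall _ _).of_isClosed_subset hclosed inter_subset_left
  have hz₁A : z₁ ∈ A := ⟨mem_closedBall_zero_iff.2 le_rfl, hle⟩
  obtain ⟨z₀, hz₀A, hz₀min⟩ :=
    hAcomp.exists_isMinOn ⟨z₁, hz₁A⟩ (continuous_norm.continuousOn)
  set r := ‖z₀‖ with hr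
  have hz₀le : (h z₀).re ≤ 0 := hz₀A.2
  have hrz₁ : r ≤ ‖z₁‖ := mem_closedBall_zero_iff.1 hz₀A.1
  have hr1 : r < 1 := lt_of_le_of_lt hrz₁ hz₁1
  have hz₀b : z₀ ∈ ball (0:ℂ) 1 := mem_ball_zero_iff.2 hr1
  have hrpos : 0 < r := by
    rcases (norm_nonneg z₀).lt_or_eq with h1 | h1
    · exact h1
    · exfalso
      have : z₀ = 0 := by
        have := h1.symm
        simpa [norm_eq_zero] using this
      rw [this, h0] at hz₀le
      norm_num at hz₀le
  have hpos : ∀ z, ‖z‖ < r → 0 < (h z).re := by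
    intro z hzr
    by_contra hc
    push_neg at hc
    have hzA : z ∈ A := ⟨mem_closedBall_zero_iff.2 (hzr.le.trans hrz₁), hc⟩
    exact absurd (hz₀min hzA) (not_le.2 hzr)
  have hge : ∀ z, ‖z‖ ≤ r → 0 ≤ (h z).re := by
    intro z hzr
    have hzb : z ∈ ball (0:ℂ) 1 := mem_ball_zero_iff.2 (lt_of_le_of_lt hzr hr1)
    have hcont1 : ContinuousAt (fun u : ℝ => (h ((u:ℂ) * z)).re) 1 := by
      have hinner : ContinuousAt (fun u : ℝ => ((u:ℂ) * z)) 1 := by fun_prop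
      have h2 : ContinuousAt h (((1:ℝ):ℂ) * z) := by
        rw [Complex.ofReal_one, one_mul]; exact hconth z hzb
      have h3 : ContinuousAt (fun u : ℝ => h ((u:ℂ) * z)) 1 :=
        ContinuousAt.comp (g := h) (f := fun u : ℝ => (u:ℂ) * z) (x := 1) h2 hinner
      exact Complex.continuous_re.continuousAt.comp h3
    have htend : Tendsto (fun u : ℝ => (h ((u:ℂ) * z)).re) (nhdsWithin 1 (Iio 1))
        (nhds ((h z).re)) := by
      have h4 := hcont1.tendsto.mono_left (nhdsWithin_le_nhds (s := Iio (1:ℝ)))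
      simpa using h4
    refine ge_of_tendsto htend ?_
    filter_upwards [Ioo_mem_nhdsLT_of_mem (⟨zero_lt_one, le_rfl⟩ : (1:ℝ) ∈ Ioc 0 1)] with u hu
    refine (hpos _ ?_).le
    have : ‖(u:ℂ) * z‖ = u * ‖z‖ := by
      simp [norm_mul, abs_of_pos hu.1]
    rw [this]
    calc u * ‖z‖ ≤ u * r := by nlinarith [hu.1.le]
      _ < r := by nlinarith [hu.2, hrpos]
  have hre0 : (h z₀).re = 0 := le_antisymm hz₀le (hge z₀ le_rfl)
  -- the function ω
  set t : ℝ := (h z₀).im with ht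
  have hhz₀ : h z₀ = (t:ℂ) * I := by
    apply Complex.ext <;> simp [hre0, ht]
  set ω : ℂ → ℂ := fun z => (1 - h z) / (1 + h z) with hωdef
  have hden : ∀ z : ℂ, 0 ≤ (h z).re → 1 + h z ≠ 0 := by
    intro z hz H
    have := congrArg Complex.re H
    simp at this
    linarith
  have habs_lt : ∀ z : ℂ, 0 < (h z).re → ‖ω z‖ < 1 := by
    intro z hz
    have hne : 1 + h z ≠ 0 := hden z hz.le
    have h2 : ‖1 - h z‖ < ‖1 + h z‖ := by
      have h23 : Complex.normSq (1 - h z) < Complex.normSq (1 + h z) := by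
        simp only [Complex.normSq_apply, Complex.sub_re, Complex.sub_im, Complex.add_re,
          Complex.add_im, Complex.one_re, Complex.one_im]
        nlinarith
      have h3 := Real.sqrt_lt_sqrt (Complex.normSq_nonneg _) h23
      rwa [← Complex.norm_def, ← Complex.norm_def] at h3
    simp only [hωdef, norm_div]
    rw [div_lt_one (norm_pos_iff.2 hne)]
    exact h2
  have habs_le : ∀ z : ℂ, 0 ≤ (h z).re → ‖ω z‖ ≤ 1 := by
    intro z hz
    have hne : 1 + h z ≠ 0 := hden z hz
    have h2 : ‖1 - h z‖ ≤ ‖1 + h z‖ := by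
      have h23 : Complex.normSq (1 - h z) ≤ Complex.normSq (1 + h z) := by
        simp only [Complex.normSq_apply, Complex.sub_re, Complex.sub_im, Complex.add_re,
          Complex.add_im, Complex.one_re, Complex.one_im]
        nlinarith
      have h3 := Real.sqrt_le_sqrt h23
      rwa [← Complex.norm_def, ← Complex.norm_def] at h3
    simp only [hωdef, norm_div]
    rw [div_le_one (norm_pos_iff.2 hne)]
    exact h2
  have hω0 : ω 0 = 0 := by simp [hωdef, h0]
  have hωdiff : DifferentiableOn ℂ ω (ball 0 r) := by
    intro z hz
    have hz1 : z ∈ ball (0:ℂ) 1 := ball_subset_ball hr1.le hz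
    have hzr : ‖z‖ < r := mem_ball_zero_iff.1 hz
    have hd1 := ((hh z hz1).const_sub 1).div ((hh z hz1).const_add 1)
      (hden z (hpos z hzr).le)
    exact hd1.differentiableAt.differentiableWithinAt
  have hmaps : Set.MapsTo ω (ball 0 r) (ball (ω 0) 1) := by
    rw [hω0]
    intro z hz
    exact mem_ball_zero_iff.2 (habs_lt z (hpos z (mem_ball_zero_iff.1 hz)))
  have hSchwarz : ∀ z ∈ ball (0:ℂ) r, ‖ω z‖ ≤ ‖z‖ / r := by
    intro z hz
    have := Complex.dist_le_div_mul_dist_of_mapsTo_ball hωdiff (hmaps.mono_right ball_subset_closedBall) hz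
    rw [hω0] at this
    rw [div_eq_inv_mul]
    simpa [Complex.dist_eq, div_mul_eq_mul_div, mul_comm] using this
  set ωd : ℂ := ((-hd z₀) * (1 + h z₀) - (1 - h z₀) * hd z₀) / (1 + h z₀) ^ 2 with hωd
  have hω' : HasDerivAt ω ωd z₀ :=
    ((hh z₀ hz₀b).const_sub 1).div ((hh z₀ hz₀b).const_add 1) (hden z₀ hre0.ge)
  have ht2 : (0:ℝ) < 1 + t^2 := by positivity
  have hnsq : Complex.normSq (ω z₀) = 1 := by
    simp only [hωdef]
    rw [map_div₀, hhz₀]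
    have e1 : Complex.normSq (1 - (t:ℂ)*I) = 1 + t^2 := by
      simp [Complex.normSq_apply]
      ring
    have e2 : Complex.normSq (1 + (t:ℂ)*I) = 1 + t^2 := by
      simp [Complex.normSq_apply]
      ring
    rw [e1, e2, div_self ht2.ne']
  -- tangential direction: D is real
  set W : ℝ → ℂ := fun θ : ℝ => ω (z₀ * Complex.exp ((θ:ℂ) * I)) with hWdef
  have hWd : HasDerivAt W (ωd * (z₀ * I)) 0 := by
    have h1 : HasDerivAt (fun w : ℂ => w * I) I 0 := by
      simpa using (hasDerivAt_id (0:ℂ)).mul_const I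
    have h2 := h1.cexp
    have hinner : HasDerivAt (fun w : ℂ => z₀ * Complex.exp (w * I)) (z₀ * I) 0 := by
      have h3 := h2.const_mul z₀
      simpa using h3
    have hω'' : HasDerivAt ω ωd ((fun w : ℂ => z₀ * Complex.exp (w * I)) 0) := by
      simpa using hω'
    have h4 := HasDerivAt.comp (0:ℂ) hω'' hinner
    have h5 : HasDerivAt (ω ∘ fun w : ℂ => z₀ * Complex.exp (w * I))
        (ωd * (z₀ * I)) (((0:ℝ):ℂ)) := by
      simpa using h4
    have h6 := h5.comp_ofReal
    simpa [hWdef, Function.comp] using h6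
  have hW0 : W 0 = ω z₀ := by simp [hWdef]
  have hcirc : ∀ θ : ℝ, Complex.normSq (W θ) ≤ 1 := by
    intro θ
    have habs : ‖z₀ * Complex.exp ((θ:ℂ) * I)‖ = r := by
      rw [norm_mul, Complex.norm_exp_ofReal_mul_I, mul_one]
    have hge2 : 0 ≤ (h (z₀ * Complex.exp ((θ:ℂ) * I))).re := hge _ habs.le
    have := habs_le _ hge2
    rw [Complex.normSq_eq_norm_sq]
    nlinarith [norm_nonneg (W θ)]
  have hloc : IsLocalMax (fun θ : ℝ => Complex.normSq (W θ)) 0 := by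
    refine Filter.Eventually.of_forall ?_
    intro θ
    simp only
    rw [hW0, hnsq]
    exact hcirc θ
  have hE₁ : 2 * ((W 0).re * (ωd * (z₀ * I)).re + (W 0).im * (ωd * (z₀ * I)).im) = 0 := by
    rw [← (hasDerivAt_normSq_comp hWd).deriv]
    exact hloc.deriv_eq_zero
  set D : ℂ := z₀ * ωd * (starRingEnd ℂ) (ω z₀) with hD
  have hDim : D.im = 0 := by
    rw [hW0] at hE₁
    simp only [hD, Complex.mul_im, Complex.mul_re, Complex.conj_re, Complex.conj_im,
      Complex.I_re, Complex.I_im] at hE₁ ⊢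
    ring_nf at hE₁ ⊢
    linarith
  -- radial direction: D.re ≥ 1
  set w : ℂ := z₀ / (r:ℂ) with hwdef
  have hrC : ((r:ℝ):ℂ) ≠ 0 := by exact_mod_cast hrpos.ne'
  have hcw : ((r:ℝ):ℂ) * w = z₀ := by rw [hwdef]; field_simp
  have hVd : HasDerivAt (fun u : ℝ => ω ((u:ℂ) * w)) (ωd * w) r := by
    have h1 : HasDerivAt (fun v : ℂ => v * w) w (((r:ℝ):ℂ)) := by
      simpa using (hasDerivAt_id (((r:ℝ):ℂ))).mul_const w
    have h2 : HasDerivAt ω ωd ((fun v : ℂ => v * w) ((r:ℝ):ℂ)) := by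
      simp only []
      rw [hcw]
      exact hω'
    have h3 := HasDerivAt.comp (((r:ℝ):ℂ)) h2 h1
    have h4 := h3.comp_ofReal
    simpa [Function.comp] using h4
  set ψd : ℝ := 2 * ((ω z₀).re * (ωd * w).re + (ω z₀).im * (ωd * w).im) with hψddef
  have hψd' : HasDerivAt (fun u : ℝ => Complex.normSq (ω ((u:ℂ) * w))) ψd r := by
    have := hasDerivAt_normSq_comp hVd
    rw [hcw] at this
    exact this
  have hχd : HasDerivAt (fun u : ℝ => Complex.normSq (ω ((u:ℂ) * w)) - u^2/r^2)
      (ψd - 2*r^1/r^2) r := hψd'.sub ((hasDerivAt_pow 2 r).div_const (r^2))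
  have habsw : ‖w‖ = 1 := by
    rw [hwdef, norm_div, Complex.norm_real, Real.norm_eq_abs, abs_of_pos hrpos, ← hr, div_self hrpos.ne']
  have hχle : ∀ u ∈ Ioo (0:ℝ) r, Complex.normSq (ω ((u:ℂ) * w)) - u^2/r^2 ≤ 0 := by
    intro u hu
    have habsu : ‖(u:ℂ) * w‖ = u := by
      rw [norm_mul, habsw, mul_one, Complex.norm_real, Real.norm_eq_abs, abs_of_pos hu.1]
    have hball : ((u:ℂ) * w) ∈ ball (0:ℂ) r := mem_ball_zero_iff.2
      (by rw [show ‖(u:ℂ)*w‖ = ‖(u:ℂ)*w‖ from rfl, habsu]; exact hu.2)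
    have hSch := hSchwarz _ hball
    rw [habsu] at hSch
    have h2 : Complex.normSq (ω ((u:ℂ)*w)) ≤ (u/r)^2 := by
      rw [Complex.normSq_eq_norm_sq]
      exact pow_le_pow_left₀ (norm_nonneg _) hSch 2
    have h3 : (u/r)^2 = u^2/r^2 := by ring
    linarith
  have hχr : Complex.normSq (ω (((r:ℝ):ℂ) * w)) - r^2/r^2 = 0 := by
    rw [hcw, hnsq, div_self (by positivity : (r:ℝ)^2 ≠ 0)]
    ring
  have hslope : Tendsto (slope (fun u : ℝ => Complex.normSq (ω ((u:ℂ) * w)) - u^2/r^2) r)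
      (nhdsWithin r (Iio r)) (nhds (ψd - 2*r^1/r^2)) :=
    (hasDerivAt_iff_tendsto_slope.1 hχd).mono_left
      (nhdsWithin_mono _ (fun x hx => ne_of_lt hx))
  have hψdge : 0 ≤ ψd - 2*r^1/r^2 := by
    refine ge_of_tendsto hslope ?_
    filter_upwards [Ioo_mem_nhdsLT_of_mem (⟨hrpos, le_rfl⟩ : r ∈ Ioc 0 r)] with u hu
    rw [slope_def_field]
    have h1 := hχle u hu
    have h2 : u - r < 0 := sub_neg.2 hu.2
    rw [hχr]
    have h3 : (0:ℝ) ≤ (-(Complex.normSq (ω ((u:ℂ) * w)) - u ^ 2 / r ^ 2)) / (-(u - r)) :=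
      div_nonneg (by linarith) (by linarith)
    rw [neg_div_neg_eq] at h3
    rw [sub_zero]
    exact h3
  have hDre : D.re = r * ((ω z₀).re * (ωd * w).re + (ω z₀).im * (ωd * w).im) := by
    rw [hD, ← hcw]
    simp only [Complex.mul_re, Complex.mul_im, Complex.conj_re, Complex.conj_im,
      Complex.ofReal_re, Complex.ofReal_im]
    ring
  have hDge : 1 ≤ D.re := by
    rw [hDre]
    have h4 : 0 < r^2 := by positivity
    rw [hψddef] at hψdge
    have h5 : 2*r^1/r^2 = 2/r := by
      field_simp
    rw [h5] at hψdge
    have h6 : 2/r ≤ 2 * ((ω z₀).re * (ωd * w).re + (ω z₀).im * (ωd * w).im) := by linarith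
    rw [div_le_iff₀ hrpos] at h6
    nlinarith [h6]
  -- final algebra
  have hkey := key z₀ hz₀b
  have honeP : (1 + (t:ℂ)*I) ≠ 0 := by rw [← hhz₀]; exact hden z₀ hre0.ge
  have honeM : (1 - (t:ℂ)*I) ≠ 0 := by
    intro H
    have := congrArg Complex.re H
    simp at this
  have ht2C : ((1:ℂ) + ((t:ℝ):ℂ)^2) ≠ 0 := by
    have hcast : ((1:ℂ) + ((t:ℝ):ℂ)^2) = (((1+t^2 : ℝ)):ℂ) := by push_cast; ring
    rw [hcast]
    exact_mod_cast ht2.ne'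
  have hconj : (starRingEnd ℂ) (ω z₀) = (1 + (t:ℂ)*I)/(1 - (t:ℂ)*I) := by
    simp only [hωdef]
    rw [hhz₀, map_div₀]
    simp [map_sub, map_add, Complex.conj_I, Complex.conj_ofReal]
    ring_nf
  have hprod : ((1:ℂ) - (t:ℂ)*I) * (1 + (t:ℂ)*I) = 1 + (t:ℂ)^2 := by
    linear_combination (-(t:ℂ)^2) * Complex.I_sq
  have hDval : D = -2 * (z₀ * hd z₀) / (1 + (t:ℂ)^2) := by
    rw [hD, hωd, hconj, hhz₀, ← hprod]
    field_simp
    ring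
  have hzhd : z₀ * hd z₀ = -D * (1+(t:ℂ)^2)/2 := by
    rw [hDval]
    field_simp
  have hs2 : s z₀ = z₀ * hd z₀ - (h z₀)^2 + h z₀ := by linear_combination -hkey
  have hIt : ((t:ℂ)*I)^2 = -((t:ℂ)^2) := by
    linear_combination (t:ℂ)^2 * Complex.I_sq
  have hsz : s z₀ = -D * (1+(t:ℂ)^2)/2 + (t:ℂ)^2 + (t:ℂ)*I := by
    rw [hs2, hzhd, hhz₀]
    linear_combination -hIt
  have hDreal : D = ((D.re:ℝ):ℂ) := by
    have h1 : D.re = ((D.re:ℝ):ℂ).re := by simp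
    have h2 : D.im = ((D.re:ℝ):ℂ).im := by simp [hDim]
    exact Complex.ext h1 h2
  have hsz' : s z₀ = Complex.ofReal (-(D.re*(1+t^2))/2 + t^2) + (t:ℂ)*I := by
    rw [hsz, hDreal]
    push_cast
    simp only [Complex.ofReal_re]
    ring
  have hns : Complex.normSq (s z₀) = (-(D.re*(1+t^2))/2 + t^2)^2 + t^2 := by
    rw [hsz']
    exact Complex.normSq_add_mul_I _ _
  have habss := hs z₀ hz₀b
  have hlt4 : Complex.normSq (s z₀) < 1/4 := by
    rw [Complex.normSq_eq_norm_sq]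
    nlinarith [norm_nonneg (s z₀)]
  have hq := quarter_le (t := t) hDge
  rw [hns] at hlt4
  linarith

/-- **Corollary 2 (ii).** If `f ∈ 𝒜`, `f' ≠ 0` on the disk, and
`|z² f'''/f' − 2 (z f''/f')²| < 1/2` on the disk, then `f` is convex. -/
theorem stmt_7 (f : ℂ → ℂ)
    (hf : AnalyticOnNhd ℂ f (ball (0 : ℂ) 1))
    (hf0 : f 0 = 0) (hf'0 : deriv f 0 = 1)
    (hf'ne : ∀ z ∈ ball (0 : ℂ) 1, deriv f z ≠ 0)
    (hineq : ∀ z ∈ ball (0 : ℂ) 1,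
      ‖z ^ 2 * deriv (deriv (deriv f)) z / deriv f z
        - 2 * (z * deriv (deriv f) z / deriv f z) ^ 2‖ < 1 / 2) :
    ∀ z ∈ ball (0 : ℂ) 1, 0 < (1 + z * deriv (deriv f) z / deriv f z).re := by
  have hk : AnalyticOnNhd ℂ (deriv f) (ball (0:ℂ) 1) := hf.deriv
  have hg : AnalyticOnNhd ℂ (deriv (deriv f)) (ball (0:ℂ) 1) := hk.deriv
  refine jack_main (fun z => 1 + z * deriv (deriv f) z / deriv f z)
    (fun z => ((1 * deriv (deriv f) z + z * deriv (deriv (deriv f)) z) * deriv f z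
        - z * deriv (deriv f) z * deriv (deriv f) z) / (deriv f z)^2)
    (fun z => z ^ 2 * deriv (deriv (deriv f)) z / deriv f z
        - 2 * (z * deriv (deriv f) z / deriv f z) ^ 2) ?_ ?_ ?_ hineq
  · intro z hz
    have hkz : HasDerivAt (deriv f) (deriv (deriv f) z) z :=
      ((hk z hz).differentiableAt).hasDerivAt
    have hgz : HasDerivAt (deriv (deriv f)) (deriv (deriv (deriv f)) z) z :=
      ((hg z hz).differentiableAt).hasDerivAt
    have hn : HasDerivAt (fun w => w * deriv (deriv f) w)
        (1 * deriv (deriv f) z + z * deriv (deriv (deriv f)) z) z :=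
      (hasDerivAt_id z).mul hgz
    exact (hn.div hkz (hf'ne z hz)).const_add 1
  · simp
  · intro z hz
    have h1 := hf'ne z hz
    field_simp
    ring
end

section
/- Let f be analytic on the open unit disk 𝔻 with f(0) = 0 and f'(0) = 1. If |z f''(z) + f'(z) − (f'(z))²| < 1/2 for all z ∈ 𝔻, then Re f'(z) > 0 for all z ∈ 𝔻. -/
open Complex Metric Set Filter

/-- Miller–Mocanu / Jack lemma, tailored form. -/
lemma jack_key (g : ℂ → ℂ) (z₀ : ℂ) (hz₀ : z₀ ≠ 0)
    (hg : ∀ z ∈ closedBall (0:ℂ) ‖z₀‖, DifferentiableAt ℂ g z)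
    (hg0 : g 0 = 1)
    (hre : ∀ z ∈ closedBall (0:ℂ) ‖z₀‖, 0 ≤ (g z).re)
    (hre0 : (g z₀).re = 0) :
    ∃ k : ℝ, 1 ≤ k ∧ z₀ * deriv g z₀ = (k : ℂ) * ((g z₀)^2 - 1) / 2 := by
  set r : ℝ := ‖z₀‖ with hr
  have hrpos : 0 < r := norm_pos_iff.2 hz₀
  -- the Möbius transform
  set w : ℂ → ℂ := fun z => (g z - 1) / (g z + 1) with hw
  have hne : ∀ z ∈ closedBall (0:ℂ) r, g z + 1 ≠ 0 := by
    intro z hz h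
    have := hre z hz
    have : (g z + 1).re = (g z).re + 1 := by simp
    rw [h] at this
    simp at this
    linarith [hre z hz]
  -- differentiability of w, with derivative formula
  have hwd : ∀ z ∈ closedBall (0:ℂ) r,
      HasDerivAt w (2 * deriv g z / (g z + 1)^2) z := by
    intro z hz
    have hgz : HasDerivAt g (deriv g z) z := (hg z hz).hasDerivAt
    have := ((hgz.sub_const 1).div (hgz.add_const 1) (hne z hz))
    exact this.congr_deriv (by ring)
  -- |w| ≤ 1 on the closed ball
  have habs : ∀ z ∈ closedBall (0:ℂ) r, ‖w z‖ ≤ 1 := by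
    intro z hz
    rw [hw]
    simp only [norm_div]
    rw [div_le_one (norm_pos_iff.2 (hne z hz))]
    · have : Complex.normSq (g z - 1) ≤ Complex.normSq (g z + 1) := by
        simp [Complex.normSq_apply]
        nlinarith [hre z hz]
      have h2 := Real.sqrt_le_sqrt this
      rw [Complex.norm_def, Complex.norm_def]; exact h2
  -- |w z₀| = 1
  have habs0 : ‖w z₀‖ = 1 := by
    rw [hw]
    simp only [norm_div]
    rw [div_eq_one_iff_eq (by
      exact ((norm_pos_iff.2 (hne z₀ (by simp [hr]))).ne'))]
    have : Complex.normSq (g z₀ - 1) = Complex.normSq (g z₀ + 1) := by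
      simp [Complex.normSq_apply]
      nlinarith [hre0]
    rw [Complex.norm_def, Complex.norm_def, this]
  have hw0 : w 0 = 0 := by simp [hw, hg0]
  -- Schwarz lemma: ‖w (t z₀)‖ ≤ t for t ∈ [0, 1]
  have hdiffOn : DifferentiableOn ℂ w (ball (0:ℂ) r) := fun z hz =>
    ((hwd z (ball_subset_closedBall hz)).differentiableAt).differentiableWithinAt
  have hschwarz : ∀ t : ℝ, 0 ≤ t → t ≤ 1 → ‖w ((t:ℂ) * z₀)‖ ≤ t := by
    intro t ht0 ht1
    rcases eq_or_lt_of_le ht1 with rfl | ht1'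
    · simpa using habs z₀ (by simp [hr])
    have hmem : (t:ℂ) * z₀ ∈ ball (0:ℂ) r := by
      simp only [mem_ball, dist_zero_right, norm_mul, Complex.norm_real,
        Real.norm_eq_abs, _root_.abs_of_nonneg ht0]
      calc t * ‖z₀‖ < 1 * ‖z₀‖ := by
              exact mul_lt_mul_of_pos_right ht1' hrpos
        _ = r := one_mul r
    have key : ∀ R₂ : ℝ, 1 < R₂ → ‖w ((t:ℂ) * z₀)‖ ≤ R₂ / r * (t * r) := by
      intro R₂ hR₂
      have hmaps : Set.MapsTo w (ball (0:ℂ) r) (closedBall (w 0) R₂) := by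
        intro z hz
        rw [hw0]
        simp only [mem_closedBall, dist_zero_right]
        exact le_trans (habs z (ball_subset_closedBall hz)) hR₂.le
      have := Complex.dist_le_div_mul_dist_of_mapsTo_ball hdiffOn hmaps hmem
      rw [hw0] at this
      have h2 : ‖w ((t:ℂ) * z₀)‖ ≤ R₂ / r * ‖(t:ℂ) * z₀‖ := by
        simpa [dist_zero_right] using this
      rw [norm_mul, Complex.norm_real, Real.norm_eq_abs, _root_.abs_of_nonneg ht0] at h2
      exact h2
    have hlim : Filter.Tendsto (fun R₂ : ℝ => R₂ / r * (t * r)) (nhdsWithin 1 (Ioi 1))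
        (nhds (1 / r * (t * r))) := by
      apply Filter.Tendsto.mono_left _ nhdsWithin_le_nhds
      exact ((continuous_id.div_const r).mul continuous_const).tendsto 1
    have hle := ge_of_tendsto hlim (eventually_nhdsWithin_of_forall
      (fun R₂ (hR₂ : R₂ ∈ Ioi 1) => key R₂ hR₂))
    calc ‖w ((t:ℂ) * z₀)‖ ≤ 1 / r * (t * r) := hle
      _ = t := by field_simp
  -- the quantity A = z₀ w'(z₀) conj(w z₀)
  have hwz₀mem : z₀ ∈ closedBall (0:ℂ) r := by simp [hr]
  have hwdz₀ := hwd z₀ hwz₀mem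
  set A : ℂ := z₀ * deriv w z₀ * (starRingEnd ℂ) (w z₀) with hA
  -- angular derivative: Im A = 0
  have hAim : A.im = 0 := by
    set c : ℝ → ℂ := fun θ => z₀ * Complex.exp ((θ:ℂ) * I) with hc
    have hcd : HasDerivAt c (z₀ * I) 0 := by
      have h1 : HasDerivAt (fun θ : ℝ => ((θ:ℂ) * I)) ((1:ℂ) * I) 0 :=
        (Complex.ofRealCLM.hasDerivAt).mul_const I
      have h2 := h1.cexp
      have h3 := h2.const_mul z₀
      simpa using h3
    have hc0 : c 0 = z₀ := by simp [hc]
    have hcnorm : ∀ θ : ℝ, c θ ∈ closedBall (0:ℂ) r := by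
      intro θ
      simp [hc, mem_closedBall, dist_zero_right, norm_mul, Complex.norm_exp_ofReal_mul_I, hr]
    have hwc : HasDerivAt (fun θ : ℝ => w (c θ)) (deriv w z₀ * (z₀ * I)) 0 := by
      have hwd' : HasDerivAt w (deriv w z₀) z₀ := hwdz₀.differentiableAt.hasDerivAt
      have hF := hwd'.hasFDerivAt.restrictScalars ℝ
      have hF' : HasFDerivAt w (ContinuousLinearMap.restrictScalars ℝ
          (ContinuousLinearMap.smulRight (1 : ℂ →L[ℂ] ℂ) (deriv w z₀))) (c 0) := hc0.symm ▸ hF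
      have h4 := hF'.comp_hasDerivAt 0 hcd
      simpa [mul_comm, Function.comp_def] using h4
    have hWre : HasDerivAt (fun θ : ℝ => (w (c θ)).re) ((deriv w z₀ * (z₀ * I)).re) 0 :=
      (Complex.reCLM.hasFDerivAt.comp_hasDerivAt 0 hwc)
    have hWim : HasDerivAt (fun θ : ℝ => (w (c θ)).im) ((deriv w z₀ * (z₀ * I)).im) 0 :=
      (Complex.imCLM.hasFDerivAt.comp_hasDerivAt 0 hwc)
    set E : ℂ := deriv w z₀ * (z₀ * I) with hE
    have hφ : HasDerivAt (fun θ : ℝ => Complex.normSq (w (c θ)))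
        (E.re * (w z₀).re + (w z₀).re * E.re + (E.im * (w z₀).im + (w z₀).im * E.im)) 0 := by
      have h5 := (hWre.mul hWre).add (hWim.mul hWim)
      rw [hc0] at h5
      simpa [Complex.normSq_apply, Pi.mul_def, Pi.add_def] using h5
    have hmax : IsLocalMax (fun θ : ℝ => Complex.normSq (w (c θ))) 0 := by
      apply Filter.Eventually.of_forall
      intro θ
      have h6 : ‖w (c θ)‖ ≤ 1 := habs _ (hcnorm θ)
      have h7 : Complex.normSq (w (c 0)) = 1 := by
        rw [hc0, ← Complex.sq_norm, habs0]; norm_num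
      calc Complex.normSq (w (c θ)) = (‖w (c θ)‖)^2 := (Complex.sq_norm _).symm
        _ ≤ 1^2 := by
            apply pow_le_pow_left₀ (norm_nonneg _) h6
        _ = Complex.normSq (w (c 0)) := by rw [h7]; norm_num
    have h8 := hmax.deriv_eq_zero
    rw [hφ.deriv] at h8
    have h9 : ((starRingEnd ℂ) (w z₀) * E).re = 0 := by
      rw [Complex.mul_re]
      simp only [Complex.conj_re, Complex.conj_im]
      linarith
    have h10 : (starRingEnd ℂ) (w z₀) * E = A * I := by rw [hE, hA]; ring
    rw [h10] at h9
    simpa using h9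
  -- radial derivative: Re A ≥ 1
  have hAre : 1 ≤ A.re := by
    set c : ℝ → ℂ := fun t => (t:ℂ) * z₀ with hc
    have hcd : HasDerivAt c z₀ 1 := by
      have h1 := (Complex.ofRealCLM.hasDerivAt (x := (1:ℝ))).mul_const z₀
      simpa using h1
    have hc1 : c 1 = z₀ := by simp [hc]
    have hwc : HasDerivAt (fun t : ℝ => w (c t)) (deriv w z₀ * z₀) 1 := by
      have hwd' : HasDerivAt w (deriv w z₀) z₀ := hwdz₀.differentiableAt.hasDerivAt
      have hF := hwd'.hasFDerivAt.restrictScalars ℝ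
      have hF' : HasFDerivAt w (ContinuousLinearMap.restrictScalars ℝ
          (ContinuousLinearMap.smulRight (1 : ℂ →L[ℂ] ℂ) (deriv w z₀))) (c 1) := hc1.symm ▸ hF
      have h4 := hF'.comp_hasDerivAt 1 hcd
      simpa [mul_comm, Function.comp_def] using h4
    have hWre : HasDerivAt (fun t : ℝ => (w (c t)).re) ((deriv w z₀ * z₀).re) 1 :=
      (Complex.reCLM.hasFDerivAt.comp_hasDerivAt 1 hwc)
    have hWim : HasDerivAt (fun t : ℝ => (w (c t)).im) ((deriv w z₀ * z₀).im) 1 :=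
      (Complex.imCLM.hasFDerivAt.comp_hasDerivAt 1 hwc)
    set E : ℂ := deriv w z₀ * z₀ with hE
    set D : ℝ := E.re * (w z₀).re + (w z₀).re * E.re + (E.im * (w z₀).im + (w z₀).im * E.im)
      - 2 with hD
    set h : ℝ → ℝ := fun t => Complex.normSq (w (c t)) - t^2 with hh
    have hhd : HasDerivAt h D 1 := by
      have h5 := ((hWre.mul hWre).add (hWim.mul hWim)).sub
        (hasDerivAt_pow 2 (1:ℝ))
      rw [hc1] at h5
      simpa [hh, Complex.normSq_apply, Pi.mul_def, Pi.add_def, Pi.sub_def] using h5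
    have hneg : ∀ t ∈ Ioo (0:ℝ) 1, h t ≤ 0 := by
      intro t ht
      have h6 := hschwarz t ht.1.le ht.2.le
      have : Complex.normSq (w ((t:ℂ) * z₀)) ≤ t^2 := by
        rw [← Complex.sq_norm]
        exact pow_le_pow_left₀ (norm_nonneg _) h6 2
      simpa [hh, hc] using this
    have hzero : h 1 = 0 := by
      simp only [hh, hc1]
      rw [← Complex.sq_norm, habs0]
      norm_num
    have hDpos : 0 ≤ D := by
      have hslope := hasDerivAt_iff_tendsto_slope.mp hhd
      have h2 : Filter.Tendsto (slope h 1) (nhdsWithin 1 (Iio 1)) (nhds D) :=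
        hslope.mono_left (nhdsWithin_mono 1 (fun x hx => ne_of_lt hx))
      refine ge_of_tendsto h2 ?_
      filter_upwards [Ioo_mem_nhdsLT_of_mem (by norm_num : (1:ℝ) ∈ Ioc 0 1)] with t ht
      rw [slope_def_field, hzero]
      have h7 : h t ≤ 0 := hneg t ht
      have h8 : t - 1 < 0 := by linarith [ht.2]
      rw [sub_zero]
      rw [div_nonneg_iff]
      exact Or.inr ⟨h7, h8.le⟩
    have h9 : ((starRingEnd ℂ) (w z₀) * E).re = A.re := by
      have : (starRingEnd ℂ) (w z₀) * E = A := by rw [hE, hA]; ring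
      rw [this]
    rw [Complex.mul_re] at h9
    simp only [Complex.conj_re, Complex.conj_im] at h9
    rw [hD] at hDpos
    linarith
  -- assemble
  refine ⟨A.re, hAre, ?_⟩
  have hAeq : (A.re : ℂ) = A := by
    apply Complex.ext <;> simp [hAim]
  have hnsq : (starRingEnd ℂ) (w z₀) * w z₀ = 1 := by
    rw [mul_comm, Complex.mul_conj]
    rw [← Complex.sq_norm, habs0]
    norm_num
  have key : z₀ * deriv w z₀ = A * w z₀ := by
    rw [hA]
    calc z₀ * deriv w z₀ = z₀ * deriv w z₀ * ((starRingEnd ℂ) (w z₀) * w z₀) := by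
          rw [hnsq, mul_one]
      _ = z₀ * deriv w z₀ * (starRingEnd ℂ) (w z₀) * w z₀ := by ring
  have hne0 := hne z₀ hwz₀mem
  have key2 : z₀ * (2 * deriv g z₀ / (g z₀ + 1)^2) = (A.re : ℂ) * ((g z₀ - 1)/(g z₀ + 1)) := by
    rw [hAeq, ← hwdz₀.deriv]
    exact key
  field_simp at key2 ⊢
  have key3 : (z₀ * (2 * deriv g z₀)) * (g z₀ + 1) = ((A.re : ℂ) * (g z₀ - 1) * (g z₀ + 1)) * (g z₀ + 1) := by
    linear_combination (g z₀ + 1) * key2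
  have key4 := mul_right_cancel₀ hne0 key3
  linear_combination key4

/-- **Corollary 2 (iii).** If `f ∈ 𝒜` and `|z f'' + f' − (f')²| < 1/2` on the disk,
then `Re f'(z) > 0` on the disk. -/
theorem stmt_8 (f : ℂ → ℂ)
    (hf : AnalyticOnNhd ℂ f (ball (0 : ℂ) 1))
    (hf0 : f 0 = 0) (hf'0 : deriv f 0 = 1)
    (hineq : ∀ z ∈ ball (0 : ℂ) 1,
      ‖z * deriv (deriv f) z + deriv f z - (deriv f z) ^ 2‖ < 1 / 2) :
    ∀ z ∈ ball (0 : ℂ) 1, 0 < (deriv f z).re := by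
  by_contra hcon
  push_neg at hcon
  obtain ⟨z₁, hz₁, hz₁le⟩ := hcon
  set g : ℂ → ℂ := deriv f with hgdef
  have hg : AnalyticOnNhd ℂ g (ball (0:ℂ) 1) := hf.deriv
  have hgd : ∀ z ∈ ball (0:ℂ) 1, DifferentiableAt ℂ g z :=
    fun z hz => (hg z hz).differentiableAt
  have hs : ‖z₁‖ < 1 := by simpa [mem_ball, dist_zero_right] using hz₁
  set K : Set ℂ := closedBall 0 ‖z₁‖ ∩ (fun z => (g z).re) ⁻¹' (Iic 0) with hK
  have hKsub : K ⊆ ball (0:ℂ) 1 := fun z hz =>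
    (closedBall_subset_ball hs) hz.1
  have hKclosed : IsClosed K := by
    apply ContinuousOn.preimage_isClosed_of_isClosed _ Metric.isClosed_closedBall isClosed_Iic
    apply Complex.continuous_re.comp_continuousOn
    intro z hz
    exact ((hgd z ((closedBall_subset_ball hs) hz)).continuousAt).continuousWithinAt
  have hKcompact : IsCompact K :=
    (isCompact_closedBall (0:ℂ) ‖z₁‖).of_isClosed_subset hKclosed inter_subset_left
  have hKne : K.Nonempty := ⟨z₁, by simp [hK], hz₁le⟩
  obtain ⟨z₀, hz₀K, hz₀min⟩ := hKcompact.exists_isMinOn hKne continuous_norm.continuousOn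
  have hz₀min' : ∀ z ∈ K, ‖z₀‖ ≤ ‖z‖ := fun z hz => hz₀min hz
  have hz₀norm : ‖z₀‖ < 1 := by
    have := hz₀K.1
    simp only [mem_closedBall, dist_zero_right] at this
    linarith
  have hg0 : g 0 = 1 := hf'0
  have hz₀ne : z₀ ≠ 0 := by
    intro h
    have := hz₀K.2
    rw [h] at this
    simp [hg0] at this
    linarith
  have hinner : ∀ z : ℂ, ‖z‖ < ‖z₀‖ → 0 < (g z).re := by
    intro z hlt
    by_contra hle
    push_neg at hle
    have hzK : z ∈ K := by
      constructor
      · simp only [mem_closedBall, dist_zero_right]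
        have : ‖z₀‖ ≤ ‖z₁‖ := by
          have := hz₀K.1
          simpa [mem_closedBall, dist_zero_right] using this
        linarith
      · exact hle
    exact absurd (hz₀min' z hzK) (not_le.2 hlt)
  have hre : ∀ z ∈ closedBall (0:ℂ) ‖z₀‖, 0 ≤ (g z).re := by
    intro z hzb
    by_contra hneg
    push_neg at hneg
    simp only [mem_closedBall, dist_zero_right] at hzb
    rcases lt_or_eq_of_le hzb with hlt | heq
    · linarith [hinner z hlt]
    · have hzball : z ∈ ball (0:ℂ) 1 := by
        simp only [mem_ball, dist_zero_right]
        rw [heq]; exact hz₀norm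
      have hcont : ContinuousAt (fun t : ℝ => (g ((t:ℂ) * z)).re) 1 := by
        have h1 : ContinuousAt (fun t : ℝ => (t:ℂ) * z) 1 :=
          (Complex.continuous_ofReal.mul continuous_const).continuousAt
        have h2 : ContinuousAt g (((1:ℝ):ℂ) * z) := by
          simpa using (hgd z hzball).continuousAt
        have h3 : ContinuousAt (fun t : ℝ => g ((t:ℂ) * z)) 1 :=
          ContinuousAt.comp (f := fun t : ℝ => (t:ℂ) * z) (x := (1:ℝ)) h2 h1
        exact (Complex.continuous_re.continuousAt).comp h3
      have hev : ∀ᶠ t : ℝ in nhds (1:ℝ), (g ((t:ℂ) * z)).re < 0 :=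
        Filter.Tendsto.eventually_lt_const (by simpa using hneg) hcont
      have hev2 : ∀ᶠ t : ℝ in nhdsWithin (1:ℝ) (Iio 1),
          (g ((t:ℂ) * z)).re < 0 ∧ t ∈ Ioo (0:ℝ) 1 :=
        (hev.filter_mono nhdsWithin_le_nhds).and
          (Ioo_mem_nhdsLT_of_mem (by norm_num : (1:ℝ) ∈ Ioc 0 1))
      obtain ⟨t, htneg, ht0, ht1⟩ := hev2.exists
      have hzne : z ≠ 0 := by
        intro h
        rw [h, norm_zero] at heq
        exact hz₀ne (norm_eq_zero.1 heq.symm)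
      have hnorm : ‖(t:ℂ) * z‖ < ‖z₀‖ := by
        rw [norm_mul, Complex.norm_real, Real.norm_eq_abs, _root_.abs_of_nonneg ht0.le, ← heq]
        nlinarith [norm_pos_iff.2 hzne]
      linarith [hinner _ hnorm]
  have hre0 : (g z₀).re = 0 :=
    le_antisymm hz₀K.2 (hre z₀ (by simp))
  have hgdball : ∀ z ∈ closedBall (0:ℂ) ‖z₀‖, DifferentiableAt ℂ g z :=
    fun z hz => hgd z ((closedBall_subset_ball hz₀norm) hz)
  obtain ⟨k, hk, hkey⟩ := jack_key g z₀ hz₀ne hgdball hg0 hre hre0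
  have hball : z₀ ∈ ball (0:ℂ) 1 := by
    simp only [mem_ball, dist_zero_right]; exact hz₀norm
  have hlt := hineq z₀ hball
  set y : ℝ := (g z₀).im with hy'
  have hy : g z₀ = (y:ℝ) * I := by
    apply Complex.ext <;> simp [hre0, hy']
  have hEval : z₀ * deriv g z₀ + g z₀ - (g z₀)^2
      = ((k * (-(y^2) - 1)/2 + y^2 : ℝ) : ℂ) + (y:ℝ) * I := by
    have h0 : z₀ * deriv g z₀ = (k : ℂ) * ((g z₀)^2 - 1) / 2 := hkey
    rw [h0, hy]
    push_cast
    linear_combination ((y:ℂ)^2*((k:ℂ)/2-1)) * Complex.I_sq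
  rw [hEval] at hlt
  have h2 : (‖(((k * (-(y^2) - 1)/2 + y^2 : ℝ) : ℂ) + (y:ℝ) * I)‖)^2
      < (1/2)^2 := by
    apply pow_lt_pow_left₀ hlt (norm_nonneg _)
    norm_num
  rw [Complex.sq_norm, Complex.normSq_apply] at h2
  simp only [Complex.add_re, Complex.ofReal_re, Complex.mul_re, Complex.ofReal_im,
    Complex.I_re, Complex.I_im, Complex.add_im, Complex.mul_im] at h2
  ring_nf at h2
  nlinarith [sq_nonneg (y^2 - 1), sq_nonneg y, sq_nonneg (k - 1),
    mul_nonneg (sub_nonneg.2 hk) (sq_nonneg y), sq_nonneg ((k-1)*(y^2+1) - (y^2-1)),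
    sq_nonneg (k*(y^2+1) - 2*y^2), sq_nonneg (y^2+1)]
end

section
/- Let f be analytic on the open unit disk 𝔻 with f(0) = 0 and f'(0) = 1. If |f'(z) − (f(z)/z)²| < 1/2 for all z ∈ 𝔻 \ {0}, then Re(f(z)/z) > 0 for all z ∈ 𝔻 \ {0}. -/
open Complex Metric Set Filter Topology

private lemma aux_ne (u : ℂ) (h : 0 ≤ u.re) : (1 : ℂ) + u ≠ 0 := by
  intro H
  have := congrArg Complex.re H
  simp [Complex.add_re] at this
  linarith

private lemma aux_abs_lt (u : ℂ) (h : 0 < u.re) :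
    ‖1 - u‖ < ‖1 + u‖ := by
  apply lt_of_pow_lt_pow_left₀ 2 (norm_nonneg _)
  rw [Complex.sq_norm, Complex.sq_norm]
  simp only [Complex.normSq_apply, Complex.sub_re, Complex.add_re, Complex.sub_im,
    Complex.add_im, Complex.one_re, Complex.one_im]
  nlinarith

private lemma aux_quad (y l : ℝ) (hl : 1 ≤ l) :
    (1:ℝ)/4 ≤ (y^2 - (1+y^2)*l/2)^2 + y^2 := by
  rcases le_or_gt (y^2) 1 with h | h
  · have h1 : (1-y^2)/2 ≤ (1+y^2)*l/2 - y^2 := by nlinarith [sq_nonneg y]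
    have h2 : (0:ℝ) ≤ (1-y^2)/2 := by linarith
    nlinarith [mul_self_le_mul_self h2 h1, sq_nonneg (y^2)]
  · nlinarith [sq_nonneg (y^2 - (1+y^2)*l/2)]

private lemma aux_abs_le (u : ℂ) (h : 0 ≤ u.re) :
    ‖1 - u‖ ≤ ‖1 + u‖ := by
  apply le_of_pow_le_pow_left₀ two_ne_zero (norm_nonneg _)
  rw [Complex.sq_norm, Complex.sq_norm]
  simp only [Complex.normSq_apply, Complex.sub_re, Complex.add_re, Complex.sub_im,
    Complex.add_im, Complex.one_re, Complex.one_im]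
  nlinarith

set_option maxHeartbeats 2000000 in
/-- **Corollary 2 (iv).** If `f ∈ 𝒜` and `|f' − (f/z)²| < 1/2` on the punctured disk,
then `Re (f(z)/z) > 0` on the punctured disk. -/
theorem stmt_9 (f : ℂ → ℂ)
    (hf : AnalyticOnNhd ℂ f (ball (0 : ℂ) 1))
    (hf0 : f 0 = 0) (hf'0 : deriv f 0 = 1)
    (hineq : ∀ z ∈ ball (0 : ℂ) 1, z ≠ 0 →
      ‖deriv f z - (f z / z) ^ 2‖ < 1 / 2) :
    ∀ z ∈ ball (0 : ℂ) 1, z ≠ 0 → 0 < (f z / z).re := by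
  set g := dslope f 0 with hgdef
  have hg : DifferentiableOn ℂ g (ball 0 1) :=
    (differentiableOn_dslope (ball_mem_nhds 0 one_pos)).mpr hf.differentiableOn
  have hg0 : g 0 = 1 := by rw [hgdef, dslope_same, hf'0]
  have hgz : ∀ z : ℂ, z ≠ 0 → g z = f z / z := by
    intro z hz
    rw [hgdef, dslope_of_ne _ hz, slope_def_field, hf0, sub_zero, sub_zero]
  suffices main : ∀ z ∈ ball (0 : ℂ) 1, 0 < (g z).re by
    intro z hz hz0
    rw [← hgz z hz0]
    exact main z hz
  by_contra hcon
  push_neg at hcon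
  obtain ⟨z₁, hz₁, hz₁re⟩ := hcon
  rw [mem_ball_zero_iff] at hz₁
  set R := ‖z₁‖ with hR
  set S : Set ℂ := closedBall (0 : ℂ) R ∩ g ⁻¹' {w : ℂ | w.re ≤ 0} with hS
  have hRball : closedBall (0 : ℂ) R ⊆ ball (0 : ℂ) 1 := closedBall_subset_ball hz₁
  have hScl : IsClosed S :=
    (hg.continuousOn.mono hRball).preimage_isClosed_of_isClosed Metric.isClosed_closedBall
      (isClosed_le Complex.continuous_re continuous_const)
  have hz₁S : z₁ ∈ S := by
    refine ⟨?_, hz₁re⟩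
    rw [mem_closedBall, dist_zero_right]
  have hScp : IsCompact S := (isCompact_closedBall _ _).of_isClosed_subset hScl inter_subset_left
  obtain ⟨z₀, hz₀S, hz₀min⟩ := hScp.exists_isMinOn ⟨z₁, hz₁S⟩ continuous_norm.continuousOn
  set r := ‖z₀‖ with hr
  have hrR : r ≤ R := by
    have := hz₀S.1
    rwa [mem_closedBall, dist_zero_right] at this
  have hr1 : r < 1 := lt_of_le_of_lt hrR hz₁
  have hz₀re : (g z₀).re ≤ 0 := hz₀S.2
  have hr0 : 0 < r := by
    rcases (norm_nonneg z₀).lt_or_eq with h | h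
    · exact h
    · exfalso
      have : z₀ = 0 := by simpa using h.symm
      rw [this, hg0] at hz₀re
      norm_num at hz₀re
  have hz₀ne : z₀ ≠ 0 := by
    intro h; rw [h] at hr; simp [hr] at hr0
  have hz₀ball1 : z₀ ∈ ball (0 : ℂ) 1 := by rwa [mem_ball_zero_iff]
  -- interior positivity
  have hpos : ∀ w : ℂ, ‖w‖ < r → 0 < (g w).re := by
    intro w hw
    by_contra hle
    push_neg at hle
    have hwS : w ∈ S := by
      refine ⟨?_, hle⟩
      rw [mem_closedBall, dist_zero_right]
      exact le_of_lt (lt_of_lt_of_le hw hrR)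
    have hmin := isMinOn_iff.mp hz₀min w hwS
    exact absurd (lt_of_le_of_lt hmin hw) (lt_irrefl _)
  -- boundary nonnegativity
  have hnn : ∀ w : ℂ, ‖w‖ = r → 0 ≤ (g w).re := by
    intro w hw
    by_contra hlt
    push_neg at hlt
    have hwball : w ∈ ball (0 : ℂ) 1 := by rw [mem_ball_zero_iff, hw]; exact hr1
    have hgc : ContinuousAt g w :=
      (hg.differentiableAt (isOpen_ball.mem_nhds hwball)).continuousAt
    have hmc : ContinuousAt (fun t : ℝ => g ((t : ℂ) * w)) 1 := by
      apply ContinuousAt.comp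
      · show ContinuousAt g (((1:ℝ):ℂ) * w); rw [Complex.ofReal_one, one_mul]; exact hgc
      · exact (Complex.continuous_ofReal.mul continuous_const).continuousAt
    have hev : ∀ᶠ t : ℝ in 𝓝 1, (g ((t : ℂ) * w)).re < 0 := by
      have : ContinuousAt (fun t : ℝ => (g ((t : ℂ) * w)).re) 1 :=
        Complex.continuous_re.continuousAt.comp hmc
      have h1 : (fun t : ℝ => (g ((t : ℂ) * w)).re) 1 < 0 := by simpa using hlt
      exact this.eventually_lt_const (by simpa using hlt)
    have hev' : ∀ᶠ t : ℝ in 𝓝[<] (1:ℝ), (g ((t : ℂ) * w)).re < 0 :=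
      hev.filter_mono nhdsWithin_le_nhds
    have hIoo : Set.Ioo (0:ℝ) 1 ∈ 𝓝[<] (1:ℝ) := Ioo_mem_nhdsLT_of_mem ⟨zero_lt_one, le_refl _⟩
    obtain ⟨t, htneg, ht01⟩ := (hev'.and (eventually_mem_set.mpr hIoo)).exists
    have hnorm : ‖(t : ℂ) * w‖ < r := by
      rw [norm_mul, Complex.norm_real, Real.norm_eq_abs, abs_of_pos ht01.1, hw]
      nlinarith [ht01.2, hr0]
    exact absurd (hpos _ hnorm) (not_lt.mpr htneg.le)
  have hre0 : (g z₀).re = 0 := le_antisymm hz₀re (hnn z₀ rfl)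
  have hler : ∀ w : ℂ, ‖w‖ ≤ r → 0 ≤ (g w).re := by
    intro w hw
    rcases hw.lt_or_eq with h | h
    · exact (hpos w h).le
    · exact hnn w h
  -- the Möbius transform
  set W : ℂ → ℂ := fun z => (1 - g z) / (1 + g z) with hWdef
  have hW0 : W 0 = 0 := by simp [hWdef, hg0]
  have hballr : ball (0 : ℂ) r ⊆ ball (0 : ℂ) 1 := ball_subset_ball hr1.le
  have hWd : DifferentiableOn ℂ W (ball (0 : ℂ) r) := by
    apply DifferentiableOn.div
    · exact (differentiableOn_const _).sub (hg.mono hballr)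
    · exact (differentiableOn_const _).add (hg.mono hballr)
    · intro z hz
      exact aux_ne _ (hpos z (mem_ball_zero_iff.mp hz)).le
  have hWmaps : MapsTo W (ball (0 : ℂ) r) (ball (W 0) 1) := by
    rw [hW0]
    intro z hz
    rw [mem_ball_zero_iff, hWdef]
    have h1 : 0 < (g z).re := hpos z (mem_ball_zero_iff.mp hz)
    have h2 : (1 : ℂ) + g z ≠ 0 := aux_ne _ h1.le
    rw [norm_div, div_lt_one (norm_pos_iff.mpr h2)]
    exact aux_abs_lt _ h1
  have hSch : ∀ z ∈ ball (0 : ℂ) r, ‖W z‖ ≤ ‖z‖ / r := by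
    intro z hz
    have := Complex.dist_le_div_mul_dist_of_mapsTo_ball hWd (hWmaps.mono_right ball_subset_closedBall) hz
    rw [hW0, dist_zero_right, dist_zero_right] at this
    calc ‖W z‖ ≤ 1 / r * ‖z‖ := this
    _ = ‖z‖ / r := by ring
  -- |W z| ≤ 1 on the closed ball of radius r
  have hWle1 : ∀ z : ℂ, ‖z‖ ≤ r → ‖W z‖ ≤ 1 := by
    intro z hz
    have h1 : 0 ≤ (g z).re := hler z hz
    have h2 : (1 : ℂ) + g z ≠ 0 := aux_ne _ h1
    rw [hWdef]
    simp only
    rw [norm_div, div_le_one (norm_pos_iff.mpr h2)]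
    exact aux_abs_le _ h1
  -- facts at z₀
  have hne₀ : (1 : ℂ) + g z₀ ≠ 0 := aux_ne _ (le_of_eq hre0.symm)
  have hgd₀ : DifferentiableAt ℂ g z₀ := hg.differentiableAt (isOpen_ball.mem_nhds hz₀ball1)
  set w₀ : ℂ := W z₀ with hw₀def
  have hnsq_num : Complex.normSq (1 - g z₀) = Complex.normSq (1 + g z₀) := by
    simp only [Complex.normSq_apply, Complex.sub_re, Complex.add_re, Complex.sub_im,
      Complex.add_im, Complex.one_re, Complex.one_im]
    rw [hre0]; ring
  have habs₀ : ‖w₀‖ = 1 := by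
    rw [hw₀def, hWdef]
    simp only
    rw [norm_div]
    have h3 : ‖1 - g z₀‖ = ‖1 + g z₀‖ := by
      rw [Complex.norm_def, Complex.norm_def, hnsq_num]
    rw [h3]
    exact div_self (norm_ne_zero_iff.mpr hne₀)
  have hnsq₀ : Complex.normSq w₀ = 1 := by
    rw [← Complex.sq_norm, habs₀]; norm_num
  -- derivative of W at z₀
  set D : ℂ := -2 * deriv g z₀ / (1 + g z₀) ^ 2 with hDdef
  have hWD : HasDerivAt W D z₀ := by
    have h1 : HasDerivAt g (deriv g z₀) z₀ := hgd₀.hasDerivAt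
    have h2 : HasDerivAt (fun z => (1 : ℂ) - g z) (-deriv g z₀) z₀ := h1.const_sub 1
    have h3 : HasDerivAt (fun z => (1 : ℂ) + g z) (deriv g z₀) z₀ := h1.const_add 1
    have h4 := h2.div h3 hne₀
    refine h4.congr_deriv ?_
    rw [hDdef]
    congr 1
    ring
  -- radial derivative estimate
  set lam : ℂ := (starRingEnd ℂ) w₀ * (D * z₀) with hlamdef
  have key1 : 1 ≤ lam.re := by
    have hu : HasDerivAt (fun s : ℂ => W (s * z₀)) (D * z₀) 1 := by
      have hinner : HasDerivAt (fun s : ℂ => s * z₀) z₀ 1 := hasDerivAt_mul_const z₀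
      have houter : HasDerivAt W D ((1 : ℂ) * z₀) := by rwa [one_mul]
      exact houter.comp 1 hinner
    have hu' : HasDerivAt (fun t : ℝ => W ((t : ℂ) * z₀)) (D * z₀) 1 := by
      have := hu.comp_ofReal (z := (1 : ℝ))
      simpa using this
    have hv : HasDerivAt (fun t : ℝ => (starRingEnd ℂ) w₀ * W ((t : ℂ) * z₀))
        ((starRingEnd ℂ) w₀ * (D * z₀)) 1 := hu'.const_mul _
    have hφ : HasDerivAt (fun t : ℝ => ((starRingEnd ℂ) w₀ * W ((t : ℂ) * z₀)).re) lam.re 1 :=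
      Complex.reCLM.hasFDerivAt.comp_hasDerivAt 1 hv
    set φ : ℝ → ℝ := fun t => ((starRingEnd ℂ) w₀ * W ((t : ℂ) * z₀)).re with hφdef
    have hφ1 : φ 1 = 1 := by
      rw [hφdef]
      simp only [Complex.ofReal_one, one_mul]
      rw [← hw₀def, mul_comm, Complex.mul_conj, hnsq₀]
      simp
    have hslope : Tendsto (slope φ 1) (𝓝[≠] (1:ℝ)) (𝓝 lam.re) :=
      hasDerivAt_iff_tendsto_slope.mp hφ
    have hmono : 𝓝[<] (1:ℝ) ≤ 𝓝[≠] (1:ℝ) :=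
      nhdsWithin_mono 1 (fun x hx => ne_of_lt hx)
    apply ge_of_tendsto (hslope.mono_left hmono)
    filter_upwards [eventually_mem_set.mpr (Ioo_mem_nhdsLT_of_mem
      (show (1:ℝ) ∈ Set.Ioc (0:ℝ) 1 from ⟨zero_lt_one, le_refl _⟩))] with t ht
    have ht0 : 0 < t := ht.1
    have ht1 : t < 1 := ht.2
    have htz : (t : ℂ) * z₀ ∈ ball (0 : ℂ) r := by
      rw [mem_ball_zero_iff, norm_mul, Complex.norm_real, Real.norm_eq_abs, abs_of_pos ht0]
      nlinarith
    have hφt : φ t ≤ t := by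
      rw [hφdef]
      calc ((starRingEnd ℂ) w₀ * W ((t : ℂ) * z₀)).re
          ≤ ‖(starRingEnd ℂ) w₀ * W ((t : ℂ) * z₀)‖ := Complex.re_le_norm _
        _ = ‖W ((t : ℂ) * z₀)‖ := by
            rw [norm_mul, Complex.norm_conj, habs₀, one_mul]
        _ ≤ ‖(t : ℂ) * z₀‖ / r := hSch _ htz
        _ = t := by
            rw [norm_mul, Complex.norm_real, Real.norm_eq_abs, abs_of_pos ht0]
            have hz0r : ‖z₀‖ = r := hr.symm
            field_simp [hz0r]; exact hz0r
    rw [slope_def_field, hφ1]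
    rw [le_div_iff_of_neg (by linarith : t - 1 < 0)]
    linarith
  -- tangential derivative: Im lam = 0
  have key2 : lam.im = 0 := by
    set v : ℝ → ℂ := fun θ => W (z₀ * Complex.exp ((θ : ℂ) * Complex.I)) with hvdef
    have hv0 : v 0 = w₀ := by
      rw [hvdef]; simp [hw₀def]
    have hvD : HasDerivAt v (D * (z₀ * Complex.I)) 0 := by
      have hc : HasDerivAt (fun s : ℂ => W (z₀ * Complex.exp (s * Complex.I)))
          (D * (z₀ * Complex.I)) 0 := by
        have hi1 : HasDerivAt (fun s : ℂ => s * Complex.I) Complex.I 0 :=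
          hasDerivAt_mul_const Complex.I
        have hi2 : HasDerivAt (fun s : ℂ => Complex.exp (s * Complex.I))
            (Complex.exp ((0 : ℂ) * Complex.I) * Complex.I) 0 := hi1.cexp
        have hi3 : HasDerivAt (fun s : ℂ => z₀ * Complex.exp (s * Complex.I))
            (z₀ * (Complex.exp ((0 : ℂ) * Complex.I) * Complex.I)) 0 := hi2.const_mul z₀
        have hi4 : HasDerivAt (fun s : ℂ => z₀ * Complex.exp (s * Complex.I))
            (z₀ * Complex.I) 0 := by simpa using hi3
        have houter : HasDerivAt W D (z₀ * Complex.exp ((0 : ℂ) * Complex.I)) := by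
          simpa using hWD
        exact houter.comp 0 hi4
      have := hc.comp_ofReal (z := (0 : ℝ))
      simpa using this
    set X : ℂ := D * (z₀ * Complex.I) with hXdef
    have hre : HasDerivAt (fun θ : ℝ => (v θ).re) X.re 0 :=
      Complex.reCLM.hasFDerivAt.comp_hasDerivAt 0 hvD
    have him : HasDerivAt (fun θ : ℝ => (v θ).im) X.im 0 :=
      Complex.imCLM.hasFDerivAt.comp_hasDerivAt 0 hvD
    set ψ : ℝ → ℝ := fun θ => (v θ).re ^ 2 + (v θ).im ^ 2 with hψdef
    have hψD : HasDerivAt ψ (2 * (v 0).re ^ 1 * X.re + 2 * (v 0).im ^ 1 * X.im) 0 :=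
      ((hre.pow 2).add (him.pow 2)).congr_deriv (by norm_num)
    have hψmax : IsLocalMax ψ 0 := by
      apply Filter.Eventually.of_forall
      intro θ
      have hnorm : ‖z₀ * Complex.exp ((θ : ℂ) * Complex.I)‖ = r := by
        rw [norm_mul, Complex.norm_exp_ofReal_mul_I,
          mul_one]
      have h1 : ‖v θ‖ ≤ 1 := hWle1 _ (le_of_eq hnorm)
      have h2 : (v θ).re ^ 2 + (v θ).im ^ 2 ≤ 1 := by
        have := Complex.sq_norm (v θ)
        rw [Complex.normSq_apply] at this
        nlinarith [h1, norm_nonneg (v θ)]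
      have h3 : ψ 0 = 1 := by
        rw [hψdef]
        simp only [hv0]
        have := hnsq₀
        rw [Complex.normSq_apply] at this
        nlinarith [this]
      rw [h3]
      exact h2
    have hderiv0 : 2 * (v 0).re ^ 1 * X.re + 2 * (v 0).im ^ 1 * X.im = 0 := by
      rw [← hψD.deriv]
      exact hψmax.deriv_eq_zero
    rw [hv0] at hderiv0
    have hXre : X.re = -(D * z₀).im := by
      rw [hXdef]
      have : D * (z₀ * Complex.I) = D * z₀ * Complex.I := by ring
      rw [this, Complex.mul_I_re]
    have hXim : X.im = (D * z₀).re := by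
      rw [hXdef]
      have : D * (z₀ * Complex.I) = D * z₀ * Complex.I := by ring
      rw [this, Complex.mul_I_im]
    rw [hXre, hXim] at hderiv0
    simp only [pow_one] at hderiv0
    rw [hlamdef]
    simp only [Complex.mul_im, Complex.mul_re, Complex.conj_re, Complex.conj_im] at hderiv0 ⊢
    linarith
  -- final algebra
  set l : ℝ := lam.re with hldef
  have hlam_eq : lam = (l : ℂ) := by
    apply Complex.ext
    · simp [hldef]
    · simp [key2]
  have hzD : D * z₀ = w₀ * lam := by
    have h1 : w₀ * lam = (w₀ * (starRingEnd ℂ) w₀) * (D * z₀) := by rw [hlamdef]; ring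
    rw [h1, Complex.mul_conj, hnsq₀]
    simp
  have h2 : -2 * deriv g z₀ * z₀ = (1 - g z₀) * (1 + g z₀) * lam := by
    have h3 := hzD
    rw [hDdef, hw₀def, hWdef] at h3
    simp only at h3
    field_simp at h3
    apply mul_left_cancel₀ hne₀
    linear_combination (1 + g z₀) * h3
  have hzg : z₀ * deriv g z₀ = -(1 - (g z₀)^2) * lam / 2 := by
    linear_combination (-1/2 : ℂ) * h2
  have hfe : f =ᶠ[𝓝 z₀] fun z => z * g z := by
    filter_upwards [isOpen_compl_singleton.mem_nhds
      (show z₀ ∈ ({(0:ℂ)}ᶜ : Set ℂ) from hz₀ne)] with z hz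
    have hz' : z ≠ 0 := hz
    rw [hgz z hz']
    field_simp
  have hderivf : deriv f z₀ = g z₀ + z₀ * deriv g z₀ := by
    rw [hfe.deriv_eq]
    have h := (hasDerivAt_id z₀).mul hgd₀.hasDerivAt
    simp only [id] at h
    rw [show deriv (fun z => z * g z) z₀ = deriv (id * g) z₀ from rfl, h.deriv]
    simp
  set y : ℝ := (g z₀).im with hydef
  have hg₀eq : g z₀ = (y : ℂ) * Complex.I := by
    have h4 := Complex.re_add_im (g z₀)
    rw [hre0] at h4
    simpa using h4.symm
  have hF : deriv f z₀ - (f z₀ / z₀) ^ 2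
      = ((y^2 - (1+y^2)*l/2 : ℝ) : ℂ) + (y : ℂ) * Complex.I := by
    rw [hderivf, ← hgz z₀ hz₀ne, hzg, hlam_eq, hg₀eq]
    push_cast
    linear_combination ((y:ℂ)^2 * ((l:ℂ)/2 - 1)) * Complex.I_sq
  have hlt := hineq z₀ hz₀ball1 hz₀ne
  rw [hF] at hlt
  have habsF : (‖(((y^2 - (1+y^2)*l/2 : ℝ) : ℂ) + (y : ℂ) * Complex.I)‖)^2
      = (y^2 - (1+y^2)*l/2)^2 + y^2 := by
    rw [Complex.sq_norm, Complex.normSq_add_mul_I]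
  have hge : (1:ℝ)/4 ≤ (y^2 - (1+y^2)*l/2)^2 + y^2 := aux_quad y l key1
  nlinarith [norm_nonneg (((y^2 - (1+y^2)*l/2 : ℝ) : ℂ) + (y : ℂ) * Complex.I),
    habsF, hge, hlt]
end

section
/- Let 0 ≤ α < 1 and let p be a function analytic on the open unit disk 𝔻 with p(0) = 1. If |z·p'(z) + ((1+α)/(1−α))·p(z) − (1/(1−α))·p(z)² − α/(1−α)| < (1−α)/2 for all z ∈ 𝔻, then Re p(z) > α for all z ∈ 𝔻. -/
open Complex Metric

private lemma abs_cayley_lt_one {w : ℂ} (h : 0 < w.re) :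
    ‖(1 - w) / (1 + w)‖ < 1 := by
  have hne : (1 : ℂ) + w ≠ 0 := by
    intro hzero
    have : (1 + w).re = 0 := by rw [hzero]; simp
    simp only [Complex.add_re, Complex.one_re] at this
    linarith
  rw [norm_div, div_lt_one (norm_pos_iff.2 hne)]
  have h1 : (‖1 - w‖) ^ 2 < (‖1 + w‖) ^ 2 := by
    rw [Complex.sq_norm, Complex.sq_norm]
    simp only [Complex.normSq_apply, Complex.sub_re, Complex.sub_im, Complex.add_re,
      Complex.add_im, Complex.one_re, Complex.one_im]
    nlinarith
  exact lt_of_pow_lt_pow_left₀ 2 (norm_nonneg _) h1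

set_option maxHeartbeats 1000000 in
/-- Core lemma: if `q` is analytic on the unit disk, `q 0 = 1` and
`|z q'(z) + q(z) − q(z)²| < 1/2` on the disk, then `Re q > 0` on the disk. -/
private lemma core_lemma (q : ℂ → ℂ)
    (hq : AnalyticOnNhd ℂ q (ball (0 : ℂ) 1)) (hq0 : q 0 = 1)
    (hineq : ∀ z ∈ ball (0 : ℂ) 1,
      ‖z * deriv q z + q z - (q z) ^ 2‖ < 1 / 2) :
    ∀ z ∈ ball (0 : ℂ) 1, 0 < (q z).re := by
  by_contra hcon
  push_neg at hcon
  obtain ⟨zs, hzs, hzsre⟩ := hcon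
  have hzs1 : ‖zs‖ < 1 := mem_ball_zero_iff.1 hzs
  set K : Set ℂ := closedBall (0 : ℂ) ‖zs‖ with hK
  have hKsub : K ⊆ ball (0 : ℂ) 1 := closedBall_subset_ball hzs1
  have hqc : ContinuousOn q (ball (0 : ℂ) 1) := hq.continuousOn
  set S : Set ℂ := K ∩ (fun z => (q z).re) ⁻¹' (Set.Iic 0) with hS
  have hSclosed : IsClosed S := by
    refine ContinuousOn.preimage_isClosed_of_isClosed ?_ isClosed_closedBall isClosed_Iic
    exact Complex.continuous_re.comp_continuousOn (hqc.mono hKsub)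
  have hScompact : IsCompact S :=
    (isCompact_closedBall (0 : ℂ) _).of_isClosed_subset hSclosed Set.inter_subset_left
  have hSne : S.Nonempty := ⟨zs, by simp [hS, hK, hzsre, mem_closedBall_zero_iff]⟩
  obtain ⟨z₀, hz₀S, hz₀min⟩ :=
    hScompact.exists_isMinOn hSne (continuous_norm.continuousOn)
  rw [isMinOn_iff] at hz₀min
  set r : ℝ := ‖z₀‖ with hr
  have hz₀K : z₀ ∈ K := hz₀S.1
  have hz₀le : (q z₀).re ≤ 0 := hz₀S.2
  have hr1 : r < 1 := lt_of_le_of_lt (mem_closedBall_zero_iff.1 hz₀K) hzs1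
  have hz₀ball : z₀ ∈ ball (0 : ℂ) 1 := mem_ball_zero_iff.2 hr1
  have hr0 : 0 < r := by
    rcases eq_or_ne z₀ 0 with h | h
    · exfalso; rw [h, hq0] at hz₀le; norm_num at hz₀le
    · simpa [hr] using (norm_pos_iff.2 h)
  -- positivity strictly inside radius r
  have hpos : ∀ z : ℂ, ‖z‖ < r → 0 < (q z).re := by
    intro z hz
    by_contra h
    push_neg at h
    have hzS : z ∈ S := by
      refine ⟨mem_closedBall_zero_iff.2 ?_, h⟩
      exact le_trans hz.le (mem_closedBall_zero_iff.1 hz₀K)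
    exact absurd (hz₀min z hzS) (not_le.2 hz)
  -- nonnegativity on the closed ball of radius r
  have hnonneg : ∀ z : ℂ, ‖z‖ ≤ r → 0 ≤ (q z).re := by
    intro z hz
    have hzb : z ∈ ball (0 : ℂ) 1 := mem_ball_zero_iff.2 (lt_of_le_of_lt hz hr1)
    have hcont : ContinuousAt q z := (hq z hzb).continuousAt
    have h1 : Filter.Tendsto (fun t : ℝ => ((t : ℂ) * z)) (nhdsWithin 1 (Set.Iio 1))
        (nhds z) := by
      have hcm : Continuous (fun t : ℝ => ((t : ℂ) * z)) :=
        Complex.continuous_ofReal.mul continuous_const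
      have := hcm.tendsto (1 : ℝ)
      simp only [Complex.ofReal_one, one_mul] at this
      exact this.mono_left nhdsWithin_le_nhds
    have htend : Filter.Tendsto (fun t : ℝ => (q ((t : ℂ) * z)).re)
        (nhdsWithin 1 (Set.Iio 1)) (nhds (q z).re) :=
      (Complex.continuous_re.tendsto _).comp (hcont.tendsto.comp h1)
    refine ge_of_tendsto htend ?_
    filter_upwards [Ioo_mem_nhdsLT_of_mem (by constructor <;> norm_num :
        (1 : ℝ) ∈ Set.Ioc 0 1)] with t ht
    refine (hpos _ ?_).le
    rw [norm_mul, Complex.norm_real, Real.norm_eq_abs, abs_of_pos ht.1]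
    calc t * ‖z‖ ≤ t * r := by nlinarith [ht.1.le]
      _ < r := by nlinarith [ht.2]
  have hre0 : (q z₀).re = 0 := le_antisymm hz₀le (hnonneg z₀ le_rfl)
  set ρ : ℝ := (q z₀).im with hρ
  have hqz₀ : q z₀ = (ρ : ℂ) * I := by
    apply Complex.ext <;> simp [hre0, hρ]
  have hdiff : DifferentiableAt ℂ q z₀ := (hq z₀ hz₀ball).differentiableAt
  have hqd : HasDerivAt q (deriv q z₀) z₀ := hdiff.hasDerivAt
  set w₀ : ℂ := z₀ * deriv q z₀ with hw₀
  -- Tangential argument: Im w₀ = 0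
  have hIm : w₀.im = 0 := by
    have hc1 : HasDerivAt (fun θ : ℝ => ((θ : ℂ) * I)) I 0 := by
      simpa using (Complex.ofRealCLM.hasDerivAt (x := (0 : ℝ))).mul_const I
    have hc2 : HasDerivAt (fun θ : ℝ => Complex.exp ((θ : ℂ) * I)) I 0 := by
      have := (Complex.hasDerivAt_exp (((0 : ℝ) : ℂ) * I)).scomp (0 : ℝ) hc1
      simp at this; exact this
    have hc3 : HasDerivAt (fun θ : ℝ => z₀ * Complex.exp ((θ : ℂ) * I)) (z₀ * I) 0 := by
      simpa using hc2.const_mul z₀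
    have hg : HasDerivAt (fun θ : ℝ => q (z₀ * Complex.exp ((θ : ℂ) * I)))
        ((z₀ * I) * deriv q z₀) 0 := by
      have hqd' : HasDerivAt q (deriv q z₀) (z₀ * Complex.exp (((0 : ℝ) : ℂ) * I)) := by
        simpa using hqd
      have := hqd'.scomp (0 : ℝ) hc3
      simp [smul_eq_mul] at this; exact this
    have hh : HasDerivAt (fun θ : ℝ => (q (z₀ * Complex.exp ((θ : ℂ) * I))).re)
        (((z₀ * I) * deriv q z₀).re) 0 :=
      Complex.reCLM.hasFDerivAt.comp_hasDerivAt 0 hg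
    have hmin : IsLocalMin (fun θ : ℝ => (q (z₀ * Complex.exp ((θ : ℂ) * I))).re) 0 := by
      refine Filter.Eventually.of_forall fun θ => ?_
      have : ‖z₀ * Complex.exp ((θ : ℂ) * I)‖ ≤ r := by
        rw [norm_mul]
        simp [Complex.norm_exp, hr]
      simpa [hre0] using hnonneg _ this
    have := hmin.hasDerivAt_eq_zero hh
    have h2 : ((z₀ * I) * deriv q z₀).re = (I * w₀).re := by congr 1; rw [hw₀]; ring
    rw [h2] at this
    simpa [Complex.mul_re] using this
  set σ : ℝ := w₀.re with hσdef
  have hw₀σ : w₀ = (σ : ℂ) := by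
    apply Complex.ext <;> simp [hσdef, hIm]
  -- Schwarz lemma argument: σ ≤ -(1+ρ²)/2
  have hkey : σ ≤ -(1 + ρ ^ 2) / 2 := by
    set Q : ℂ → ℂ := fun ζ => q (z₀ * ζ) with hQdef
    have hQmem : ∀ ζ : ℂ, ‖ζ‖ < 1 → ‖z₀ * ζ‖ < r := by
      intro ζ hζ
      rw [norm_mul]
      have := mul_lt_mul_of_pos_left hζ hr0
      simpa [hr] using this
    have hQre : ∀ ζ ∈ ball (0 : ℂ) 1, 0 < (Q ζ).re :=
      fun ζ hζ => hpos _ (hQmem ζ (mem_ball_zero_iff.1 hζ))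
    have hQdiffAt : ∀ ζ : ℂ, ‖ζ‖ < 1 → DifferentiableAt ℂ Q ζ := by
      intro ζ hζ
      have h1 : DifferentiableAt ℂ q (z₀ * ζ) :=
        (hq _ (mem_ball_zero_iff.2 (lt_trans (hQmem ζ hζ) hr1))).differentiableAt
      exact h1.comp ζ ((differentiableAt_const _).mul differentiableAt_id)
    have hQdiff : DifferentiableOn ℂ Q (ball (0 : ℂ) 1) :=
      fun ζ hζ => (hQdiffAt ζ (mem_ball_zero_iff.1 hζ)).differentiableWithinAt
    have hden : ∀ ζ ∈ ball (0 : ℂ) 1, (1 : ℂ) + Q ζ ≠ 0 := by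
      intro ζ hζ h0
      have h1 := hQre ζ hζ
      have h2 : ((1 : ℂ) + Q ζ).re = 0 := by rw [h0]; simp
      simp only [Complex.add_re, Complex.one_re] at h2
      linarith
    set B : ℂ → ℂ := fun ζ => (1 - Q ζ) / (1 + Q ζ) with hBdef
    have hBdiff : DifferentiableOn ℂ B (ball (0 : ℂ) 1) :=
      DifferentiableOn.div ((differentiableOn_const _).sub hQdiff)
        ((differentiableOn_const _).add hQdiff) hden
    have hBmaps : Set.MapsTo B (ball (0 : ℂ) 1) (ball (0 : ℂ) 1) := by
      intro ζ hζ
      rw [mem_ball_zero_iff]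
      exact abs_cayley_lt_one (hQre ζ hζ)
    have hB0 : B 0 = 0 := by
      have : Q 0 = 1 := by rw [hQdef]; simp [hq0]
      rw [hBdef]; simp [this]
    have hSchwarz : ∀ t : ℝ, 0 ≤ t → t < 1 → Complex.normSq (B t) ≤ t ^ 2 := by
      intro t ht0 ht1
      have h1 := Complex.norm_le_norm_of_mapsTo_ball hBdiff (hBmaps.mono_right ball_subset_closedBall) hB0
        (show ‖(t : ℂ)‖ < 1 by rwa [Complex.norm_real, Real.norm_eq_abs, _root_.abs_of_nonneg ht0])
      rw [Complex.norm_real, Real.norm_eq_abs, _root_.abs_of_nonneg ht0] at h1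
      calc Complex.normSq (B t) = ‖B t‖ ^ 2 := (Complex.sq_norm _).symm
        _ ≤ t ^ 2 := by nlinarith [norm_nonneg (B t)]
    have hQ1 : Q 1 = (ρ : ℂ) * I := by rw [hQdef]; simp [hqz₀]
    have hden1 : (1 : ℂ) + (ρ : ℂ) * I ≠ 0 := by
      intro h0
      have h2 : ((1 : ℂ) + (ρ : ℂ) * I).re = 0 := by rw [h0]; simp
      simp at h2
    have hB1 : B 1 = (1 - (ρ : ℂ) * I) / (1 + (ρ : ℂ) * I) := by rw [hBdef]; simp [hQ1]
    -- derivative of B at 1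
    have hQ1d : HasDerivAt Q ((σ : ℂ)) 1 := by
      have h1 : HasDerivAt (fun ζ : ℂ => z₀ * ζ) z₀ 1 := by
        simpa using (hasDerivAt_id (1 : ℂ)).const_mul z₀
      have hqd' : HasDerivAt q (deriv q z₀) (z₀ * 1) := by simpa using hqd
      have h2 := hqd'.comp 1 h1
      have h3 : deriv q z₀ * z₀ = (σ : ℂ) := by rw [mul_comm, ← hw₀, hw₀σ]
      rw [← h3]
      exact h2
    set c : ℂ := 1 + (ρ : ℂ) * I with hc
    set Bd : ℂ := (-(σ : ℂ) * c - (1 - (ρ : ℂ) * I) * (σ : ℂ)) / c ^ 2 with hBd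
    have hB1d : HasDerivAt B Bd 1 := by
      have h1 : HasDerivAt (fun ζ => 1 - Q ζ) (-(σ : ℂ)) 1 := hQ1d.const_sub 1
      have h2 : HasDerivAt (fun ζ => 1 + Q ζ) ((σ : ℂ)) 1 := hQ1d.const_add 1
      have h3 := h1.div h2 (by rw [hQ1]; exact hden1)
      have h4 : (-(σ : ℂ) * (1 + Q 1) - (1 - Q 1) * (σ : ℂ)) / (1 + Q 1) ^ 2 = Bd := by
        rw [hQ1, hBd, hc]
      rw [← h4]
      exact h3
    -- real restriction and derivative of the squared norm
    have hgR : HasDerivAt (fun t : ℝ => B (t : ℂ)) Bd 1 := hB1d.comp_ofReal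
    have hre : HasDerivAt (fun t : ℝ => (B (t : ℂ)).re) Bd.re 1 :=
      Complex.reCLM.hasFDerivAt.comp_hasDerivAt 1 hgR
    have him : HasDerivAt (fun t : ℝ => (B (t : ℂ)).im) Bd.im 1 :=
      Complex.imCLM.hasFDerivAt.comp_hasDerivAt 1 hgR
    set k : ℝ → ℝ := fun t => (B (t : ℂ)).re * (B (t : ℂ)).re + (B (t : ℂ)).im * (B (t : ℂ)).im
      with hkdef
    set D : ℝ := (Bd.re * (B ((1 : ℝ) : ℂ)).re + (B ((1 : ℝ) : ℂ)).re * Bd.re)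
      + (Bd.im * (B ((1 : ℝ) : ℂ)).im + (B ((1 : ℝ) : ℂ)).im * Bd.im) with hD
    have hk : HasDerivAt k D 1 := (hre.mul hre).add (him.mul him)
    have hknorm : ∀ t : ℝ, k t = Complex.normSq (B t) := by
      intro t; rw [hkdef, Complex.normSq_apply]
    -- slope bound gives D ≥ 2
    have hk1 : k 1 = 1 := by
      rw [hknorm]
      rw [show ((1 : ℝ) : ℂ) = (1 : ℂ) by norm_num, hB1, map_div₀]
      have h5 : Complex.normSq (1 - (ρ : ℂ) * I) = 1 + ρ ^ 2 := by
        simp [Complex.normSq_apply]; ring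
      have h6 : Complex.normSq (1 + (ρ : ℂ) * I) = 1 + ρ ^ 2 := by
        simp [Complex.normSq_apply]; ring
      rw [h5, h6, div_self (by positivity)]
    have hslope : Filter.Tendsto (slope k 1) (nhdsWithin 1 (Set.Iio 1)) (nhds D) := by
      have h7 : HasDerivWithinAt k D (Set.Iio 1) 1 := hk.hasDerivWithinAt
      have h8 := hasDerivWithinAt_iff_tendsto_slope.1 h7
      rwa [Set.diff_singleton_eq_self (by simp)] at h8
    have hD2 : 2 ≤ D := by
      have htend2 : Filter.Tendsto (fun t : ℝ => 1 + t) (nhdsWithin 1 (Set.Iio 1))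
          (nhds 2) := by
        have h9 : Filter.Tendsto (fun t : ℝ => 1 + t) (nhds 1) (nhds (1 + 1)) :=
          (continuous_const.add continuous_id).tendsto 1
        norm_num at h9
        exact h9.mono_left nhdsWithin_le_nhds
      refine le_of_tendsto_of_tendsto htend2 hslope ?_
      filter_upwards [Ioo_mem_nhdsLT_of_mem (by constructor <;> norm_num :
          (1 : ℝ) ∈ Set.Ioc 0 1)] with t ht
      have hkt := hSchwarz t ht.1.le ht.2
      rw [← hknorm] at hkt
      show 1 + t ≤ slope k 1 t
      rw [slope_def_field, hk1, le_div_iff_of_neg (by linarith [ht.2] : t - (1 : ℝ) < 0)]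
      nlinarith
    -- compute the components
    have hB1re : (B ((1 : ℝ) : ℂ)).re = (1 - ρ ^ 2) / (1 + ρ ^ 2) := by
      rw [show ((1 : ℝ) : ℂ) = (1 : ℂ) by norm_num, hB1]
      rw [Complex.div_re]
      have hden0 : (1:ℝ) + ρ ^ 2 ≠ 0 := by positivity
      simp [hc, Complex.normSq_apply, Complex.add_re, Complex.add_im, Complex.mul_re,
        Complex.mul_im, ← Complex.ofReal_pow]
      ring_nf
      try field_simp
      try ring
    have hB1im : (B ((1 : ℝ) : ℂ)).im = -(2 * ρ) / (1 + ρ ^ 2) := by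
      rw [show ((1 : ℝ) : ℂ) = (1 : ℂ) by norm_num, hB1]
      rw [Complex.div_im]
      have hden0 : (1:ℝ) + ρ ^ 2 ≠ 0 := by positivity
      simp [hc, Complex.normSq_apply, Complex.add_re, Complex.add_im, Complex.mul_re,
        Complex.mul_im, ← Complex.ofReal_pow]
      ring_nf
      try field_simp
      try ring
    have hBdsimp : Bd = (-2 * (σ : ℂ)) / c ^ 2 := by
      rw [hBd]
      congr 1
      rw [hc]; ring
    have hc2 : c ^ 2 = ((1 - ρ ^ 2 : ℝ) : ℂ) + ((2 * ρ : ℝ) : ℂ) * I := by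
      rw [hc]; push_cast
      linear_combination (ρ : ℂ) ^ 2 * Complex.I_sq
    have hBdre : Bd.re = -2 * σ * (1 - ρ ^ 2) / ((1 - ρ ^ 2) ^ 2 + (2 * ρ) ^ 2) := by
      rw [hBdsimp, hc2, Complex.div_re]
      have hden0 : (1:ℝ) + ρ ^ 2 ≠ 0 := by positivity
      simp [Complex.normSq_apply, Complex.add_re, Complex.add_im, Complex.mul_re,
        Complex.mul_im, ← Complex.ofReal_pow]
      ring_nf
      try field_simp
      try ring
    have hBdim : Bd.im = 2 * σ * (2 * ρ) / ((1 - ρ ^ 2) ^ 2 + (2 * ρ) ^ 2) := by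
      rw [hBdsimp, hc2, Complex.div_im]
      have hden0 : (1:ℝ) + ρ ^ 2 ≠ 0 := by positivity
      simp [Complex.normSq_apply, Complex.add_re, Complex.add_im, Complex.mul_re,
        Complex.mul_im, ← Complex.ofReal_pow]
      ring_nf
      try field_simp
      try ring
    have hpos1 : (0 : ℝ) < 1 + ρ ^ 2 := by positivity
    have hcombo : Bd.re * (B ((1 : ℝ) : ℂ)).re + Bd.im * (B ((1 : ℝ) : ℂ)).im
        = -2 * σ / (1 + ρ ^ 2) := by
      rw [hBdre, hBdim, hB1re, hB1im]
      have hden2 : (1 - ρ ^ 2) ^ 2 + (2 * ρ) ^ 2 = (1 + ρ ^ 2) ^ 2 := by ring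
      rw [hden2]
      field_simp
      ring
    have hfinal : 2 ≤ 2 * (-2 * σ / (1 + ρ ^ 2)) := by
      calc (2 : ℝ) ≤ D := hD2
        _ = 2 * (Bd.re * (B ((1 : ℝ) : ℂ)).re + Bd.im * (B ((1 : ℝ) : ℂ)).im) := by
            rw [hD]; ring
        _ = 2 * (-2 * σ / (1 + ρ ^ 2)) := by rw [hcombo]
    have h10 : 1 ≤ -2 * σ / (1 + ρ ^ 2) := by linarith
    rw [le_div_iff₀ hpos1] at h10
    linarith
  -- Final contradiction
  have hfin := hineq z₀ hz₀ball
  rw [← hw₀, hw₀σ, hqz₀] at hfin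
  have habs : ‖(σ : ℂ) + (ρ : ℂ) * I - ((ρ : ℂ) * I) ^ 2‖ ^ 2
      = (σ + ρ ^ 2) ^ 2 + ρ ^ 2 := by
    rw [Complex.sq_norm]
    simp [Complex.normSq_apply, mul_pow, Complex.I_sq, ← Complex.ofReal_pow]
    ring
  have h4 : (σ + ρ ^ 2) ^ 2 + ρ ^ 2 < 1 / 4 := by
    have h5 : ‖(σ : ℂ) + (ρ : ℂ) * I - ((ρ : ℂ) * I) ^ 2‖ < 1 / 2 := hfin
    nlinarith [norm_nonneg ((σ : ℂ) + (ρ : ℂ) * I - ((ρ : ℂ) * I) ^ 2), habs]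
  nlinarith [sq_nonneg (2 * σ + ρ ^ 2 + 1), sq_nonneg (σ + ρ ^ 2), sq_nonneg ρ,
    sq_nonneg (ρ ^ 2 - 1), sq_nonneg (2 * (σ + ρ ^ 2) - ρ ^ 2 + 1)]

/-- **Theorem 4.** Let `0 ≤ α < 1`. If `p` is analytic on the unit disk with `p 0 = 1` and
`|z p'(z) + ((1+α)/(1−α)) p(z) − (1/(1−α)) p(z)² − α/(1−α)| < (1−α)/2` on the disk,
then `Re p(z) > α` on the disk. -/
theorem stmt_13 (α : ℝ) (hα0 : 0 ≤ α) (hα1 : α < 1)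
    (p : ℂ → ℂ)
    (hp : AnalyticOnNhd ℂ p (ball (0 : ℂ) 1))
    (hp0 : p 0 = 1)
    (hineq : ∀ z ∈ ball (0 : ℂ) 1,
      ‖z * deriv p z + ((1 + (α : ℂ)) / (1 - (α : ℂ))) * p z
        - (1 / (1 - (α : ℂ))) * (p z) ^ 2 - (α : ℂ) / (1 - (α : ℂ))‖ < (1 - α) / 2) :
    ∀ z ∈ ball (0 : ℂ) 1, α < (p z).re := by
  have hαR : (0 : ℝ) < 1 - α := by linarith
  have hαC : (1 : ℂ) - (α : ℂ) ≠ 0 := by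
    rw [show (1 : ℂ) - (α : ℂ) = ((1 - α : ℝ) : ℂ) by push_cast; ring]
    exact_mod_cast Complex.ofReal_ne_zero.2 (ne_of_gt hαR)
  set q : ℂ → ℂ := fun z => ((1 : ℂ) - α)⁻¹ * (p z - α) with hqdef
  have hq : AnalyticOnNhd ℂ q (ball (0 : ℂ) 1) :=
    fun z hz => (analyticAt_const).mul ((hp z hz).sub analyticAt_const)
  have hq0 : q 0 = 1 := by
    rw [hqdef]; simp only [hp0]; field_simp
  have hqderiv : ∀ z ∈ ball (0 : ℂ) 1, deriv q z = ((1 : ℂ) - α)⁻¹ * deriv p z := by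
    intro z hz
    rw [hqdef]
    rw [deriv_const_mul _ (((hp z hz).differentiableAt).sub_const _)]
    rw [deriv_sub_const]
  have hqineq : ∀ z ∈ ball (0 : ℂ) 1,
      ‖z * deriv q z + q z - (q z) ^ 2‖ < 1 / 2 := by
    intro z hz
    have hid : z * deriv q z + q z - (q z) ^ 2
        = ((1 : ℂ) - α)⁻¹ * (z * deriv p z + ((1 + (α : ℂ)) / (1 - (α : ℂ))) * p z
          - (1 / (1 - (α : ℂ))) * (p z) ^ 2 - (α : ℂ) / (1 - (α : ℂ))) := by
      rw [hqderiv z hz, hqdef]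
      field_simp
      ring
    rw [hid, norm_mul, norm_inv]
    have habs1 : ‖(1 : ℂ) - α‖ = 1 - α := by
      rw [show (1 : ℂ) - (α : ℂ) = ((1 - α : ℝ) : ℂ) by push_cast; ring,
        Complex.norm_real, Real.norm_eq_abs, abs_of_pos hαR]
    rw [habs1]
    rw [inv_mul_lt_iff₀ hαR]
    calc ‖z * deriv p z + ((1 + (α : ℂ)) / (1 - (α : ℂ))) * p z
          - (1 / (1 - (α : ℂ))) * (p z) ^ 2 - (α : ℂ) / (1 - (α : ℂ))‖
        < (1 - α) / 2 := hineq z hz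
      _ = (1 - α) * (1 / 2) := by ring
  intro z hz
  have := core_lemma q hq hq0 hqineq z hz
  rw [hqdef] at this
  simp only at this
  rw [show (1 : ℂ) - (α : ℂ) = ((1 - α : ℝ) : ℂ) by push_cast; ring, ← Complex.ofReal_inv] at this
  rw [Complex.re_ofReal_mul] at this
  have h2 : (p z - (α : ℂ)).re = (p z).re - α := by simp
  rw [h2] at this
  nlinarith [this, inv_pos.2 hαR]
end

section
/- Let p be a function analytic on the open unit disk 𝔻 with p(0) = 1. If |z·p'(z) + 3·p(z) − 2·p(z)² − 1| < 1/4 for all z ∈ 𝔻, then Re p(z) > 1/2 for all z ∈ 𝔻. -/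
open Complex Metric
open Filter Set

lemma normSq_hasDerivAt {g : ℝ → ℂ} {g' : ℂ} {t : ℝ} (h : HasDerivAt g g' t) :
    HasDerivAt (fun s => Complex.normSq (g s)) (2 * ((starRingEnd ℂ) (g t) * g').re) t := by
  have hre : HasDerivAt (fun s => (g s).re) g'.re t :=
    (Complex.reCLM.hasFDerivAt.comp_hasDerivAt t h)
  have him : HasDerivAt (fun s => (g s).im) g'.im t :=
    (Complex.imCLM.hasFDerivAt.comp_hasDerivAt t h)
  have := (hre.mul hre).add (him.mul him)
  have hfun : (fun s => Complex.normSq (g s))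
      = fun x => (g x).re * (g x).re + (g x).im * (g x).im :=
    funext fun s => Complex.normSq_apply _
  rw [hfun]
  refine this.congr_deriv ?_
  simp only [Complex.mul_re, Complex.conj_re, Complex.conj_im]
  ring

lemma key_ineq (k y : ℝ) (hk : 1 ≤ k) :
    1/16 ≤ (1/4 + y^2) * (k^2/4 + (k-2)^2 * y^2) := by
  nlinarith [sq_nonneg y, sq_nonneg (k-2), sq_nonneg ((k-2)*y), mul_nonneg (sq_nonneg y) (sq_nonneg (k-2)), sq_nonneg (k*y)]


/-- **Remark (α = 1/2).** If `p` is analytic on the unit disk with `p 0 = 1` and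
`|z p'(z) + 3 p(z) − 2 p(z)² − 1| < 1/4` on the disk, then `Re p(z) > 1/2` on the disk. -/
theorem stmt_14 (p : ℂ → ℂ)
    (hp : AnalyticOnNhd ℂ p (ball (0 : ℂ) 1))
    (hp0 : p 0 = 1)
    (hineq : ∀ z ∈ ball (0 : ℂ) 1,
      ‖z * deriv p z + 3 * p z - 2 * (p z) ^ 2 - 1‖ < 1 / 4) :
    ∀ z ∈ ball (0 : ℂ) 1, 1 / 2 < (p z).re := by
  by_contra hcon
  push_neg at hcon
  obtain ⟨w, hwb, hwle⟩ := hcon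
  have hw1 : ‖w‖ < 1 := by simpa [mem_ball_zero_iff] using hwb
  -- the "bad" set
  set K : Set ℂ := closedBall (0:ℂ) ‖w‖ ∩ p ⁻¹' {u : ℂ | u.re ≤ 1/2} with hK
  have hKsub : K ⊆ ball (0:ℂ) 1 := fun z hz => by
    have := mem_closedBall_zero_iff.mp hz.1
    exact mem_ball_zero_iff.mpr (lt_of_le_of_lt this hw1)
  have hcont : ContinuousOn p (closedBall (0:ℂ) ‖w‖) := fun z hz => by
    have : z ∈ ball (0:ℂ) 1 :=
      mem_ball_zero_iff.mpr (lt_of_le_of_lt (mem_closedBall_zero_iff.mp hz) hw1)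
    exact (hp z this).continuousAt.continuousWithinAt
  have hKclosed : IsClosed K :=
    hcont.preimage_isClosed_of_isClosed Metric.isClosed_closedBall
      (isClosed_le Complex.continuous_re continuous_const)
  have hKcomp : IsCompact K :=
    (isCompact_closedBall (0:ℂ) ‖w‖).of_isClosed_subset hKclosed inter_subset_left
  have hKne : K.Nonempty := ⟨w, mem_closedBall_zero_iff.mpr le_rfl, hwle⟩
  obtain ⟨z₀, hz₀K, hz₀min⟩ := hKcomp.exists_isMinOn hKne continuous_norm.continuousOn
  set r : ℝ := ‖z₀‖ with hr
  have hrw : r ≤ ‖w‖ := mem_closedBall_zero_iff.mp hz₀K.1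
  have hr1 : r < 1 := lt_of_le_of_lt hrw hw1
  have hz₀b : z₀ ∈ ball (0:ℂ) 1 := mem_ball_zero_iff.mpr hr1
  have h0K : (0:ℂ) ∉ K := by
    intro h
    have : (p 0).re ≤ 1/2 := h.2
    rw [hp0] at this; norm_num at this
  have hrpos : 0 < r := by
    rcases eq_or_lt_of_le (norm_nonneg z₀) with h | h
    · exfalso; apply h0K
      have : z₀ = 0 := by simpa using h.symm
      rwa [this] at hz₀K
    · exact h
  -- everything strictly inside radius r is good
  have hlt : ∀ z : ℂ, ‖z‖ < r → 1/2 < (p z).re := by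
    intro z hz
    by_contra h
    push_neg at h
    have hzK : z ∈ K :=
      ⟨mem_closedBall_zero_iff.mpr (le_trans hz.le hrw), h⟩
    exact absurd (hz₀min hzK) (not_le.2 hz)
  -- on the sphere of radius r, Re p ≥ 1/2
  have hsphere : ∀ z : ℂ, ‖z‖ = r → 1/2 ≤ (p z).re := by
    intro z hz
    have hzb : z ∈ ball (0:ℂ) 1 := mem_ball_zero_iff.mpr (hz ▸ hr1)
    have hcz : ContinuousAt p z := (hp z hzb).continuousAt
    have h1 : Tendsto (fun t : ℝ => ((t:ℂ) * z)) (nhdsWithin 1 (Iio 1)) (nhds z) := by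
      have : Tendsto (fun t : ℝ => ((t:ℂ) * z)) (nhds 1) (nhds (((1:ℝ):ℂ) * z)) :=
        (Complex.continuous_ofReal.mul continuous_const).tendsto 1
      simpa using this.mono_left nhdsWithin_le_nhds
    have h2 : Tendsto (fun t : ℝ => (p ((t:ℂ) * z)).re) (nhdsWithin 1 (Iio 1))
        (nhds (p z).re) :=
      (Complex.continuous_re.tendsto _).comp (hcz.tendsto.comp h1)
    refine ge_of_tendsto h2 ?_
    filter_upwards [Ioo_mem_nhdsLT_of_mem (by norm_num : (1:ℝ) ∈ Ioc (0:ℝ) 1)] with t ht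
    have hnz : ‖(t:ℂ) * z‖ < r := by
      rw [norm_mul, Complex.norm_real, Real.norm_eq_abs, abs_of_pos ht.1, hz]
      nlinarith [ht.2, hrpos]
    exact (hlt _ hnz).le
  -- the boundary point
  have hure : (p z₀).re = 1/2 := le_antisymm hz₀K.2 (hsphere z₀ hr.symm)
  set u : ℂ := p z₀ with hu
  have hu0 : u ≠ 0 := by
    intro h; rw [h] at hure; norm_num at hure
  set d : ℂ := deriv p z₀ with hd
  set ω : ℂ → ℂ := fun z => (p z - 1) / p z with hω
  have hωz₀ : ω z₀ = (u - 1) / u := by simp only [hω, hu]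
  have hpz : ∀ z : ℂ, ‖z‖ < r → p z ≠ 0 := by
    intro z hz h
    have := hlt z hz; rw [h] at this; norm_num at this
  -- ω maps ball 0 r to the unit disk, ω 0 = 0
  have hω0 : ω 0 = 0 := by simp [hω, hp0]
  have hmaps : MapsTo ω (ball (0:ℂ) r) (ball (ω 0) 1) := by
    intro z hz
    have hzr : ‖z‖ < r := mem_ball_zero_iff.mp hz
    have h1 : 1/2 < (p z).re := hlt z hzr
    have h2 : p z ≠ 0 := hpz z hzr
    have hn : Complex.normSq (ω z) < 1 := by
      simp only [hω]
      rw [Complex.normSq_div, div_lt_one (Complex.normSq_pos.mpr h2)]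
      simp only [Complex.normSq_apply, Complex.sub_re, Complex.sub_im, Complex.one_re,
        Complex.one_im]
      nlinarith [sq_nonneg (p z).im]
    have habs : ‖ω z‖ < 1 := by
      have h3 := Complex.sq_norm (ω z)
      nlinarith [norm_nonneg (ω z)]
    rw [hω0, mem_ball_zero_iff]
    exact habs
  have hdiff : DifferentiableOn ℂ ω (ball (0:ℂ) r) := by
    intro z hz
    have hzr : ‖z‖ < r := mem_ball_zero_iff.mp hz
    have hzb : z ∈ ball (0:ℂ) 1 := mem_ball_zero_iff.mpr (hzr.trans hr1)
    have hdz := (hp z hzb).differentiableAt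
    exact ((hdz.sub_const 1).div hdz (hpz z hzr)).differentiableWithinAt
  -- Schwarz lemma
  have hS : ∀ z ∈ ball (0:ℂ) r, ‖ω z‖ ≤ ‖z‖ / r := by
    intro z hz
    have := Complex.dist_le_div_mul_dist_of_mapsTo_ball hdiff (hmaps.mono_right ball_subset_closedBall) hz
    rw [hω0] at this
    rw [div_eq_inv_mul]
    simpa [dist_zero_right] using this
  -- derivative of ω at z₀
  have hpd : HasDerivAt p d z₀ := (hp z₀ hz₀b).differentiableAt.hasDerivAt
  have hωd : HasDerivAt ω (d / u^2) z₀ := by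
    have h := (hpd.sub_const 1).div hpd hu0
    refine h.congr_deriv ?_
    rw [← hu]
    field_simp
    ring
  set c : ℂ := (starRingEnd ℂ) ((u - 1)/u) * (z₀ * (d / u^2)) with hc
  -- normSq (ω z₀) = 1
  have hnsq : Complex.normSq ((u - 1)/u) = 1 := by
    rw [Complex.normSq_div, div_eq_one_iff_eq (by simpa using Complex.normSq_pos.mpr hu0 |>.ne')]
    simp only [Complex.normSq_apply, Complex.sub_re, Complex.sub_im, Complex.one_re,
      Complex.one_im]
    rw [hure]
    ring
  -- radial derivative: 1 ≤ c.re
  have hlin : HasDerivAt (fun t : ℝ => ((t:ℂ) * z₀)) z₀ 1 := by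
    simpa using (Complex.ofRealCLM.hasDerivAt (x := (1:ℝ))).mul_const z₀
  have hg1 : HasDerivAt (fun t : ℝ => ω ((t:ℂ) * z₀)) (z₀ • (d / u^2)) 1 := by
    have := HasDerivAt.scomp_of_eq (1:ℝ) hωd hlin (by norm_num)
    exact this
  have hφd : HasDerivAt (fun t : ℝ => Complex.normSq (ω ((t:ℂ) * z₀)))
      (2 * ((starRingEnd ℂ) (ω z₀) * (z₀ • (d / u^2))).re) 1 := by
    have := normSq_hasDerivAt hg1
    norm_num at this
    convert this using 2
    simp only [smul_eq_mul, Complex.mul_re, Complex.mul_im, Complex.conj_re, Complex.conj_im]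
    ring
  have hφ1 : Complex.normSq (ω (((1:ℝ):ℂ) * z₀)) = 1 := by
    norm_num [hωz₀, hnsq]
  have hkre : 1 ≤ c.re := by
    have hslope := hasDerivAt_iff_tendsto_slope.mp hφd
    have hsub : nhdsWithin (1:ℝ) (Iio 1) ≤ nhdsWithin 1 {(1:ℝ)}ᶜ :=
      nhdsWithin_mono _ (fun x hx => ne_of_lt hx)
    have hslope' := hslope.mono_left hsub
    have htend : Tendsto (fun t : ℝ => t + 1) (nhdsWithin 1 (Iio 1)) (nhds 2) := by
      have h1 : Tendsto (fun t : ℝ => t + 1) (nhds (1:ℝ)) (nhds 2) := by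
        have := (continuous_id.add (continuous_const (y := (1:ℝ)))).tendsto (1:ℝ)
        norm_num at this
        exact this
      exact h1.mono_left nhdsWithin_le_nhds
    have h2le : (2:ℝ) ≤ 2 * ((starRingEnd ℂ) (ω z₀) * (z₀ • (d / u^2))).re := by
      refine le_of_tendsto_of_tendsto htend hslope' ?_
      filter_upwards [Ioo_mem_nhdsLT_of_mem (by norm_num : (1:ℝ) ∈ Ioc (0:ℝ) 1)] with t ht
      have hmem : ((t:ℂ) * z₀) ∈ ball (0:ℂ) r := by
        rw [mem_ball_zero_iff, norm_mul, Complex.norm_real, Real.norm_eq_abs,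
          abs_of_pos ht.1, ← hr]
        nlinarith [ht.2, hrpos]
      have hφt : Complex.normSq (ω ((t:ℂ) * z₀)) ≤ t^2 := by
        have h1 := hS _ hmem
        have h2 : ‖(t:ℂ) * z₀‖ / r = t := by
          rw [norm_mul, Complex.norm_real, Real.norm_eq_abs, abs_of_pos ht.1, ← hr]
          field_simp
        rw [h2] at h1
        have h3 := Complex.sq_norm (ω ((t:ℂ) * z₀))
        nlinarith [norm_nonneg (ω ((t:ℂ) * z₀))]
      show (t:ℝ) + 1 ≤ slope (fun t : ℝ => Complex.normSq (ω ((t:ℂ) * z₀))) 1 t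
      rw [slope_def_field]
      simp only [hφ1]
      rw [le_div_iff_of_neg (by linarith [ht.2] : t - (1:ℝ) < 0)]
      nlinarith [hφt]
    have hceq : (starRingEnd ℂ) (ω z₀) * (z₀ • (d / u^2)) = c := by
      rw [hωz₀, smul_eq_mul, hc]
    rw [hceq] at h2le
    linarith
  -- tangential derivative: c.im = 0
  have hexp : HasDerivAt (fun θ : ℝ => z₀ * Complex.exp ((θ:ℂ) * I)) (z₀ * I) 0 := by
    have h1 : HasDerivAt (fun θ : ℝ => ((θ:ℂ) * I)) I 0 := by
      simpa using (Complex.ofRealCLM.hasDerivAt (x := (0:ℝ))).mul_const I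
    have h2 := HasDerivAt.scomp_of_eq (0:ℝ) (Complex.hasDerivAt_exp 0) h1 (by norm_num)
    have h3 := h2.const_mul z₀
    simpa [Function.comp] using h3
  have hgθ : HasDerivAt (fun θ : ℝ => ω (z₀ * Complex.exp ((θ:ℂ) * I))) ((z₀ * I) • (d / u^2))
      0 := by
    have := HasDerivAt.scomp_of_eq (0:ℝ) hωd hexp (by norm_num)
    exact this
  have hχd : HasDerivAt (fun θ : ℝ => Complex.normSq (ω (z₀ * Complex.exp ((θ:ℂ) * I))))
      (2 * ((starRingEnd ℂ) (ω z₀) * ((z₀ * I) • (d / u^2))).re) 0 := by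
    have := normSq_hasDerivAt hgθ
    norm_num at this
    convert this using 2
    simp only [smul_eq_mul, Complex.mul_re, Complex.mul_im, Complex.conj_re, Complex.conj_im,
      Complex.I_re, Complex.I_im]
    ring
  have hχle : ∀ θ : ℝ, Complex.normSq (ω (z₀ * Complex.exp ((θ:ℂ) * I))) ≤ 1 := by
    intro θ
    have hnorm : ‖z₀ * Complex.exp ((θ:ℂ) * I)‖ = r := by
      rw [norm_mul, Complex.norm_exp_ofReal_mul_I,
        mul_one, hr]
    have hre := hsphere _ hnorm
    have hv0 : p (z₀ * Complex.exp ((θ:ℂ) * I)) ≠ 0 := by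
      intro h; rw [h] at hre; norm_num at hre
    simp only [hω]
    rw [Complex.normSq_div, div_le_one (Complex.normSq_pos.mpr hv0)]
    simp only [Complex.normSq_apply, Complex.sub_re, Complex.sub_im, Complex.one_re,
      Complex.one_im]
    nlinarith [hre]
  have hχ0 : Complex.normSq (ω (z₀ * Complex.exp (((0:ℝ):ℂ) * I))) = 1 := by
    norm_num [hωz₀, hnsq]
  have hmax : IsLocalMax (fun θ : ℝ => Complex.normSq (ω (z₀ * Complex.exp ((θ:ℂ) * I)))) 0 :=
    Filter.Eventually.of_forall (fun θ => by
      simp only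
      rw [hχ0]
      exact hχle θ)
  have hcim : c.im = 0 := by
    have h := hmax.hasDerivAt_eq_zero hχd
    have hIc : (starRingEnd ℂ) (ω z₀) * ((z₀ * I) • (d / u^2)) = I * c := by
      rw [hωz₀, smul_eq_mul, hc]; ring
    rw [hIc] at h
    simp only [Complex.mul_re, Complex.I_re, Complex.I_im] at h
    linarith
  -- Jack's lemma conclusion: z₀ d = c (u-1) u with c = c.re ≥ 1
  have hconj : (starRingEnd ℂ) ((u - 1)/u) * ((u - 1)/u) = 1 := by
    rw [mul_comm, Complex.mul_conj, hnsq, Complex.ofReal_one]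
  have h1 : c * ((u - 1)/u) = z₀ * (d / u^2) := by
    rw [hc]
    linear_combination (z₀ * (d / u^2)) * hconj
  have hzd : z₀ * d = c * (u - 1) * u := by
    have h2 : z₀ * (d / u^2) * u^2 = z₀ * d := by field_simp
    calc z₀ * d = z₀ * (d / u^2) * u^2 := h2.symm
      _ = c * ((u - 1)/u) * u^2 := by rw [h1]
      _ = c * (u - 1) * u := by field_simp
  have hcc : c = ((c.re : ℝ) : ℂ) := by
    apply Complex.ext
    · simp
    · simp [hcim]
  obtain ⟨k, hck⟩ : ∃ k : ℝ, c = (k:ℂ) := ⟨c.re, hcc⟩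
  have hk1 : 1 ≤ k := by simpa [hck] using hkre
  -- final contradiction
  have hE : z₀ * d + 3*u - 2*u^2 - 1 = (u - 1) * ((k:ℂ)*u - 2*u + 1) := by
    rw [hzd, hck]; ring
  have hn : 1/16 ≤ Complex.normSq (z₀ * d + 3*u - 2*u^2 - 1) := by
    rw [hE, Complex.normSq_mul]
    have hA : Complex.normSq (u - 1) = 1/4 + u.im^2 := by
      simp only [Complex.normSq_apply, Complex.sub_re, Complex.sub_im, Complex.one_re,
        Complex.one_im, hure]
      ring
    have hB : Complex.normSq ((k:ℂ)*u - 2*u + 1) = k^2/4 + (k - 2)^2 * u.im^2 := by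
      simp only [Complex.normSq_apply, Complex.sub_re, Complex.sub_im, Complex.add_re,
        Complex.add_im, Complex.mul_re, Complex.mul_im, Complex.ofReal_re, Complex.ofReal_im,
        Complex.one_re, Complex.one_im, Complex.re_ofNat, Complex.im_ofNat, hure]
      ring
    rw [hA, hB]
    exact key_ineq k u.im hk1
  have hlb : 1/4 ≤ ‖z₀ * d + 3*u - 2*u^2 - 1‖ := by
    have h3 := Complex.sq_norm (z₀ * d + 3*u - 2*u^2 - 1)
    nlinarith [norm_nonneg (z₀ * d + 3*u - 2*u^2 - 1)]
  have hub := hineq z₀ hz₀b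
  rw [← hu, ← hd] at hub
  linarith
end
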